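/- arXiv:1208.3672 — 12 statements merged into one kernel-verified Lean document; each statement's English description precedes it below -/
import Mathlib

section
/- Let F(X) = Q + ∑_{i=1}^m A_i* X⁻¹ A_i, where Q is positive definite and A_1,...,A_m are n×n complex matrices. Then F maps the order interval [Q, Q + ∑_{i=1}^m A_i* Q⁻¹ A_i] into itself; that is, if Q ≤ X ≤ Q + ∑_{i=1}^m A_i* Q⁻¹ A_i (in the Loewner order), then Q ≤ F(X) ≤ Q + ∑_{i=1}^m A_i* Q⁻¹ A_i. -/
open scoped ComplexOrder
open Matrix Finset

theorem posSemidef_sum' {n : ℕ} {ι : Type*} (s : Finset ι)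
    (f : ι → Matrix (Fin n) (Fin n) ℂ) (h : ∀ i ∈ s, (f i).PosSemidef) :
    (∑ i ∈ s, f i).PosSemidef := by
  classical
  induction s using Finset.induction_on with
  | empty => simpa using Matrix.PosSemidef.zero
  | insert _ _ hni ih =>
    rw [Finset.sum_insert hni]
    exact (h _ (Finset.mem_insert_self _ _)).add
      (ih fun i hi => h i (Finset.mem_insert_of_mem hi))

theorem stmt1 {n m : ℕ} (Q : Matrix (Fin n) (Fin n) ℂ) (hQ : Q.PosDef)
    (A : Fin m → Matrix (Fin n) (Fin n) ℂ)
    (X : Matrix (Fin n) (Fin n) ℂ) (hX : X.IsHermitian)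
    (hlow : (X - Q).PosSemidef)
    (hup : (Q + ∑ i, (A i)ᴴ * Q⁻¹ * A i - X).PosSemidef) :
    ((Q + ∑ i, (A i)ᴴ * X⁻¹ * A i) - Q).PosSemidef ∧
      ((Q + ∑ i, (A i)ᴴ * Q⁻¹ * A i) - (Q + ∑ i, (A i)ᴴ * X⁻¹ * A i)).PosSemidef := by
  have hXpd : X.PosDef := by
    have := hQ.add_posSemidef hlow
    simpa using this
  have hXinv : X⁻¹.PosSemidef := hXpd.inv.posSemidef
  have hXH : X⁻¹ᴴ = X⁻¹ := hXpd.isHermitian.inv.eq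
  have hM : ((X - Q) * Q⁻¹ * (X - Q) + (X - Q)).PosSemidef := by
    have h1 : ((X - Q)ᴴ * Q⁻¹ * (X - Q) + (X - Q)).PosSemidef :=
      (hQ.inv.posSemidef.conjTranspose_mul_mul_same (X - Q)).add hlow
    rwa [hlow.isHermitian.eq] at h1
  have hXi : X * X⁻¹ = 1 := Matrix.mul_nonsing_inv X ((isUnit_iff_isUnit_det X).mp hXpd.isUnit)
  have hiX : X⁻¹ * X = 1 := Matrix.nonsing_inv_mul X ((isUnit_iff_isUnit_det X).mp hXpd.isUnit)
  have hQi : Q * Q⁻¹ = 1 := Matrix.mul_nonsing_inv Q ((isUnit_iff_isUnit_det Q).mp hQ.isUnit)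
  have hiQ : Q⁻¹ * Q = 1 := Matrix.nonsing_inv_mul Q ((isUnit_iff_isUnit_det Q).mp hQ.isUnit)
  have hkey : Q⁻¹ - X⁻¹ = X⁻¹ᴴ * ((X - Q) * Q⁻¹ * (X - Q) + (X - Q)) * X⁻¹ := by
    rw [hXH]
    have expand : (X - Q) * Q⁻¹ * (X - Q) + (X - Q) = X * Q⁻¹ * X - X := by
      simp only [Matrix.sub_mul, Matrix.mul_sub, hQi, hiQ]
      noncomm_ring
      rw [hiQ, Matrix.mul_one]
    rw [expand, Matrix.mul_sub, Matrix.sub_mul]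
    have t1 : X⁻¹ * (X * Q⁻¹ * X) * X⁻¹ = Q⁻¹ := by
      rw [show X * Q⁻¹ * X = X * (Q⁻¹ * X) from Matrix.mul_assoc _ _ _,
        ← Matrix.mul_assoc, hiX, Matrix.one_mul, Matrix.mul_assoc, hXi, Matrix.mul_one]
    have t2 : X⁻¹ * X * X⁻¹ = X⁻¹ := by rw [hiX, Matrix.one_mul]
    rw [t1, t2]
  have hdiff : (Q⁻¹ - X⁻¹).PosSemidef := by
    rw [hkey]
    exact hM.conjTranspose_mul_mul_same X⁻¹
  constructor
  · have h1 : (∑ i, (A i)ᴴ * X⁻¹ * A i).PosSemidef :=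
      posSemidef_sum' _ _ fun i _ => hXinv.conjTranspose_mul_mul_same (A i)
    simpa using h1
  · have h2 : (∑ i, (A i)ᴴ * (Q⁻¹ - X⁻¹) * A i).PosSemidef :=
      posSemidef_sum' _ _ fun i _ => hdiff.conjTranspose_mul_mul_same (A i)
    have heq : (Q + ∑ i, (A i)ᴴ * Q⁻¹ * A i) - (Q + ∑ i, (A i)ᴴ * X⁻¹ * A i)
        = ∑ i, (A i)ᴴ * (Q⁻¹ - X⁻¹) * A i := by
      rw [add_sub_add_left_eq_sub, ← Finset.sum_sub_distrib]
      congr 1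
      ext i
      rw [Matrix.mul_sub, Matrix.sub_mul]
    rw [heq]
    exact h2
end

section
/- If X is a Hermitian positive definite solution of the matrix equation X - ∑_{i=1}^m A_i* X⁻¹ A_i = Q, where Q is positive definite, then Q ≤ X ≤ Q + ∑_{i=1}^m A_i* Q⁻¹ A_i in the Loewner order. -/
open scoped ComplexOrder
open Matrix Finset

lemma psd_sum_aux {n m : ℕ} (M : Matrix (Fin n) (Fin n) ℂ) (hM : M.PosSemidef)
    (A : Fin m → Matrix (Fin n) (Fin n) ℂ) :
    (∑ i, (A i)ᴴ * M * A i).PosSemidef := by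
  induction m with
  | zero => simpa using Matrix.PosSemidef.zero
  | succ k ih =>
    rw [Fin.sum_univ_succ]
    exact ((hM.conjTranspose_mul_mul_same _)).add (ih (fun i => A i.succ))

lemma inv_antitone_aux {n : ℕ} {A B : Matrix (Fin n) (Fin n) ℂ}
    (hA : A.PosDef) (hB : B.PosDef) (h : (B - A).PosSemidef) :
    (A⁻¹ - B⁻¹).PosSemidef := by
  haveI := hB.isUnit.invertible
  haveI := hA.inv.isUnit.invertible
  have h1 := Matrix.PosDef.fromBlocks₁₁ (A := B) (1 : Matrix (Fin n) (Fin n) ℂ) A⁻¹ hB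
  have h2 := Matrix.PosDef.fromBlocks₂₂ (D := A⁻¹) B (1 : Matrix (Fin n) (Fin n) ℂ) hA.inv
  rw [conjTranspose_one] at h1 h2
  haveI := hA.isUnit.invertible
  have hinv : (A⁻¹)⁻¹ = A := Matrix.inv_inv_of_invertible A
  simp only [hinv, one_mul, mul_one, conjTranspose_one] at h1 h2
  exact h1.mp (h2.mpr h)

theorem stmt2 {n m : ℕ} (Q : Matrix (Fin n) (Fin n) ℂ) (hQ : Q.PosDef)
    (A : Fin m → Matrix (Fin n) (Fin n) ℂ)
    (X : Matrix (Fin n) (Fin n) ℂ) (hX : X.PosDef)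
    (heq : X - ∑ i, (A i)ᴴ * X⁻¹ * A i = Q) :
    (X - Q).PosSemidef ∧ ((Q + ∑ i, (A i)ᴴ * Q⁻¹ * A i) - X).PosSemidef := by
  have hXQ : X - Q = ∑ i, (A i)ᴴ * X⁻¹ * A i := by
    rw [← heq]; abel
  have h1 : (X - Q).PosSemidef := by
    rw [hXQ]; exact psd_sum_aux _ hX.inv.posSemidef A
  refine ⟨h1, ?_⟩
  have hinv : (Q⁻¹ - X⁻¹).PosSemidef := inv_antitone_aux hQ hX h1
  have key : (Q + ∑ i, (A i)ᴴ * Q⁻¹ * A i) - X = ∑ i, (A i)ᴴ * (Q⁻¹ - X⁻¹) * A i := by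
    have hr : ∀ i : Fin m, (A i)ᴴ * (Q⁻¹ - X⁻¹) * A i
        = (A i)ᴴ * Q⁻¹ * A i - (A i)ᴴ * X⁻¹ * A i := by
      intro i; rw [mul_sub, sub_mul]
    simp only [hr]
    rw [Finset.sum_sub_distrib, ← hXQ]
    abel
  rw [key]
  exact psd_sum_aux _ hinv A
end

section
/- There exists at most one Hermitian positive definite solution X of the matrix equation X - ∑_{i=1}^m A_i* X⁻¹ A_i = Q, where Q is positive definite and A_1,...,A_m are arbitrary n×n complex matrices. -/
open scoped ComplexOrder
open Matrix Finset

namespace Stmt3Aux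

variable {n : ℕ}

lemma smul_psd {P : Matrix (Fin n) (Fin n) ℂ} (hP : P.PosSemidef) {c : ℝ} (hc : 0 ≤ c) :
    ((c : ℂ) • P).PosSemidef := by
  refine Matrix.PosSemidef.of_dotProduct_mulVec_nonneg ?_ ?_
  · have : ((c:ℂ) • P)ᴴ = star (c:ℂ) • Pᴴ := conjTranspose_smul _ _
    rw [Matrix.IsHermitian, this, hP.1.eq, Complex.star_def, Complex.conj_ofReal]
  · intro x
    rw [smul_mulVec, dotProduct_smul, smul_eq_mul]
    exact mul_nonneg (by exact_mod_cast hc) (hP.dotProduct_mulVec_nonneg x)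

lemma smul_pd {P : Matrix (Fin n) (Fin n) ℂ} (hP : P.PosDef) {c : ℝ} (hc : 0 < c) :
    ((c : ℂ) • P).PosDef := by
  refine Matrix.PosDef.of_dotProduct_mulVec_pos ?_ ?_
  · have : ((c:ℂ) • P)ᴴ = star (c:ℂ) • Pᴴ := conjTranspose_smul _ _
    rw [Matrix.IsHermitian, this, hP.1.eq, Complex.star_def, Complex.conj_ofReal]
  · intro x hx
    rw [smul_mulVec, dotProduct_smul, smul_eq_mul]
    exact mul_pos (by exact_mod_cast hc) (hP.dotProduct_mulVec_pos hx)

lemma sum_psd {ι : Type*} (s : Finset ι) (f : ι → Matrix (Fin n) (Fin n) ℂ)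
    (h : ∀ i ∈ s, (f i).PosSemidef) : (∑ i ∈ s, f i).PosSemidef := by
  classical
  induction s using Finset.induction with
  | empty => simpa using Matrix.PosSemidef.zero
  | @insert a s hni ih =>
      rw [Finset.sum_insert hni]
      exact (h _ (Finset.mem_insert_self _ _)).add
        (ih fun i hi => h i (Finset.mem_insert_of_mem hi))

lemma inv_anti {X Y : Matrix (Fin n) (Fin n) ℂ} (hX : X.PosDef) (hY : Y.PosDef)
    (h : (X - Y).PosSemidef) : (Y⁻¹ - X⁻¹).PosSemidef := by
  have hdX : IsUnit X.det := hX.det_pos.ne'.isUnit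
  have hdY : IsUnit Y.det := hY.det_pos.ne'.isUnit
  have hx1 : X⁻¹ * X = 1 := nonsing_inv_mul _ hdX
  have hx2 : X * X⁻¹ = 1 := mul_nonsing_inv _ hdX
  have hy1 : Y⁻¹ * Y = 1 := nonsing_inv_mul _ hdY
  have hy2 : Y * Y⁻¹ = 1 := mul_nonsing_inv _ hdY
  have key : Y⁻¹ - X⁻¹ =
      X⁻¹ * (X - Y) * (X⁻¹)ᴴ + (X⁻¹ * (X - Y)) * Y⁻¹ * (X⁻¹ * (X - Y))ᴴ := by
    rw [conjTranspose_mul, h.isHermitian.eq, hX.inv.isHermitian.eq]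
    have e1 : ∀ B : Matrix (Fin n) (Fin n) ℂ, X⁻¹ * (X * B) = B := fun B => by
      rw [← Matrix.mul_assoc, hx1, Matrix.one_mul]
    have e2 : ∀ B : Matrix (Fin n) (Fin n) ℂ, X * (X⁻¹ * B) = B := fun B => by
      rw [← Matrix.mul_assoc, hx2, Matrix.one_mul]
    have e3 : ∀ B : Matrix (Fin n) (Fin n) ℂ, Y⁻¹ * (Y * B) = B := fun B => by
      rw [← Matrix.mul_assoc, hy1, Matrix.one_mul]
    have e4 : ∀ B : Matrix (Fin n) (Fin n) ℂ, Y * (Y⁻¹ * B) = B := fun B => by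
      rw [← Matrix.mul_assoc, hy2, Matrix.one_mul]
    simp only [e1, e2, e3, e4, Matrix.mul_sub, Matrix.sub_mul, Matrix.mul_assoc, hx1, hx2, hy1, hy2,
      Matrix.mul_one, Matrix.one_mul, e1, e2, e3, e4]
    abel
  rw [key]
  exact (h.mul_mul_conjTranspose_same X⁻¹).add (hY.inv.posSemidef.mul_mul_conjTranspose_same _)


lemma conj_diag_psd {A : Matrix (Fin n) (Fin n) ℂ} (hA : A.IsHermitian) (g : Fin n → ℝ)
    (hg : ∀ i, 0 ≤ g i) :
    ((hA.eigenvectorUnitary : Matrix (Fin n) (Fin n) ℂ) *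
      diagonal (fun i => (g i : ℂ)) *
      (star (hA.eigenvectorUnitary : Matrix (Fin n) (Fin n) ℂ))).PosSemidef := by
  rw [Matrix.star_eq_conjTranspose]
  refine (Matrix.PosSemidef.diagonal ?_).mul_mul_conjTranspose_same _
  intro i
  simp only [Pi.zero_apply]
  exact_mod_cast hg i

lemma sub_smul_one_psd {A : Matrix (Fin n) (Fin n) ℂ} (hA : A.IsHermitian) {c : ℝ}
    (h : ∀ i, c ≤ hA.eigenvalues i) : (A - (c : ℂ) • 1).PosSemidef := by
  have hU : (hA.eigenvectorUnitary : Matrix (Fin n) (Fin n) ℂ) *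
      star (hA.eigenvectorUnitary : Matrix (Fin n) (Fin n) ℂ) = 1 :=
    Matrix.mem_unitaryGroup_iff.mp hA.eigenvectorUnitary.2
  have hd : diagonal (fun i => ((hA.eigenvalues i - c : ℝ) : ℂ)) =
      diagonal (RCLike.ofReal ∘ hA.eigenvalues) - (c : ℂ) • 1 := by
    rw [Matrix.smul_one_eq_diagonal, diagonal_sub]
    funext i
    simp [Function.comp, Complex.ofReal_sub]
  have key : A - (c : ℂ) • 1 = (hA.eigenvectorUnitary : Matrix (Fin n) (Fin n) ℂ) *
      diagonal (fun i => ((hA.eigenvalues i - c : ℝ) : ℂ)) *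
      (star (hA.eigenvectorUnitary : Matrix (Fin n) (Fin n) ℂ)) := by
    rw [hd, Matrix.mul_sub, Matrix.sub_mul, Matrix.mul_smul, Matrix.mul_one, Matrix.smul_mul, hU,
      ← Unitary.conjStarAlgAut_apply (S := ℂ), ← hA.spectral_theorem]
  rw [key]
  exact conj_diag_psd hA _ (fun i => sub_nonneg.mpr (h i))


lemma smul_one_sub_psd {A : Matrix (Fin n) (Fin n) ℂ} (hA : A.IsHermitian) {c : ℝ}
    (h : ∀ i, hA.eigenvalues i ≤ c) : ((c : ℂ) • 1 - A).PosSemidef := by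
  have hU : (hA.eigenvectorUnitary : Matrix (Fin n) (Fin n) ℂ) *
      star (hA.eigenvectorUnitary : Matrix (Fin n) (Fin n) ℂ) = 1 :=
    Matrix.mem_unitaryGroup_iff.mp hA.eigenvectorUnitary.2
  have hd : diagonal (fun i => ((c - hA.eigenvalues i : ℝ) : ℂ)) =
      (c : ℂ) • 1 - diagonal (RCLike.ofReal ∘ hA.eigenvalues) := by
    rw [Matrix.smul_one_eq_diagonal, diagonal_sub]
    funext i
    simp [Function.comp, Complex.ofReal_sub]
  have key : (c : ℂ) • 1 - A = (hA.eigenvectorUnitary : Matrix (Fin n) (Fin n) ℂ) *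
      diagonal (fun i => ((c - hA.eigenvalues i : ℝ) : ℂ)) *
      (star (hA.eigenvectorUnitary : Matrix (Fin n) (Fin n) ℂ)) := by
    rw [hd, Matrix.mul_sub, Matrix.sub_mul, Matrix.mul_smul, Matrix.mul_one, Matrix.smul_mul, hU,
      ← Unitary.conjStarAlgAut_apply (S := ℂ), ← hA.spectral_theorem]
  rw [key]
  exact conj_diag_psd hA _ (fun i => sub_nonneg.mpr (h i))

lemma exists_smul_psd (hn : 0 < n) {P R : Matrix (Fin n) (Fin n) ℂ}
    (hP : P.PosDef) (hR : R.PosDef) :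
    ∃ c : ℝ, 0 < c ∧ (P - (c : ℂ) • R).PosSemidef := by
  haveI : Nonempty (Fin n) := ⟨⟨0, hn⟩⟩
  set ε : ℝ := Finset.univ.inf' Finset.univ_nonempty hP.isHermitian.eigenvalues with hε
  obtain ⟨i₀, -, hi₀⟩ := Finset.exists_mem_eq_inf' Finset.univ_nonempty hP.isHermitian.eigenvalues
  have hεpos : 0 < ε := by rw [hε, hi₀]; exact hP.eigenvalues_pos i₀
  have h1 : (P - (ε : ℂ) • 1).PosSemidef :=
    sub_smul_one_psd hP.isHermitian (fun i => Finset.inf'_le _ (Finset.mem_univ i))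
  set r : ℝ := Finset.univ.sup' Finset.univ_nonempty hR.isHermitian.eigenvalues with hr
  obtain ⟨j₀, -, hj₀⟩ := Finset.exists_mem_eq_sup' Finset.univ_nonempty hR.isHermitian.eigenvalues
  have hrpos : 0 < r := by rw [hr, hj₀]; exact hR.eigenvalues_pos j₀
  have h2 : ((r : ℂ) • 1 - R).PosSemidef :=
    smul_one_sub_psd hR.isHermitian (fun i => Finset.le_sup' _ (Finset.mem_univ i))
  refine ⟨ε / r, by positivity, ?_⟩
  have key : P - ((ε / r : ℝ) : ℂ) • R =
      (P - (ε : ℂ) • 1) + ((ε / r : ℝ) : ℂ) • ((r : ℂ) • 1 - R) := by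
    have hc : ((ε / r : ℝ) : ℂ) • ((r : ℂ) • (1 : Matrix (Fin n) (Fin n) ℂ)) = (ε : ℂ) • 1 := by
      rw [smul_smul]
      norm_cast
      rw [div_mul_cancel₀ _ hrpos.ne']
    rw [smul_sub, hc]
    abel
  rw [key]
  exact h1.add (smul_psd h2 (by positivity))

lemma psd_antisymm {P : Matrix (Fin n) (Fin n) ℂ} (h1 : P.PosSemidef)
    (h2 : (-P).PosSemidef) : P = 0 := by
  have hz : ∀ x, P *ᵥ x = 0 := by
    intro x
    rw [← h1.dotProduct_mulVec_zero_iff]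
    have ha := h1.dotProduct_mulVec_nonneg x
    have hb := h2.dotProduct_mulVec_nonneg x
    rw [neg_mulVec, dotProduct_neg] at hb
    have hb' : star x ⬝ᵥ P *ᵥ x ≤ 0 := neg_nonneg.mp hb
    exact le_antisymm hb' ha
  ext i j
  have := congrFun (hz (Pi.single j 1)) i
  simpa [Matrix.mulVec_single] using this


lemma smul_inv_eq {Y : Matrix (Fin n) (Fin n) ℂ} (hY : Y.PosDef) {α : ℝ} (hα : 0 < α) :
    ((α : ℂ) • Y)⁻¹ = ((α⁻¹ : ℝ) : ℂ) • Y⁻¹ := by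
  apply Matrix.inv_eq_left_inv
  rw [Matrix.smul_mul, Matrix.mul_smul, smul_smul, nonsing_inv_mul _ hY.det_pos.ne'.isUnit,
    ← Complex.ofReal_mul, inv_mul_cancel₀ hα.ne', Complex.ofReal_one, one_smul]

lemma key_step {m : ℕ} {Q X Y : Matrix (Fin n) (Fin n) ℂ}
    (A : Fin m → Matrix (Fin n) (Fin n) ℂ) (hX : X.PosDef) (hY : Y.PosDef)
    (heqX : X - ∑ i, (A i)ᴴ * X⁻¹ * A i = Q) (heqY : Y - ∑ i, (A i)ᴴ * Y⁻¹ * A i = Q)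
    {α : ℝ} (hα : 0 < α) (h : (X - (α : ℂ) • Y).PosSemidef) :
    ((Y - (α : ℂ) • X) - ((1 - α : ℝ) : ℂ) • Q).PosSemidef := by
  have hαY : ((α : ℂ) • Y).PosDef := smul_pd hY hα
  have hinv : (((α⁻¹ : ℝ) : ℂ) • Y⁻¹ - X⁻¹).PosSemidef := by
    have := inv_anti hX hαY h
    rwa [smul_inv_eq hY hα] at this
  have hsum : (∑ i, (A i)ᴴ * (((α⁻¹ : ℝ) : ℂ) • Y⁻¹ - X⁻¹) * A i).PosSemidef :=
    sum_psd _ _ (fun i _ => hinv.conjTranspose_mul_mul_same _)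
  have hYQ : ∑ i, (A i)ᴴ * Y⁻¹ * A i = Y - Q := by rw [← heqY, sub_sub_cancel]
  have hXQ : ∑ i, (A i)ᴴ * X⁻¹ * A i = X - Q := by rw [← heqX, sub_sub_cancel]
  have hsum_eq : ∑ i, (A i)ᴴ * (((α⁻¹ : ℝ) : ℂ) • Y⁻¹ - X⁻¹) * A i =
      ((α⁻¹ : ℝ) : ℂ) • (Y - Q) - (X - Q) := by
    rw [← hYQ, ← hXQ, Finset.smul_sum, ← Finset.sum_sub_distrib]
    refine Finset.sum_congr rfl (fun i _ => ?_)
    rw [Matrix.mul_sub, Matrix.sub_mul, Matrix.mul_smul, Matrix.smul_mul]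
  rw [hsum_eq] at hsum
  have goal_eq : (Y - (α : ℂ) • X) - ((1 - α : ℝ) : ℂ) • Q =
      (α : ℂ) • (((α⁻¹ : ℝ) : ℂ) • (Y - Q) - (X - Q)) := by
    rw [smul_sub, smul_smul, ← Complex.ofReal_mul, mul_inv_cancel₀ hα.ne', Complex.ofReal_one,
      one_smul, Complex.ofReal_sub, Complex.ofReal_one, sub_smul, one_smul, smul_sub]
    abel
  rw [goal_eq]
  exact smul_psd hsum hα.le


lemma flip {m : ℕ} {Q X Y : Matrix (Fin n) (Fin n) ℂ}
    (A : Fin m → Matrix (Fin n) (Fin n) ℂ) (hX : X.PosDef) (hY : Y.PosDef)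
    (heqX : X - ∑ i, (A i)ᴴ * X⁻¹ * A i = Q) (heqY : Y - ∑ i, (A i)ᴴ * Y⁻¹ * A i = Q)
    (h : (X - Y).PosSemidef) : (Y - X).PosSemidef := by
  have hinv := inv_anti hX hY h
  have hsum : (∑ i, (A i)ᴴ * (Y⁻¹ - X⁻¹) * A i).PosSemidef :=
    sum_psd _ _ (fun i _ => hinv.conjTranspose_mul_mul_same _)
  have hYQ : ∑ i, (A i)ᴴ * Y⁻¹ * A i = Y - Q := by rw [← heqY, sub_sub_cancel]
  have hXQ : ∑ i, (A i)ᴴ * X⁻¹ * A i = X - Q := by rw [← heqX, sub_sub_cancel]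
  have hkey : ∑ i, (A i)ᴴ * (Y⁻¹ - X⁻¹) * A i = Y - X := by
    have : ∀ i : Fin m, (A i)ᴴ * (Y⁻¹ - X⁻¹) * A i =
        (A i)ᴴ * Y⁻¹ * A i - (A i)ᴴ * X⁻¹ * A i := fun i => by
      rw [Matrix.mul_sub, Matrix.sub_mul]
    rw [Finset.sum_congr rfl (fun i _ => this i), Finset.sum_sub_distrib, hYQ, hXQ]
    abel
  rwa [hkey] at hsum

lemma herm_real_smul {Y : Matrix (Fin n) (Fin n) ℂ} (hY : Y.IsHermitian) (c : ℝ) :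
    ((c : ℂ) • Y).IsHermitian := by
  have : ((c:ℂ) • Y)ᴴ = star (c:ℂ) • Yᴴ := conjTranspose_smul _ _
  rw [Matrix.IsHermitian, this, hY.eq, Complex.star_def, Complex.conj_ofReal]

lemma re_ineq {X Y : Matrix (Fin n) (Fin n) ℂ} {s : ℝ}
    (h : (X - (s : ℂ) • Y).PosSemidef) (x : Fin n → ℂ) :
    s * (star x ⬝ᵥ Y *ᵥ x).re ≤ (star x ⬝ᵥ X *ᵥ x).re := by
  have h2 := h.dotProduct_mulVec_nonneg x
  rw [sub_mulVec, dotProduct_sub, smul_mulVec, dotProduct_smul, smul_eq_mul] at h2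
  have hre := (Complex.le_def.mp h2).1
  simp only [Complex.zero_re, Complex.sub_re, Complex.mul_re, Complex.ofReal_re,
    Complex.ofReal_im, zero_mul, sub_zero] at hre
  linarith

lemma sup_mem (hn : 0 < n) {X Y : Matrix (Fin n) (Fin n) ℂ} (hX : X.PosDef) (hY : Y.PosDef) :
    ∃ α : ℝ, 0 < α ∧ (X - (α : ℂ) • Y).PosSemidef ∧
      ∀ s : ℝ, (X - (s : ℂ) • Y).PosSemidef → s ≤ α := by
  set S : Set ℝ := {s | (X - (s : ℂ) • Y).PosSemidef} with hS
  obtain ⟨c, hc, hcm⟩ := exists_smul_psd hn hX hY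
  set x0 : Fin n → ℂ := Pi.single ⟨0, hn⟩ 1 with hx0def
  have hx0 : x0 ≠ 0 := by
    intro h0
    have := congrFun h0 ⟨0, hn⟩
    simp [hx0def] at this
  have hb0 : 0 < (star x0 ⬝ᵥ Y *ᵥ x0).re := hY.re_dotProduct_pos hx0
  have hbdd : BddAbove S := by
    refine ⟨(star x0 ⬝ᵥ X *ᵥ x0).re / (star x0 ⬝ᵥ Y *ᵥ x0).re, fun s hs => ?_⟩
    rw [le_div_iff₀ hb0]
    exact re_ineq hs x0
  set α := sSup S with hα
  have hαpos : 0 < α := lt_of_lt_of_le hc (le_csSup hbdd hcm)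
  refine ⟨α, hαpos, ?_, fun s hs => le_csSup hbdd hs⟩
  refine Matrix.PosSemidef.of_dotProduct_mulVec_nonneg ?_ ?_
  · exact hX.1.sub (herm_real_smul hY.1 α)
  · intro x
    have ha := hX.posSemidef.dotProduct_mulVec_nonneg x
    have hb := hY.posSemidef.dotProduct_mulVec_nonneg x
    have haim : (star x ⬝ᵥ X *ᵥ x).im = 0 := ((Complex.le_def.mp ha).2).symm
    have hbim : (star x ⬝ᵥ Y *ᵥ x).im = 0 := ((Complex.le_def.mp hb).2).symm
    have hbre : 0 ≤ (star x ⬝ᵥ Y *ᵥ x).re := (Complex.le_def.mp hb).1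
    have hare : 0 ≤ (star x ⬝ᵥ X *ᵥ x).re := (Complex.le_def.mp ha).1
    have hkey : α * (star x ⬝ᵥ Y *ᵥ x).re ≤ (star x ⬝ᵥ X *ᵥ x).re := by
      rcases eq_or_lt_of_le hbre with heq | hlt
      · rw [← heq, mul_zero]; exact hare
      · rw [← le_div_iff₀ hlt]
        exact csSup_le ⟨c, hcm⟩ (fun s hs => (le_div_iff₀ hlt).mpr (re_ineq hs x))
    rw [sub_mulVec, dotProduct_sub, smul_mulVec, dotProduct_smul, smul_eq_mul]
    rw [Complex.le_def]
    constructor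
    · simp only [Complex.zero_re, Complex.sub_re, Complex.mul_re, Complex.ofReal_re,
        Complex.ofReal_im, zero_mul, sub_zero]
      linarith
    · simp only [Complex.zero_im, Complex.sub_im, Complex.mul_im, Complex.ofReal_re,
        Complex.ofReal_im, zero_mul, add_zero, hbim, mul_zero]
      rw [haim]; ring

end Stmt3Aux

theorem stmt3 {n m : ℕ} (Q : Matrix (Fin n) (Fin n) ℂ) (hQ : Q.PosDef)
    (A : Fin m → Matrix (Fin n) (Fin n) ℂ)
    (X Y : Matrix (Fin n) (Fin n) ℂ) (hX : X.PosDef) (hY : Y.PosDef)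
    (heqX : X - ∑ i, (A i)ᴴ * X⁻¹ * A i = Q)
    (heqY : Y - ∑ i, (A i)ᴴ * Y⁻¹ * A i = Q) :
    X = Y := by
  rcases Nat.eq_zero_or_pos n with hn | hn
  · subst hn; exact Subsingleton.elim X Y
  obtain ⟨α, hαpos, hαm, hαub⟩ := Stmt3Aux.sup_mem hn hX hY
  obtain ⟨β, hβpos, hβm, hβub⟩ := Stmt3Aux.sup_mem hn hY hX
  obtain ⟨c₁, hc₁, hc₁m⟩ := Stmt3Aux.exists_smul_psd hn hQ hX
  obtain ⟨c₂, hc₂, hc₂m⟩ := Stmt3Aux.exists_smul_psd hn hQ hY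
  have main : (X - Y).PosSemidef ∨ (Y - X).PosSemidef := by
    by_cases h1 : 1 ≤ α
    · left
      have hid : X - Y = (X - (α : ℂ) • Y) + ((α - 1 : ℝ) : ℂ) • Y := by
        push_cast
        rw [sub_smul, one_smul]
        abel
      rw [hid]
      exact hαm.add (Stmt3Aux.smul_psd hY.posSemidef (by linarith))
    by_cases h2 : 1 ≤ β
    · right
      have hid : Y - X = (Y - (β : ℂ) • X) + ((β - 1 : ℝ) : ℂ) • X := by
        push_cast
        rw [sub_smul, one_smul]
        abel
      rw [hid]
      exact hβm.add (Stmt3Aux.smul_psd hX.posSemidef (by linarith))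
    exfalso
    push_neg at h1 h2
    have k1 := Stmt3Aux.key_step A hX hY heqX heqY hαpos hαm
    have k2 := Stmt3Aux.key_step A hY hX heqY heqX hβpos hβm
    have hb1 : α + (1 - α) * c₁ ≤ β := by
      apply hβub
      have hid : Y - ((α + (1 - α) * c₁ : ℝ) : ℂ) • X =
          ((Y - (α : ℂ) • X) - ((1 - α : ℝ) : ℂ) • Q) +
            ((1 - α : ℝ) : ℂ) • (Q - ((c₁ : ℝ) : ℂ) • X) := by
        push_cast
        rw [smul_sub, smul_smul, add_smul, mul_smul]
        abel
      rw [hid]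
      exact k1.add (Stmt3Aux.smul_psd hc₁m (by linarith))
    have hb2 : β + (1 - β) * c₂ ≤ α := by
      apply hαub
      have hid : X - ((β + (1 - β) * c₂ : ℝ) : ℂ) • Y =
          ((X - (β : ℂ) • Y) - ((1 - β : ℝ) : ℂ) • Q) +
            ((1 - β : ℝ) : ℂ) • (Q - ((c₂ : ℝ) : ℂ) • Y) := by
        push_cast
        rw [smul_sub, smul_smul, add_smul, mul_smul]
        abel
      rw [hid]
      exact k2.add (Stmt3Aux.smul_psd hc₂m (by linarith))
    nlinarith [mul_pos (by linarith : (0:ℝ) < 1 - α) hc₁,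
      mul_pos (by linarith : (0:ℝ) < 1 - β) hc₂]
  have hboth : (X - Y).PosSemidef ∧ (Y - X).PosSemidef := by
    rcases main with h | h
    · exact ⟨h, Stmt3Aux.flip A hX hY heqX heqY h⟩
    · exact ⟨Stmt3Aux.flip A hY hX heqY heqX h, h⟩
  have hzero : X - Y = 0 := by
    apply Stmt3Aux.psd_antisymm hboth.1
    rw [neg_sub]
    exact hboth.2
  exact sub_eq_zero.mp hzero
end

section
/- There exists a Hermitian positive definite solution X of the matrix equation X - ∑_{i=1}^m A_i* X⁻¹ A_i = Q, for any positive definite Q and arbitrary n×n complex matrices A_1,...,A_m. -/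
open scoped ComplexOrder
open Matrix Finset

open Filter Topology

set_option linter.unusedSectionVars false

namespace Stmt4Aux

variable {N : Type*} [Fintype N] [DecidableEq N]

/-- The quadratic form of a Hermitian matrix is self-conjugate. -/
lemma herm_form_conj {M : Matrix N N ℂ} (hM : M.IsHermitian) (x : N → ℂ) :
    (starRingEnd ℂ) (star x ⬝ᵥ M *ᵥ x) = star x ⬝ᵥ M *ᵥ x := by
  have h1 : star (star x ⬝ᵥ M *ᵥ x) = star (M *ᵥ x) ⬝ᵥ x := by
    rw [star_dotProduct, star_star]
  rw [show (starRingEnd ℂ) (star x ⬝ᵥ M *ᵥ x) = star (star x ⬝ᵥ M *ᵥ x) from rfl, h1,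
    star_mulVec, ← dotProduct_mulVec, hM.eq]

lemma herm_form_real {M : Matrix N N ℂ} (hM : M.IsHermitian) (x : N → ℂ) :
    ((star x ⬝ᵥ M *ᵥ x).re : ℂ) = star x ⬝ᵥ M *ᵥ x :=
  Complex.conj_eq_iff_re.mp (herm_form_conj hM x)

/-- A Hermitian matrix with nonnegative real quadratic form is PSD. -/
lemma posSemidef_of_re {M : Matrix N N ℂ} (hM : M.IsHermitian)
    (h : ∀ x : N → ℂ, 0 ≤ (star x ⬝ᵥ M *ᵥ x).re) : M.PosSemidef := by
  refine Matrix.PosSemidef.of_dotProduct_mulVec_nonneg hM fun x => ?_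
  rw [← herm_form_real hM x]
  exact_mod_cast Complex.zero_le_real.mpr (h x)

lemma re_nonneg_of_psd {M : Matrix N N ℂ} (hM : M.PosSemidef) (x : N → ℂ) :
    0 ≤ (star x ⬝ᵥ M *ᵥ x).re := by
  have := hM.dotProduct_mulVec_nonneg x
  rw [Complex.le_def] at this
  simpa using this.1

/-- Sums of PSD matrices are PSD. -/
lemma psd_sum {ι : Type*} (s : Finset ι) (f : ι → Matrix N N ℂ)
    (h : ∀ i ∈ s, (f i).PosSemidef) : (∑ i ∈ s, f i).PosSemidef := by
  classical
  induction s using Finset.induction with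
  | empty => simpa using Matrix.PosSemidef.zero
  | insert _ _ hx ih =>
    rw [Finset.sum_insert hx]
    exact (h _ (Finset.mem_insert_self _ _)).add
      (ih fun i hi => h i (Finset.mem_insert_of_mem hi))

lemma psd_smul {M : Matrix N N ℂ} (hM : M.PosSemidef) {r : ℝ} (hr : 0 ≤ r) :
    ((r : ℂ) • M).PosSemidef := by
  refine posSemidef_of_re ?_ fun x => ?_
  · unfold Matrix.IsHermitian
    rw [conjTranspose_smul, hM.1]
    congr 1
    simp
  · rw [smul_mulVec, dotProduct_smul]
    simpa using mul_nonneg hr (re_nonneg_of_psd hM x)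

/-- PSD antisymmetry. -/
lemma psd_antisymm {M : Matrix N N ℂ} (h1 : M.PosSemidef) (h2 : (-M).PosSemidef) :
    M = 0 := by
  have hz : ∀ x : N → ℂ, M *ᵥ x = 0 := by
    intro x
    refine (h1.dotProduct_mulVec_zero_iff x).mp (le_antisymm ?_ (h1.dotProduct_mulVec_nonneg x))
    have := h2.dotProduct_mulVec_nonneg x
    rw [neg_mulVec, dotProduct_neg] at this
    exact neg_nonneg.mp this
  ext i j
  have := congrFun (hz (Pi.single j 1)) i
  simpa using this

end Stmt4Aux

namespace Stmt4Aux

variable {N : Type*} [Fintype N] [DecidableEq N]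

lemma herm_form_bound (H : Matrix N N ℂ) (x : N → ℂ) :
    (star x ⬝ᵥ H *ᵥ x).re ≤ (∑ i, ∑ j, ‖H i j‖) * ∑ i, Complex.normSq (x i) := by
  set S := ∑ i, Complex.normSq (x i) with hSdef
  have hSnn : 0 ≤ S := Finset.sum_nonneg fun i _ => Complex.normSq_nonneg _
  have hbound : ∀ i, Complex.normSq (x i) ≤ S :=
    fun i => Finset.single_le_sum (fun j _ => Complex.normSq_nonneg _) (Finset.mem_univ i)
  calc (star x ⬝ᵥ H *ᵥ x).re
      ≤ ‖star x ⬝ᵥ H *ᵥ x‖ := Complex.re_le_norm _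
    _ = ‖∑ i, ∑ j, star x i * H i j * x j‖ := by
        congr 1
        simp [dotProduct, mulVec, Finset.mul_sum, mul_assoc]
    _ ≤ ∑ i, ‖∑ j, star x i * H i j * x j‖ := norm_sum_le _ _
    _ ≤ ∑ i, ∑ j, ‖star x i * H i j * x j‖ :=
        Finset.sum_le_sum fun i _ => norm_sum_le _ _
    _ ≤ ∑ i, ∑ j, ‖H i j‖ * S := by
        refine Finset.sum_le_sum fun i _ => Finset.sum_le_sum fun j _ => ?_
        rw [norm_mul, norm_mul]
        have h1 : ‖star x i‖ = ‖x i‖ := by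
          simp [Pi.star_apply]
        rw [h1]
        have h2 : ‖x i‖ * ‖x j‖ ≤ S := by
          have e1 : ‖x i‖ ^ 2 = Complex.normSq (x i) := Complex.sq_norm _
          have e2 : ‖x j‖ ^ 2 = Complex.normSq (x j) := Complex.sq_norm _
          nlinarith [hbound i, hbound j, norm_nonneg (x i), norm_nonneg (x j)]
        calc ‖x i‖ * ‖H i j‖ * ‖x j‖
            = ‖H i j‖ * (‖x i‖ * ‖x j‖) := by ring
          _ ≤ ‖H i j‖ * S := by
              exact mul_le_mul_of_nonneg_left h2 (norm_nonneg _)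
    _ = (∑ i, ∑ j, ‖H i j‖) * S := by
        rw [Finset.sum_mul]
        exact Finset.sum_congr rfl fun i _ => (Finset.sum_mul _ _ _).symm

lemma star_self_dot (x : N → ℂ) :
    star x ⬝ᵥ x = ((∑ i, Complex.normSq (x i) : ℝ) : ℂ) := by
  push_cast
  simp only [dotProduct, Pi.star_apply]
  exact Finset.sum_congr rfl fun i _ => by
    rw [Complex.star_def, ← Complex.normSq_eq_conj_mul_self]

lemma herm_le_smul_one {H : Matrix N N ℂ} (hH : H.IsHermitian) :
    ∃ r : ℝ, 0 < r ∧ ((r : ℂ) • (1 : Matrix N N ℂ) - H).PosSemidef := by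
  set r : ℝ := (∑ i, ∑ j, ‖H i j‖) + 1 with hrdef
  have habs : 0 ≤ ∑ i, ∑ j, ‖H i j‖ :=
    Finset.sum_nonneg fun i _ => Finset.sum_nonneg fun j _ => norm_nonneg _
  refine ⟨r, by positivity, ?_⟩
  have hherm : ((r : ℂ) • (1 : Matrix N N ℂ) - H).IsHermitian := by
    refine IsHermitian.sub ?_ hH
    unfold Matrix.IsHermitian
    rw [conjTranspose_smul, conjTranspose_one]
    congr 1
    simp [Complex.conj_ofReal]
  refine posSemidef_of_re hherm fun x => ?_
  set S := ∑ i, Complex.normSq (x i) with hSdef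
  have hSnn : 0 ≤ S := Finset.sum_nonneg fun i _ => Complex.normSq_nonneg _
  have hexp : (star x ⬝ᵥ ((r : ℂ) • (1 : Matrix N N ℂ) - H) *ᵥ x).re
      = r * S - (star x ⬝ᵥ H *ᵥ x).re := by
    rw [sub_mulVec, dotProduct_sub, smul_mulVec, one_mulVec, dotProduct_smul,
      star_self_dot]
    push_cast
    simp [Complex.sub_re, Complex.mul_re]
    exact Or.inl rfl
  rw [hexp]
  have := herm_form_bound H x
  rw [← hSdef] at this
  nlinarith [hSnn]

lemma herm_le_smul_posdef {P H : Matrix N N ℂ} (hP : P.PosDef) (hH : H.IsHermitian) :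
    ∃ r : ℝ, 0 < r ∧ ((r : ℂ) • P - H).PosSemidef := by
  have hPsd := hP.posSemidef
  obtain ⟨S, hS1, hSS⟩ : ∃ S : Matrix N N ℂ, S.PosSemidef ∧ S * S = P := by
    open scoped MatrixOrder in
    exact ⟨CFC.sqrt P, Matrix.nonneg_iff_posSemidef.mp (CFC.sqrt_nonneg P),
      CFC.sqrt_mul_sqrt_self P hPsd.nonneg⟩
  have hSherm : Sᴴ = S := hS1.isHermitian
  have hdet : IsUnit S.det := by
    have : S.det * S.det = P.det := by rw [← det_mul, hSS]
    refine isUnit_iff_ne_zero.mpr fun h => ?_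
    rw [h, mul_zero] at this
    exact hP.det_pos.ne' this.symm
  have hmulinv : S * S⁻¹ = 1 := mul_nonsing_inv _ hdet
  have hinvmul : S⁻¹ * S = 1 := nonsing_inv_mul _ hdet
  set K : Matrix N N ℂ := S⁻¹ * H * S⁻¹ with hKdef
  have hSinvherm : (S⁻¹)ᴴ = S⁻¹ := by rw [conjTranspose_nonsing_inv, hSherm]
  have hK : K.IsHermitian := by
    unfold Matrix.IsHermitian
    rw [hKdef, conjTranspose_mul, conjTranspose_mul, hSinvherm, hH.eq, Matrix.mul_assoc]
  obtain ⟨r, hr, hr2⟩ := herm_le_smul_one hK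
  refine ⟨r, hr, ?_⟩
  have claim : (r : ℂ) • P - H = Sᴴ * ((r : ℂ) • (1 : Matrix N N ℂ) - K) * S := by
    rw [hSherm, Matrix.mul_sub, Matrix.sub_mul, mul_smul_comm, smul_mul_assoc, mul_one, hSS]
    congr 1
    rw [hKdef]
    symm
    calc S * (S⁻¹ * H * S⁻¹) * S = (S * S⁻¹) * H * (S⁻¹ * S) := by
          simp only [Matrix.mul_assoc]
      _ = H := by rw [hmulinv, hinvmul, Matrix.one_mul, Matrix.mul_one]
  rw [claim]
  exact hr2.conjTranspose_mul_mul_same S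

lemma herm_vec_reduce {X : Matrix N N ℂ} (hX : X.IsHermitian) (a v : N → ℂ) :
    star a ⬝ᵥ X *ᵥ v = star (X *ᵥ a) ⬝ᵥ v := by
  rw [dotProduct_mulVec, star_mulVec, hX.eq]

lemma inv_antitone {X Y : Matrix N N ℂ} (hX : X.PosDef) (hY : Y.PosDef)
    (hXY : (Y - X).PosSemidef) : (X⁻¹ - Y⁻¹).PosSemidef := by
  have hXi := hX.inv
  have hYi := hY.inv
  refine Matrix.PosSemidef.of_dotProduct_mulVec_nonneg (hXi.isHermitian.sub hYi.isHermitian) fun u => ?_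
  have hXdet : IsUnit X.det := isUnit_iff_ne_zero.mpr hX.det_pos.ne'
  have hYdet : IsUnit Y.det := isUnit_iff_ne_zero.mpr hY.det_pos.ne'
  obtain ⟨a, ha⟩ : ∃ a, X⁻¹ *ᵥ u = a := ⟨_, rfl⟩
  obtain ⟨b, hb⟩ : ∃ b, Y⁻¹ *ᵥ u = b := ⟨_, rfl⟩
  have hXa : X *ᵥ a = u := by
    rw [← ha, mulVec_mulVec, mul_nonsing_inv _ hXdet, one_mulVec]
  have hYb : Y *ᵥ b = u := by
    rw [← hb, mulVec_mulVec, mul_nonsing_inv _ hYdet, one_mulVec]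
  have hsaX : ∀ v, star a ⬝ᵥ X *ᵥ v = star u ⬝ᵥ v := by
    intro v
    rw [herm_vec_reduce hX.isHermitian, hXa]
  have hsbY : ∀ v, star b ⬝ᵥ Y *ᵥ v = star u ⬝ᵥ v := by
    intro v
    rw [herm_vec_reduce hY.isHermitian, hYb]
  have hsau : star a ⬝ᵥ u = star u ⬝ᵥ a := by
    conv_lhs => rw [← hXa]
    exact hsaX a
  have hsbu : star b ⬝ᵥ u = star u ⬝ᵥ b := by
    conv_lhs => rw [← hYb]
    exact hsbY b
  have key : star u ⬝ᵥ (X⁻¹ - Y⁻¹) *ᵥ u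
      = star (a - b) ⬝ᵥ X *ᵥ (a - b) + star b ⬝ᵥ (Y - X) *ᵥ b := by
    rw [sub_mulVec, dotProduct_sub, ha, hb]
    rw [star_sub, mulVec_sub, sub_mulVec, sub_dotProduct, dotProduct_sub, dotProduct_sub,
      dotProduct_sub, hsaX, hsaX, hsbY]
    have h1 : star b ⬝ᵥ X *ᵥ a = star b ⬝ᵥ u := by rw [hXa]
    rw [h1, hsbu]
    ring
  rw [key]
  exact add_nonneg (hX.posSemidef.dotProduct_mulVec_nonneg _) (hXY.dotProduct_mulVec_nonneg _)
end Stmt4Aux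

namespace Stmt4Aux

variable {N : Type*} [Fintype N] [DecidableEq N]

lemma isClosed_nonneg_complex : IsClosed {z : ℂ | 0 ≤ z} := by
  have h : {z : ℂ | 0 ≤ z} = Complex.re ⁻¹' (Set.Ici 0) ∩ Complex.im ⁻¹' {0} := by
    ext z
    simp [Complex.le_def, eq_comm]
  rw [h]
  exact (isClosed_Ici.preimage Complex.continuous_re).inter
    (isClosed_singleton.preimage Complex.continuous_im)

lemma isClosed_psd : IsClosed {M : Matrix N N ℂ | M.PosSemidef} := by
  have h : {M : Matrix N N ℂ | M.PosSemidef}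
      = {M : Matrix N N ℂ | Mᴴ = M} ∩ ⋂ x : N → ℂ, {M | 0 ≤ star x ⬝ᵥ M *ᵥ x} := by
    ext M
    simp [Matrix.posSemidef_iff_dotProduct_mulVec, Matrix.IsHermitian, Set.mem_iInter]
  rw [h]
  refine (isClosed_eq (continuous_id.matrix_conjTranspose) continuous_id).inter
    (isClosed_iInter fun x => ?_)
  exact isClosed_nonneg_complex.preimage
    (continuous_const.dotProduct (continuous_id.matrix_mulVec continuous_const))

lemma psd_limit {S : ℕ → Matrix N N ℂ} {L : Matrix N N ℂ}
    (h : Filter.Tendsto S Filter.atTop (𝓝 L)) (hpsd : ∀ k, (S k).PosSemidef) :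
    L.PosSemidef :=
  isClosed_psd.mem_of_tendsto h (Filter.Eventually.of_forall hpsd)

lemma polarization (M : Matrix N N ℂ) (x y : N → ℂ) :
    star x ⬝ᵥ M *ᵥ y =
      (star (x + y) ⬝ᵥ M *ᵥ (x + y) - star (x - y) ⬝ᵥ M *ᵥ (x - y)
        - Complex.I * (star (x + Complex.I • y) ⬝ᵥ M *ᵥ (x + Complex.I • y))
        + Complex.I * (star (x - Complex.I • y) ⬝ᵥ M *ᵥ (x - Complex.I • y))) / 4 := by
  simp only [star_add, star_sub, star_smul, mulVec_add, mulVec_sub, mulVec_smul,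
    add_dotProduct, sub_dotProduct, dotProduct_add, dotProduct_sub, smul_dotProduct,
    dotProduct_smul, smul_eq_mul, Complex.star_def, Complex.conj_I]
  linear_combination (star x ⬝ᵥ M *ᵥ y / 2 - star y ⬝ᵥ M *ᵥ x / 2) * Complex.I_sq

end Stmt4Aux

namespace Stmt4Aux

variable {N : Type*} [Fintype N] [DecidableEq N]

lemma star_single_one (i : N) : star (Pi.single i 1 : N → ℂ) = (Pi.single i 1 : N → ℂ) := by
  funext j
  rcases eq_or_ne j i with rfl | h
  · simp
  · simp [Pi.single_eq_of_ne h]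

lemma entry_eq_form (M : Matrix N N ℂ) (i j : N) :
    star (Pi.single i 1 : N → ℂ) ⬝ᵥ M *ᵥ (Pi.single j 1 : N → ℂ) = M i j := by
  rw [star_single_one, mulVec_single, single_dotProduct]
  simp

open Filter Topology in
lemma tendsto_of_mono_bdd (S : ℕ → Matrix N N ℂ) (B : Matrix N N ℂ)
    (hherm : ∀ k, (S k).IsHermitian)
    (hmono : ∀ k, (S (k+1) - S k).PosSemidef)
    (hbd : ∀ k, (B - S k).PosSemidef) :
    ∃ L, Tendsto S atTop (𝓝 L) := by
  have hqmono : ∀ v : N → ℂ, Monotone fun k => (star v ⬝ᵥ S k *ᵥ v).re := by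
    intro v
    apply monotone_nat_of_le_succ
    intro k
    have h := re_nonneg_of_psd (hmono k) v
    rw [sub_mulVec, dotProduct_sub, Complex.sub_re] at h
    linarith
  have hqbdd : ∀ v : N → ℂ, BddAbove (Set.range fun k => (star v ⬝ᵥ S k *ᵥ v).re) := by
    intro v
    refine ⟨(star v ⬝ᵥ B *ᵥ v).re, ?_⟩
    rintro r ⟨k, rfl⟩
    have h := re_nonneg_of_psd (hbd k) v
    rw [sub_mulVec, dotProduct_sub, Complex.sub_re] at h
    dsimp only
    linarith
  have hclim : ∀ v : N → ℂ, Tendsto (fun k => star v ⬝ᵥ S k *ᵥ v) atTop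
      (𝓝 (((⨆ k, (star v ⬝ᵥ S k *ᵥ v).re : ℝ) : ℂ))) := by
    intro v
    have hlim : Tendsto (fun k => (star v ⬝ᵥ S k *ᵥ v).re) atTop
        (𝓝 (⨆ k, (star v ⬝ᵥ S k *ᵥ v).re)) := tendsto_atTop_ciSup (hqmono v) (hqbdd v)
    have heq : (fun k => star v ⬝ᵥ S k *ᵥ v)
        = fun k => (((star v ⬝ᵥ S k *ᵥ v).re : ℝ) : ℂ) := by
      funext k
      rw [herm_form_real (hherm k)]
    rw [heq]
    exact (Complex.continuous_ofReal.tendsto _).comp hlim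
  set e : N → N → ℂ := fun i => Pi.single i 1 with hedef
  set ℓ : (N → ℂ) → ℝ := fun v => ⨆ k, (star v ⬝ᵥ S k *ᵥ v).re with hldef
  refine ⟨Matrix.of fun i j =>
    ((ℓ (e i + e j) : ℂ) - (ℓ (e i - e j) : ℂ)
      - Complex.I * (ℓ (e i + Complex.I • e j) : ℂ)
      + Complex.I * (ℓ (e i - Complex.I • e j) : ℂ)) / 4, ?_⟩
  apply tendsto_pi_nhds.mpr
  intro i
  rw [tendsto_pi_nhds]
  intro j
  have hrw : (fun k => S k i j) = fun k =>
      (star (e i + e j) ⬝ᵥ S k *ᵥ (e i + e j) - star (e i - e j) ⬝ᵥ S k *ᵥ (e i - e j)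
        - Complex.I * (star (e i + Complex.I • e j) ⬝ᵥ S k *ᵥ (e i + Complex.I • e j))
        + Complex.I * (star (e i - Complex.I • e j) ⬝ᵥ S k *ᵥ (e i - Complex.I • e j))) / 4 := by
    funext k
    rw [← entry_eq_form (S k) i j, polarization]
  rw [hrw]
  simp only [Matrix.of_apply]
  exact ((((hclim _).sub (hclim _)).sub ((hclim _).const_mul _)).add
    ((hclim _).const_mul _)).div_const _

end Stmt4Aux

namespace Stmt4Aux

variable {N : Type*} [Fintype N] [DecidableEq N]

lemma posdef_fromBlocks {X Y : Matrix N N ℂ} (hX : X.PosDef) (hY : Y.PosDef) :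
    (Matrix.fromBlocks X 0 0 Y).PosDef := by
  refine Matrix.PosDef.of_dotProduct_mulVec_pos ?_ ?_
  · show (Matrix.fromBlocks X 0 0 Y)ᴴ = _
    rw [fromBlocks_conjTranspose, hX.1.eq, hY.1.eq]
    simp
  · intro x hx
    have hmv : (Matrix.fromBlocks X 0 0 Y) *ᵥ x
        = Sum.elim (X *ᵥ (x ∘ Sum.inl)) (Y *ᵥ (x ∘ Sum.inr)) := by
      rw [fromBlocks_mulVec, zero_mulVec, zero_mulVec, add_zero, zero_add]
    have hsx : star x = Sum.elim (star (x ∘ Sum.inl)) (star (x ∘ Sum.inr)) := by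
      funext i
      cases i <;> rfl
    rw [hmv, hsx, sumElim_dotProduct_sumElim]
    have hor : x ∘ Sum.inl ≠ 0 ∨ x ∘ Sum.inr ≠ 0 := by
      by_contra hcon
      push_neg at hcon
      refine hx ?_
      funext i
      cases i with
      | inl i => exact congrFun hcon.1 i
      | inr i => exact congrFun hcon.2 i
    rcases hor with h | h
    · exact add_pos_of_pos_of_nonneg (hX.dotProduct_mulVec_pos h) (hY.posSemidef.dotProduct_mulVec_nonneg _)
    · exact add_pos_of_nonneg_of_pos (hX.posSemidef.dotProduct_mulVec_nonneg _) (hY.dotProduct_mulVec_pos h)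

lemma rigidity [Nonempty N] {W Q' M : Matrix N N ℂ} (hW : W.PosDef) (hQ' : Q'.PosDef)
    (P : Matrix N N ℂ → Matrix N N ℂ)
    (hpos : ∀ Z, Z.PosSemidef → (P Z).PosSemidef)
    (hsub : ∀ Z₁ Z₂, P (Z₁ - Z₂) = P Z₁ - P Z₂)
    (hsmul : ∀ (r : ℝ) (Z), P ((r : ℂ) • Z) = (r : ℂ) • P Z)
    (hPW : (W - Q' - P W).PosSemidef)
    (hM : M.IsHermitian) (hfix : P M = M) :
    (-M).PosSemidef := by
  obtain ⟨r0, _, hub⟩ := herm_le_smul_posdef hW hM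
  obtain ⟨r1, hr1, hlb⟩ := herm_le_smul_posdef hW hM.neg
  obtain ⟨s, hs, hsW⟩ := herm_le_smul_posdef hQ' hW.isHermitian
  have hWpos : ∀ x : N → ℂ, x ≠ 0 → 0 < (star x ⬝ᵥ W *ᵥ x).re := by
    intro x hx
    have := hW.dotProduct_mulVec_pos hx
    rw [Complex.lt_def] at this
    simpa using this.1
  obtain ⟨x0, hx0⟩ : ∃ x0 : N → ℂ, x0 ≠ 0 := by
    refine ⟨fun _ => 1, fun h => ?_⟩
    have := congrFun h (Classical.arbitrary N)
    simp at this
  set T : Set ℝ := {r : ℝ | ((r : ℂ) • W - M).PosSemidef} with hTdef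
  have hne : T.Nonempty := ⟨r0, hub⟩
  have hbdd : BddBelow T := by
    refine ⟨-r1, fun r hr => ?_⟩
    have hsum := hr.add hlb
    have heq : ((r : ℂ) • W - M) + ((r1 : ℂ) • W - (-M)) = (((r + r1 : ℝ)) : ℂ) • W := by
      push_cast
      module
    rw [heq] at hsum
    have h2 := re_nonneg_of_psd hsum x0
    rw [smul_mulVec, dotProduct_smul] at h2
    have h3 : ((((r + r1 : ℝ)) : ℂ) • (star x0 ⬝ᵥ W *ᵥ x0)).re
        = (r + r1) * (star x0 ⬝ᵥ W *ᵥ x0).re := by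
      simp [smul_eq_mul, Complex.mul_re]
    rw [h3] at h2
    nlinarith [hWpos x0 hx0]
  have hclosedT : IsClosed T := by
    have hcont : Continuous fun r : ℝ => (r : ℂ) • W - M :=
      ((Complex.continuous_ofReal.smul continuous_const).sub continuous_const)
    exact isClosed_psd.preimage hcont
  have hcT : sInf T ∈ T := hclosedT.csInf_mem hne hbdd
  set c := sInf T with hcdef
  rcases le_or_gt c 0 with hc | hc
  · have h2 := hcT.add (psd_smul hW.posSemidef (neg_nonneg.mpr hc))
    have heq : ((c : ℂ) • W - M) + (((-c : ℝ)) : ℂ) • W = -M := by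
      push_cast
      module
    rwa [heq] at h2
  · exfalso
    have step1 : ((c : ℂ) • P W - M).PosSemidef := by
      have h := hpos _ hcT
      rwa [hsub, hsmul, hfix] at h
    have step2 : ((c : ℂ) • (W - Q') - (c : ℂ) • P W).PosSemidef := by
      have h := psd_smul hPW hc.le
      have heq : (c : ℂ) • (W - Q' - P W) = (c : ℂ) • (W - Q') - (c : ℂ) • P W := by
        module
      rwa [heq] at h
    have step3 : ((c / s : ℝ) : ℂ) • ((s : ℂ) • Q' - W) = (c : ℂ) • Q' - ((c / s : ℝ) : ℂ) • W := by
      push_cast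
      rw [smul_sub, smul_smul, div_mul_cancel₀ _ (show (s:ℂ) ≠ 0 by exact_mod_cast hs.ne')]
    have step3' : ((c : ℂ) • Q' - ((c / s : ℝ) : ℂ) • W).PosSemidef := by
      rw [← step3]
      exact psd_smul hsW (by positivity)
    have key : (((c - c / s : ℝ) : ℂ) • W - M).PosSemidef := by
      have h := (step2.add step1).add step3'
      have heq : ((c : ℂ) • (W - Q') - (c : ℂ) • P W) + ((c : ℂ) • P W - M)
          + ((c : ℂ) • Q' - ((c / s : ℝ) : ℂ) • W) = ((c - c / s : ℝ) : ℂ) • W - M := by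
        push_cast
        module
      rwa [heq] at h
    have hle : c ≤ c - c / s := csInf_le hbdd key
    have : 0 < c / s := by positivity
    linarith

end Stmt4Aux

namespace Stmt4Aux

section G

variable {N : Type*} [Fintype N] [DecidableEq N] {ι : Type*} [Fintype ι]
variable (Q : Matrix N N ℂ) (A : ι → Matrix N N ℂ)

/-- The iteration map `X ↦ Q + ∑ Aᵢᴴ X⁻¹ Aᵢ`. -/
noncomputable def gmap (X : Matrix N N ℂ) : Matrix N N ℂ := Q + ∑ i, (A i)ᴴ * X⁻¹ * A i

variable {Q}

lemma gmap_posdef (hQ : Q.PosDef) {X : Matrix N N ℂ} (hX : X.PosDef) :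
    (gmap Q A X).PosDef :=
  hQ.add_posSemidef (psd_sum _ _ fun i _ => (hX.inv.posSemidef).conjTranspose_mul_mul_same (A i))

lemma gmap_ge {X : Matrix N N ℂ} (hX : X.PosDef) :
    (gmap Q A X - Q).PosSemidef := by
  have : gmap Q A X - Q = ∑ i, (A i)ᴴ * X⁻¹ * A i := by
    rw [gmap]; abel
  rw [this]
  exact psd_sum _ _ fun i _ => (hX.inv.posSemidef).conjTranspose_mul_mul_same (A i)

lemma gmap_antitone {X Y : Matrix N N ℂ} (hX : X.PosDef) (hY : Y.PosDef)
    (hXY : (Y - X).PosSemidef) :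
    (gmap Q A X - gmap Q A Y).PosSemidef := by
  have h := inv_antitone hX hY hXY
  have heq : gmap Q A X - gmap Q A Y = ∑ i, (A i)ᴴ * (X⁻¹ - Y⁻¹) * A i := by
    rw [gmap, gmap, add_sub_add_left_eq_sub, ← Finset.sum_sub_distrib]
    congr 1
    funext i
    rw [Matrix.mul_sub, Matrix.sub_mul]
  rw [heq]
  exact psd_sum _ _ fun i _ => h.conjTranspose_mul_mul_same (A i)

open Filter Topology in
lemma gmap_tendsto {E : ℕ → Matrix N N ℂ} {L : Matrix N N ℂ}
    (hL : L.PosDef) (hE : Tendsto E atTop (𝓝 L)) :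
    Tendsto (fun k => gmap Q A (E k)) atTop (𝓝 (gmap Q A L)) := by
  have hout : Continuous fun Y : Matrix N N ℂ => Q + ∑ i, (A i)ᴴ * Y * (A i) :=
    continuous_const.add (continuous_finset_sum _ fun i _ =>
      (continuous_const.matrix_mul continuous_id).matrix_mul continuous_const)
  have hinv : ContinuousAt Inv.inv L := by
    refine continuousAt_matrix_inv L ?_
    rw [Ring.inverse_eq_inv']
    exact continuousAt_inv₀ hL.det_pos.ne'
  have hgc : ContinuousAt (gmap Q A) L := by
    have : gmap Q A = (fun Y : Matrix N N ℂ => Q + ∑ i, (A i)ᴴ * Y * (A i)) ∘ Inv.inv := rfl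
    rw [this]
    exact hout.continuousAt.comp hinv
  exact hgc.tendsto.comp hE

end G

end Stmt4Aux

namespace Stmt4Aux

variable {N : Type*} [Fintype N] [DecidableEq N]

lemma sum_fromBlocks {ι : Type*} (s : Finset ι)
    (f1 f2 f3 f4 : ι → Matrix N N ℂ) :
    ∑ i ∈ s, Matrix.fromBlocks (f1 i) (f2 i) (f3 i) (f4 i)
      = Matrix.fromBlocks (∑ i ∈ s, f1 i) (∑ i ∈ s, f2 i) (∑ i ∈ s, f3 i) (∑ i ∈ s, f4 i) := by
  classical
  induction s using Finset.induction with
  | empty => simp [Matrix.fromBlocks]; ext (i|i) (j|j) <;> simp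
  | insert _ _ hx ih =>
    rw [Finset.sum_insert hx, Finset.sum_insert hx, Finset.sum_insert hx, Finset.sum_insert hx,
      Finset.sum_insert hx, ih, fromBlocks_add]

end Stmt4Aux

namespace Stmt4Aux

variable {N : Type*} [Fintype N] [DecidableEq N]

lemma sandwich_mid (U V D R S : Matrix N N ℂ) :
    (U * R)ᴴ * D * (V * S) = Rᴴ * (Uᴴ * D * V) * S := by
  rw [conjTranspose_mul]
  simp only [Matrix.mul_assoc]

lemma inv_mul_self_mul_inv {X : Matrix N N ℂ} (hdet : IsUnit X.det) :
    X⁻¹ * X * X⁻¹ = X⁻¹ := by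
  rw [nonsing_inv_mul _ hdet, Matrix.one_mul]

lemma block_sandwich (B C Z1 Z2 : Matrix N N ℂ) :
    (Matrix.fromBlocks 0 B C 0)ᴴ * (Matrix.fromBlocks Z1 0 0 Z2) * (Matrix.fromBlocks 0 B C 0)
      = Matrix.fromBlocks (Cᴴ * Z2 * C) 0 0 (Bᴴ * Z1 * B) := by
  rw [fromBlocks_conjTranspose, fromBlocks_multiply, fromBlocks_multiply]
  simp [Matrix.mul_assoc]

lemma block_cross (B C D : Matrix N N ℂ) :
    (Matrix.fromBlocks 0 B C 0)ᴴ * (Matrix.fromBlocks 0 D D 0) * (Matrix.fromBlocks 0 B C 0)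
      = Matrix.fromBlocks (0 : Matrix N N ℂ) (Cᴴ * D * B) (Bᴴ * D * C) 0 := by
  rw [fromBlocks_conjTranspose, fromBlocks_multiply, fromBlocks_multiply]
  simp [Matrix.mul_assoc]

end Stmt4Aux

open Filter Topology Stmt4Aux

theorem stmt4 {n m : ℕ} (Q : Matrix (Fin n) (Fin n) ℂ) (hQ : Q.PosDef)
    (A : Fin m → Matrix (Fin n) (Fin n) ℂ) :
    ∃ X : Matrix (Fin n) (Fin n) ℂ, X.PosDef ∧ X - ∑ i, (A i)ᴴ * X⁻¹ * A i = Q := by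
  rcases Nat.eq_zero_or_pos n with hn | hn
  · subst hn
    refine ⟨Q, hQ, ?_⟩
    ext i j
    exact i.elim0
  haveI : Nonempty (Fin n) := ⟨⟨0, hn⟩⟩
  -- the iteration
  set F : ℕ → Matrix (Fin n) (Fin n) ℂ := fun k => (gmap Q A)^[k] Q with hFdef
  have hFsucc : ∀ k, F (k+1) = gmap Q A (F k) := fun k => Function.iterate_succ_apply' _ _ _
  have hF0 : F 0 = Q := rfl
  have hFpd : ∀ k, (F k).PosDef := by
    intro k
    induction k with
    | zero => exact hQ
    | succ k ih => rw [hFsucc]; exact gmap_posdef A hQ ih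
  have hFgeQ : ∀ k, (F k - Q).PosSemidef := by
    intro k
    cases k with
    | zero => rw [hF0, sub_self]; exact Matrix.PosSemidef.zero
    | succ k => rw [hFsucc]; exact gmap_ge A (hFpd k)
  have hanti : ∀ {j k}, (F k - F j).PosSemidef → (F (j+1) - F (k+1)).PosSemidef := by
    intro j k h
    rw [hFsucc, hFsucc]
    exact gmap_antitone A (hFpd j) (hFpd k) h
  -- even ≤ odd, odd decreasing after, etc.
  have hEO : ∀ k, (F (2*k+1) - F (2*k)).PosSemidef ∧ (F (2*k+1) - F (2*k+2)).PosSemidef := by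
    intro k
    induction k with
    | zero =>
      have h1 : (F 1 - F 0).PosSemidef := by rw [hF0]; exact hFgeQ 1
      have h2 := hanti h1
      exact ⟨h1, h2⟩
    | succ k ih =>
      have e1 : 2*(k+1) = 2*k+2 := by ring
      have e2 : 2*k+2+1 = 2*k+3 := by omega
      have e3 : 2*k+1+1 = 2*k+2 := by omega
      have e4 : 2*k+2+2 = 2*k+4 := by omega
      have e5 : 2*k+3+1 = 2*k+4 := by omega
      have h1 : (F (2*k+3) - F (2*k+2)).PosSemidef := by
        have := hanti ih.2
        rwa [e2, e3] at this
      have h2 : (F (2*k+3) - F (2*k+4)).PosSemidef := by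
        have := hanti h1
        rwa [e3, e5] at this
      rw [e1, e2, e4]
      exact ⟨h1, h2⟩
  have hEmono : ∀ k, (F (2*(k+1)) - F (2*k)).PosSemidef := by
    intro k
    induction k with
    | zero =>
      have := hFgeQ 2
      rwa [← hF0] at this
    | succ k ih =>
      have e1 : 2*(k+1) = 2*k+2 := by ring
      have e2 : 2*(k+2) = 2*k+4 := by ring
      have e3 : 2*k+1+1 = 2*k+2 := by omega
      have e4 : 2*k+2+1 = 2*k+3 := by omega
      have e5 : 2*k+3+1 = 2*k+4 := by omega
      rw [e1] at ih
      have h1 : (F (2*k+1) - F (2*k+3)).PosSemidef := by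
        have := hanti ih
        rwa [e3, e4] at this
      have h2 : (F (2*k+4) - F (2*k+2)).PosSemidef := by
        have := hanti h1
        rwa [e3, e5] at this
      rw [e1, e2]
      exact h2
  have hOmono : ∀ k, (F (2*k+1) - F (2*(k+1)+1)).PosSemidef := by
    intro k
    have := hanti (hEmono k)
    rwa [show 2*k+1 = 2*k+1 from rfl] at this
  have hFleM : ∀ k, (F 1 - F k).PosSemidef := by
    intro k
    cases k with
    | zero => rw [hF0]; exact hFgeQ 1
    | succ k =>
      have h0 : (F k - F 0).PosSemidef := by rw [hF0]; exact hFgeQ k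
      exact hanti h0
  -- limits
  obtain ⟨Xe, hXe⟩ := tendsto_of_mono_bdd (fun k => F (2*k)) (F 1)
    (fun k => (hFpd _).isHermitian) (fun k => hEmono k) (fun k => hFleM _)
  obtain ⟨L', hL'⟩ := tendsto_of_mono_bdd (fun k => -(F (2*k+1))) (-Q)
    (fun k => ((hFpd _).isHermitian).neg)
    (fun k => by
      have := hOmono k
      rw [← neg_sub_neg] at this
      exact this)
    (fun k => by
      have := hFgeQ (2*k+1)
      rw [← neg_sub_neg] at this
      exact this)
  have hXo : Tendsto (fun k => F (2*k+1)) atTop (𝓝 (-L')) := by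
    have := hL'.neg
    simpa using this
  set Xo : Matrix (Fin n) (Fin n) ℂ := -L' with hXodef
  -- order properties of the limits
  have hXeQ : (Xe - Q).PosSemidef :=
    psd_limit (hXe.sub tendsto_const_nhds) (fun k => hFgeQ _)
  have hXoQ : (Xo - Q).PosSemidef :=
    psd_limit (hXo.sub tendsto_const_nhds) (fun k => hFgeQ _)
  have hXepd : Xe.PosDef := by
    have h := hQ.add_posSemidef hXeQ
    have e : Q + (Xe - Q) = Xe := by abel
    rwa [e] at h
  have hXopd : Xo.PosDef := by
    have h := hQ.add_posSemidef hXoQ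
    have e : Q + (Xo - Q) = Xo := by abel
    rwa [e] at h
  have hD : (Xo - Xe).PosSemidef :=
    psd_limit (hXo.sub hXe) (fun k => (hEO k).1)
  -- the two limit equations
  have hXog : Xo = gmap Q A Xe := by
    refine tendsto_nhds_unique ?_ (gmap_tendsto A hXepd hXe)
    have heq : (fun k => F (2*k+1)) = fun k => gmap Q A (F (2*k)) :=
      funext fun k => hFsucc (2*k)
    rw [← heq]
    exact hXo
  have hXeg : Xe = gmap Q A Xo := by
    refine tendsto_nhds_unique ?_ (gmap_tendsto A hXopd hXo)
    have h1 : Tendsto (fun k => F (2*(k+1))) atTop (𝓝 Xe) :=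
      hXe.comp (tendsto_add_atTop_nat 1)
    have heq : (fun k => F (2*(k+1))) = fun k => gmap Q A (F (2*k+1)) :=
      funext fun k => by
        rw [show 2*(k+1) = (2*k+1)+1 by ring]
        exact hFsucc _
    rw [← heq]
    exact h1
  -- algebraic identities
  have hXedet : IsUnit Xe.det := isUnit_iff_ne_zero.mpr hXepd.det_pos.ne'
  have hXodet : IsUnit Xo.det := isUnit_iff_ne_zero.mpr hXopd.det_pos.ne'
  have hXeinvh : Xe⁻¹ᴴ = Xe⁻¹ := hXepd.inv.isHermitian.eq
  have hXoinvh : Xo⁻¹ᴴ = Xo⁻¹ := hXopd.inv.isHermitian.eq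
  have hsum_e : ∑ i, (A i)ᴴ * Xe⁻¹ * A i = Xo - Q := by
    rw [hXog, gmap]; abel
  have hsum_o : ∑ i, (A i)ᴴ * Xo⁻¹ * A i = Xe - Q := by
    rw [hXeg, gmap]; abel
  have hdelta1 : Xo⁻¹ * (Xo - Xe) * Xe⁻¹ = Xe⁻¹ - Xo⁻¹ := by
    rw [Matrix.mul_sub, nonsing_inv_mul _ hXodet, Matrix.sub_mul, Matrix.one_mul,
      Matrix.mul_assoc, mul_nonsing_inv _ hXedet, Matrix.mul_one]
  have hdelta2 : Xe⁻¹ * (Xo - Xe) * Xo⁻¹ = Xe⁻¹ - Xo⁻¹ := by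
    rw [Matrix.mul_sub, nonsing_inv_mul _ hXedet, Matrix.sub_mul, Matrix.one_mul,
      Matrix.mul_assoc, mul_nonsing_inv _ hXodet, Matrix.mul_one]
  have hPhiDelta : ∑ i, (A i)ᴴ * (Xe⁻¹ - Xo⁻¹) * A i = Xo - Xe := by
    have h : ∑ i, (A i)ᴴ * (Xe⁻¹ - Xo⁻¹) * A i
        = (∑ i, (A i)ᴴ * Xe⁻¹ * A i) - ∑ i, (A i)ᴴ * Xo⁻¹ * A i := by
      rw [← Finset.sum_sub_distrib]
      congr 1
      funext i
      rw [Matrix.mul_sub, Matrix.sub_mul]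
    rw [h, hsum_e, hsum_o]
    abel
  -- block matrix rigidity
  set W : Matrix (Fin n ⊕ Fin n) (Fin n ⊕ Fin n) ℂ := Matrix.fromBlocks Xe 0 0 Xo with hWdef
  set Q2 : Matrix (Fin n ⊕ Fin n) (Fin n ⊕ Fin n) ℂ := Matrix.fromBlocks Q 0 0 Q with hQ2def
  set MM : Matrix (Fin n ⊕ Fin n) (Fin n ⊕ Fin n) ℂ :=
    Matrix.fromBlocks 0 (Xo - Xe) (Xo - Xe) 0 with hMMdef
  set C : Fin m → Matrix (Fin n ⊕ Fin n) (Fin n ⊕ Fin n) ℂ :=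
    fun i => Matrix.fromBlocks 0 (Xe⁻¹ * A i) (Xo⁻¹ * A i) 0 with hCdef
  set P : Matrix (Fin n ⊕ Fin n) (Fin n ⊕ Fin n) ℂ → Matrix (Fin n ⊕ Fin n) (Fin n ⊕ Fin n) ℂ :=
    fun Z => ∑ i, (C i)ᴴ * Z * C i with hPdef
  have hWpd : W.PosDef := posdef_fromBlocks hXepd hXopd
  have hQ2pd : Q2.PosDef := posdef_fromBlocks hQ hQ
  have hpos : ∀ Z, Z.PosSemidef → (P Z).PosSemidef :=
    fun Z hZ => psd_sum _ _ fun i _ => hZ.conjTranspose_mul_mul_same _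
  have hsub : ∀ Z₁ Z₂, P (Z₁ - Z₂) = P Z₁ - P Z₂ := by
    intro Z₁ Z₂
    rw [hPdef]
    simp only
    rw [← Finset.sum_sub_distrib]
    congr 1
    funext i
    rw [Matrix.mul_sub, Matrix.sub_mul]
  have hsmul : ∀ (r : ℝ) (Z), P ((r : ℂ) • Z) = (r : ℂ) • P Z := by
    intro r Z
    rw [hPdef]
    simp only
    rw [Finset.smul_sum]
    congr 1
    funext i
    rw [mul_smul_comm, smul_mul_assoc]
  have htermW : ∀ i, (C i)ᴴ * W * C i
      = Matrix.fromBlocks ((A i)ᴴ * Xo⁻¹ * A i) 0 0 ((A i)ᴴ * Xe⁻¹ * A i) := by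
    intro i
    rw [hCdef, hWdef]
    simp only
    rw [block_sandwich, sandwich_mid, sandwich_mid, hXoinvh, hXeinvh,
      inv_mul_self_mul_inv hXodet, inv_mul_self_mul_inv hXedet]
  have hPW : (W - Q2 - P W).PosSemidef := by
    have hPWeq : P W = Matrix.fromBlocks (Xe - Q) 0 0 (Xo - Q) := by
      rw [hPdef]
      simp only
      calc ∑ i, (C i)ᴴ * W * C i
          = ∑ i, Matrix.fromBlocks ((A i)ᴴ * Xo⁻¹ * A i) 0 0 ((A i)ᴴ * Xe⁻¹ * A i) :=
            Finset.sum_congr rfl fun i _ => htermW i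
        _ = Matrix.fromBlocks (∑ i, (A i)ᴴ * Xo⁻¹ * A i) (∑ _i : Fin m, (0:Matrix (Fin n) (Fin n) ℂ))
              (∑ _i : Fin m, (0:Matrix (Fin n) (Fin n) ℂ)) (∑ i, (A i)ᴴ * Xe⁻¹ * A i) :=
            sum_fromBlocks _ _ _ _ _
        _ = Matrix.fromBlocks (Xe - Q) 0 0 (Xo - Q) := by
            rw [hsum_e, hsum_o, Finset.sum_const_zero]
    have hzero : W - Q2 - P W = 0 := by
      rw [hPWeq, hWdef, hQ2def]
      ext (i|i) (j|j) <;>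
        simp [Matrix.fromBlocks, Matrix.sub_apply]
    rw [hzero]
    exact Matrix.PosSemidef.zero
  have hMMherm : MM.IsHermitian := by
    show MMᴴ = MM
    rw [hMMdef, fromBlocks_conjTranspose]
    have hDh : (Xo - Xe)ᴴ = Xo - Xe := (hXopd.isHermitian.sub hXepd.isHermitian).eq
    rw [hDh]
    simp
  have htermM : ∀ i, (C i)ᴴ * MM * C i
      = Matrix.fromBlocks 0 ((A i)ᴴ * (Xe⁻¹ - Xo⁻¹) * A i) ((A i)ᴴ * (Xe⁻¹ - Xo⁻¹) * A i) 0 := by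
    intro i
    rw [hCdef, hMMdef]
    simp only
    rw [block_cross, sandwich_mid, sandwich_mid, hXoinvh, hXeinvh, hdelta1, hdelta2]
  have hfixMM : P MM = MM := by
    rw [hPdef]
    simp only
    calc ∑ i, (C i)ᴴ * MM * C i
        = ∑ i, Matrix.fromBlocks 0 ((A i)ᴴ * (Xe⁻¹ - Xo⁻¹) * A i)
            ((A i)ᴴ * (Xe⁻¹ - Xo⁻¹) * A i) 0 :=
          Finset.sum_congr rfl fun i _ => htermM i
      _ = Matrix.fromBlocks (∑ _i : Fin m, (0:Matrix (Fin n) (Fin n) ℂ))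
            (∑ i, (A i)ᴴ * (Xe⁻¹ - Xo⁻¹) * A i)
            (∑ i, (A i)ᴴ * (Xe⁻¹ - Xo⁻¹) * A i) (∑ _i : Fin m, (0:Matrix (Fin n) (Fin n) ℂ)) :=
          sum_fromBlocks _ _ _ _ _
      _ = MM := by
          rw [hPhiDelta, Finset.sum_const_zero, hMMdef]
  have hP0 : P 0 = 0 := by
    rw [hPdef]
    simp
  have hPneg : P (-MM) = -MM := by
    have h := hsub 0 MM
    rw [zero_sub, hP0, zero_sub, hfixMM] at h
    exact h
  have h1 : (-MM).PosSemidef :=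
    rigidity hWpd hQ2pd P hpos hsub hsmul hPW hMMherm hfixMM
  have h2 : (-(-MM)).PosSemidef :=
    rigidity hWpd hQ2pd P hpos hsub hsmul hPW hMMherm.neg hPneg
  have hMM0 : MM = 0 := by
    have h2' : MM.PosSemidef := by rwa [neg_neg] at h2
    exact psd_antisymm h2' h1
  have hXoXe : Xo = Xe := by
    have hD0 : Xo - Xe = 0 := by
      ext i j
      have h := congrFun (congrFun hMM0 (Sum.inl i)) (Sum.inr j)
      simpa [hMMdef] using h
    exact sub_eq_zero.mp hD0
  -- conclusion
  refine ⟨Xe, hXepd, ?_⟩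
  have hfixe : Xe = Q + ∑ i, (A i)ᴴ * Xe⁻¹ * A i := by
    rw [hXoXe] at hXeg
    unfold gmap at hXeg
    exact hXeg
  nth_rewrite 1 [hfixe]
  abel
end

section
/- Let F(X) = Q + ∑_{i=1}^m A_i* X⁻¹ A_i with Q positive definite, and define the iteration X_0 = Q, X_{n+1} = F(X_n). Then for every positive integer k, Q ≤ F^{2k}(Q) ≤ F^{2k+2}(Q) ≤ F^{2k+1}(Q) ≤ F^{2k-1}(Q) ≤ Q + ∑_{i=1}^m A_i* Q⁻¹ A_i in the Loewner order; in particular the even-indexed iterates are nondecreasing, the odd-indexed iterates are nonincreasing, and every even iterate is ≤ every odd iterate. -/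
open scoped ComplexOrder
open Matrix Finset

private lemma psd_sum {n m : ℕ} (M : Fin m → Matrix (Fin n) (Fin n) ℂ)
    (h : ∀ i, (M i).PosSemidef) : (∑ i, M i).PosSemidef := by
  classical
  induction (Finset.univ : Finset (Fin m)) using Finset.induction with
  | empty => simpa using Matrix.PosSemidef.zero
  | insert _ _ hns ih => rw [Finset.sum_insert hns]; exact (h _).add ih

private lemma inv_antitone {n : ℕ} {X Y : Matrix (Fin n) (Fin n) ℂ}
    (hX : X.PosDef) (hY : Y.PosDef) (h : (Y - X).PosSemidef) :
    (X⁻¹ - Y⁻¹).PosSemidef := by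
  have hdX := Matrix.isUnit_iff_isUnit_det X |>.1 hX.isUnit
  have hdY := Matrix.isUnit_iff_isUnit_det Y |>.1 hY.isUnit
  have h1 : X⁻¹ * X = 1 := Matrix.nonsing_inv_mul _ hdX
  have h2 : X * X⁻¹ = 1 := Matrix.mul_nonsing_inv _ hdX
  have h3 : Y⁻¹ * Y = 1 := Matrix.nonsing_inv_mul _ hdY
  have h4 : Y * Y⁻¹ = 1 := Matrix.mul_nonsing_inv _ hdY
  have hXih : X⁻¹ᴴ = X⁻¹ := hX.inv.isHermitian
  have hYih : Y⁻¹ᴴ = Y⁻¹ := hY.inv.isHermitian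
  have key : X⁻¹ - Y⁻¹ =
      (X⁻¹ - Y⁻¹)ᴴ * X * (X⁻¹ - Y⁻¹) + Y⁻¹ᴴ * (Y - X) * Y⁻¹ := by
    rw [conjTranspose_sub, hXih, hYih]
    simp only [Matrix.mul_sub, Matrix.sub_mul, Matrix.mul_assoc, h1, h2, h3, h4,
      Matrix.mul_one, Matrix.one_mul]
    abel
  rw [key]
  exact ((hX.posSemidef.conjTranspose_mul_mul_same _).add
    (h.conjTranspose_mul_mul_same _))

theorem stmt5 {n m : ℕ} (Q : Matrix (Fin n) (Fin n) ℂ) (hQ : Q.PosDef)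
    (A : Fin m → Matrix (Fin n) (Fin n) ℂ)
    (F : Matrix (Fin n) (Fin n) ℂ → Matrix (Fin n) (Fin n) ℂ)
    (hF : ∀ X, F X = Q + ∑ i, (A i)ᴴ * X⁻¹ * A i)
    (k : ℕ) (hk : 1 ≤ k) :
    (F^[2 * k] Q - Q).PosSemidef ∧
      (F^[2 * k + 2] Q - F^[2 * k] Q).PosSemidef ∧
      (F^[2 * k + 1] Q - F^[2 * k + 2] Q).PosSemidef ∧
      (F^[2 * k - 1] Q - F^[2 * k + 1] Q).PosSemidef ∧
      ((Q + ∑ i, (A i)ᴴ * Q⁻¹ * A i) - F^[2 * k - 1] Q).PosSemidef := by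
  -- basic facts
  have hQle : ∀ X : Matrix (Fin n) (Fin n) ℂ, X.PosDef → (F X - Q).PosSemidef := by
    intro X hX
    rw [hF, add_sub_cancel_left]
    exact psd_sum _ fun i => hX.inv.posSemidef.conjTranspose_mul_mul_same _
  have hFd : ∀ X : Matrix (Fin n) (Fin n) ℂ, X.PosDef → (F X).PosDef := by
    intro X hX
    rw [hF]
    exact hQ.add_posSemidef (psd_sum _ fun i => hX.inv.posSemidef.conjTranspose_mul_mul_same _)
  have hmono : ∀ X Y : Matrix (Fin n) (Fin n) ℂ, X.PosDef → Y.PosDef →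
      (Y - X).PosSemidef → (F X - F Y).PosSemidef := by
    intro X Y hX hY h
    have : F X - F Y = ∑ i, (A i)ᴴ * (X⁻¹ - Y⁻¹) * (A i) := by
      rw [hF, hF, add_sub_add_left_eq_sub, ← Finset.sum_sub_distrib]
      congr 1; ext i
      simp [Matrix.mul_sub, Matrix.sub_mul]
    rw [this]
    exact psd_sum _ fun i => (inv_antitone hX hY h).conjTranspose_mul_mul_same _
  have pd : ∀ j, (F^[j] Q).PosDef := by
    intro j
    induction j with
    | zero => simpa using hQ
    | succ j ih => rw [Function.iterate_succ_apply']; exact hFd _ ih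
  have it : ∀ j, F^[j + 1] Q = F (F^[j] Q) := fun j => Function.iterate_succ_apply' F j Q
  set X : ℕ → Matrix (Fin n) (Fin n) ℂ := fun j => F^[j] Q with hX
  -- main induction
  have C : ∀ j, (X (2*j+2) - X (2*j)).PosSemidef ∧ (X (2*j+1) - X (2*j+2)).PosSemidef ∧
      (X (2*j+1) - X (2*j+3)).PosSemidef := by
    intro j
    induction j with
    | zero =>
      have h10 : (X 1 - X 0).PosSemidef := by
        have := hQle Q hQ
        simpa [hX, it 0] using this
      have h21 : (X 1 - X 2).PosSemidef := by
        have := hmono (X 0) (X 1) (pd 0) (pd 1) h10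
        simpa [hX, it 0, it 1] using this
      have h20 : (X 2 - X 0).PosSemidef := by
        have h2q := hQle (X 1) (pd 1)
        have : X 2 - X 0 = F (X 1) - Q := by simp [hX, it 1]
        rw [this]; exact h2q
      have h13 : (X 1 - X 3).PosSemidef := by
        have := hmono (X 0) (X 2) (pd 0) (pd 2) h20
        simpa [hX, it 0, it 2] using this
      refine ⟨by simpa using h20, by simpa using h21, by simpa using h13⟩
    | succ j ih =>
      obtain ⟨ih1, ih2, ih3⟩ := ih
      -- X(2j+3) - X(2j+2) PSD
      have a1 : (X (2*j+3) - X (2*j+2)).PosSemidef := by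
        have := hmono (X (2*j+2)) (X (2*j+1)) (pd _) (pd _) ih2
        simpa [hX, it (2*j+1), it (2*j+2), show 2*j+1+1 = 2*j+2 from rfl,
          show 2*j+2+1 = 2*j+3 from rfl] using this
      -- X(2j+3) - X(2j+4) PSD
      have a2 : (X (2*j+3) - X (2*j+4)).PosSemidef := by
        have := hmono (X (2*j+2)) (X (2*j+3)) (pd _) (pd _) a1
        simpa [hX, it (2*j+2), it (2*j+3)] using this
      -- X(2j+4) - X(2j+2) PSD
      have a3 : (X (2*j+4) - X (2*j+2)).PosSemidef := by
        have := hmono (X (2*j+3)) (X (2*j+1)) (pd _) (pd _) ih3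
        simpa [hX, it (2*j+1), it (2*j+3)] using this
      -- X(2j+3) - X(2j+5) PSD
      have a4 : (X (2*j+3) - X (2*j+5)).PosSemidef := by
        have := hmono (X (2*j+2)) (X (2*j+4)) (pd _) (pd _) a3
        simpa [hX, it (2*j+2), it (2*j+4)] using this
      simp only [show 2*(j+1)+2 = 2*j+4 from by omega, show 2*(j+1) = 2*j+2 from by omega,
        show 2*(j+1)+1 = 2*j+3 from by omega, show 2*(j+1)+3 = 2*j+5 from by omega]
      exact ⟨a3, a2, a4⟩
  -- odd chain decreasing to X 1
  have odd_le : ∀ j, (X 1 - X (2*j+1)).PosSemidef := by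
    intro j
    induction j with
    | zero => simpa using Matrix.PosSemidef.zero
    | succ j ih =>
      have e : 2*(j+1)+1 = 2*j+3 := by ring
      rw [e]
      have : X 1 - X (2*j+3) = (X 1 - X (2*j+1)) + (X (2*j+1) - X (2*j+3)) := by abel
      rw [this]
      exact ih.add (C j).2.2
  obtain ⟨j, rfl⟩ : ∃ j, k = j + 1 := ⟨k - 1, (Nat.succ_pred_eq_of_pos hk).symm⟩
  simp only [show 2*(j+1) = 2*j+2 from by omega, show 2*(j+1)+2 = 2*j+4 from by omega,
    show 2*(j+1)+1 = 2*j+3 from by omega, show 2*(j+1)-1 = 2*j+1 from by omega]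
  obtain ⟨c1, c2, c3⟩ := C (j+1)
  simp only [show 2*j+2+2 = 2*j+4 from by omega, show 2*j+2+1 = 2*j+3 from by omega,
    show 2*j+2-1 = 2*j+1 from by omega,
    show 2*(j+1) = 2*j+2 from by omega, show 2*(j+1)+2 = 2*j+4 from by omega,
    show 2*(j+1)+1 = 2*j+3 from by omega, show 2*(j+1)+3 = 2*j+5 from by omega] at c1 c2 c3 ⊢
  refine ⟨?_, c1, c2, (C j).2.2, ?_⟩
  · have h2q := hQle (X (2*j+1)) (pd _)
    have he : X (2*j+2) - Q = F (X (2*j+1)) - Q := by simp [hX, it (2*j+1)]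
    show (X (2*j+2) - Q).PosSemidef
    rw [he]; exact h2q
  · have he : Q + ∑ i, (A i)ᴴ * Q⁻¹ * (A i) = X 1 := by
      simp [hX, it 0, hF]
    show (Q + ∑ i, (A i)ᴴ * Q⁻¹ * (A i) - X (2*j+1)).PosSemidef
    rw [he]
    exact odd_le j
end

section
/- Let F(X) = Q + ∑_{i=1}^m A_i* X⁻¹ A_i with Q positive definite. If 0 < t < 1 and Q ≤ X ≤ Q + ∑_{i=1}^m A_i* Q⁻¹ A_i in the Loewner order, then F²(tX) ≥ t(1 + η(t)) F²(X), where η(t) = (1-t)λ_min(Q) / [ t ( λ_max(Q) + (∑_{i=1}^m λ_max(A_i* A_i))/λ_min(Q) ) ]. -/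
set_option maxHeartbeats 1600000
open scoped ComplexOrder
open Matrix Finset

variable {n : ℕ}

lemma psdSmul {M : Matrix (Fin n) (Fin n) ℂ} (hM : M.PosSemidef) {r : ℝ} (hr : 0 ≤ r) :
    (((r : ℂ)) • M).PosSemidef := by
  refine Matrix.PosSemidef.of_dotProduct_mulVec_nonneg ?_ ?_
  · have := hM.1
    unfold Matrix.IsHermitian at *
    rw [conjTranspose_smul, this]
    simp [Complex.conj_ofReal]
  · intro x
    rw [smul_mulVec, dotProduct_smul, smul_eq_mul]
    exact mul_nonneg (by exact_mod_cast hr) (hM.dotProduct_mulVec_nonneg x)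

lemma pdSmul {M : Matrix (Fin n) (Fin n) ℂ} (hM : M.PosDef) {r : ℝ} (hr : 0 < r) :
    (((r : ℂ)) • M).PosDef := by
  refine Matrix.PosDef.of_dotProduct_mulVec_pos ?_ ?_
  · have := hM.1
    unfold Matrix.IsHermitian at *
    rw [conjTranspose_smul, this]
    simp [Complex.conj_ofReal]
  · intro x hx
    rw [smul_mulVec, dotProduct_smul, smul_eq_mul]
    exact mul_pos (by exact_mod_cast hr) (hM.dotProduct_mulVec_pos hx)

lemma psdSum {ι : Type*} (s : Finset ι) (f : ι → Matrix (Fin n) (Fin n) ℂ)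
    (h : ∀ i ∈ s, (f i).PosSemidef) : (∑ i ∈ s, f i).PosSemidef :=
  Finset.sum_induction f _ (fun _ _ ha hb => ha.add hb) Matrix.PosSemidef.zero h




open scoped MatrixOrder in
lemma oneSubInvPsd {P : Matrix (Fin n) (Fin n) ℂ} (hdet : IsUnit P.det)
    (hPinv : P⁻¹.PosSemidef) (hP1 : (P - 1).PosSemidef) : (1 - P⁻¹).PosSemidef := by
  set W := CFC.sqrt P⁻¹ with hW
  have hWW : W * W = P⁻¹ := CFC.sqrt_mul_sqrt_self _ hPinv.nonneg
  have hWH : Wᴴ = W := (CFC.sqrt_nonneg _).posSemidef.1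
  have hdetW : IsUnit W.det := by
    have : IsUnit (W.det * W.det) := by
      rw [← Matrix.det_mul, hWW]
      exact (Matrix.isUnit_nonsing_inv_det P hdet)
    exact isUnit_of_mul_isUnit_left this
  have key : W * P * W = 1 := by
    have hP : P = W⁻¹ * W⁻¹ := by
      rw [← Matrix.mul_inv_rev, hWW, Matrix.nonsing_inv_nonsing_inv P hdet]
    rw [hP, ← mul_assoc, Matrix.mul_nonsing_inv _ hdetW, one_mul,
      Matrix.nonsing_inv_mul _ hdetW]
  have h2 : (W * (P - 1) * Wᴴ).PosSemidef := hP1.mul_mul_conjTranspose_same W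
  rw [hWH] at h2
  have heq : W * (P - 1) * W = 1 - P⁻¹ := by
    rw [mul_sub, mul_one, sub_mul, key, hWW]
  rwa [heq] at h2

open scoped MatrixOrder in
lemma invAntitone {M N : Matrix (Fin n) (Fin n) ℂ} (hM : M.PosDef)
    (h : (N - M).PosSemidef) : (M⁻¹ - N⁻¹).PosSemidef := by
  have hN : N.PosDef := by
    have := hM.add_posSemidef h
    rwa [show M + (N - M) = N by abel] at this
  have hdM : IsUnit M.det := isUnit_iff_ne_zero.mpr hM.det_pos.ne'
  have hdN : IsUnit N.det := isUnit_iff_ne_zero.mpr hN.det_pos.ne'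
  set T := CFC.sqrt M with hT
  have hTT : T * T = M := CFC.sqrt_mul_sqrt_self _ hM.posSemidef.nonneg
  have hTH : Tᴴ = T := (CFC.sqrt_nonneg _).posSemidef.1
  have hdT : IsUnit T.det := by
    have : IsUnit (T.det * T.det) := by rw [← Matrix.det_mul, hTT]; exact hdM
    exact isUnit_of_mul_isUnit_left this
  have hTiH : T⁻¹ᴴ = T⁻¹ := by rw [Matrix.conjTranspose_nonsing_inv, hTH]
  have hTiT : T⁻¹ * T = 1 := Matrix.nonsing_inv_mul _ hdT
  have hTTi : T * T⁻¹ = 1 := Matrix.mul_nonsing_inv _ hdT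
  have can1 : ∀ X : Matrix (Fin n) (Fin n) ℂ, T⁻¹ * (T * X) = X := fun X => by
    rw [← mul_assoc, hTiT, one_mul]
  have can2 : ∀ X : Matrix (Fin n) (Fin n) ℂ, T * (T⁻¹ * X) = X := fun X => by
    rw [← mul_assoc, hTTi, one_mul]
  have canN : ∀ X : Matrix (Fin n) (Fin n) ℂ, N * (N⁻¹ * X) = X := fun X => by
    rw [← mul_assoc, Matrix.mul_nonsing_inv _ hdN, one_mul]
  set P := T⁻¹ * N * T⁻¹ with hP
  have hPdet : IsUnit P.det := by
    rw [hP, Matrix.det_mul, Matrix.det_mul]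
    exact ((Matrix.isUnit_nonsing_inv_det T hdT).mul hdN).mul
      (Matrix.isUnit_nonsing_inv_det T hdT)
  have hPinv : P⁻¹ = T * N⁻¹ * T := by
    apply Matrix.inv_eq_right_inv
    show T⁻¹ * N * T⁻¹ * (T * N⁻¹ * T) = 1
    simp only [mul_assoc]
    rw [can1, canN, hTiT]
  have hPinvPsd : P⁻¹.PosSemidef := by
    rw [hPinv]
    have := hN.inv.posSemidef.conjTranspose_mul_mul_same T
    rwa [hTH] at this
  have hP1 : (P - 1).PosSemidef := by
    have h3 := h.conjTranspose_mul_mul_same T⁻¹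
    rw [hTiH] at h3
    have heq : T⁻¹ * (N - M) * T⁻¹ = P - 1 := by
      rw [mul_sub, sub_mul, hP, ← hTT]
      congr 1
      show T⁻¹ * (T * T) * T⁻¹ = 1
      simp only [mul_assoc]
      rw [can1, hTTi]
    rwa [heq] at h3
  have main := oneSubInvPsd hPdet hPinvPsd hP1
  have h4 := main.conjTranspose_mul_mul_same T⁻¹
  rw [hTiH] at h4
  have heq : T⁻¹ * (1 - P⁻¹) * T⁻¹ = M⁻¹ - N⁻¹ := by
    rw [mul_sub, mul_one, sub_mul, hPinv]
    congr 1
    · rw [← hTT, Matrix.mul_inv_rev]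
    · show T⁻¹ * (T * N⁻¹ * T) * T⁻¹ = N⁻¹
      simp only [mul_assoc]
      rw [can1, hTTi, mul_one]
  rwa [heq] at h4



lemma diagCast (f : Fin n → ℝ) (c : ℝ) :
    (diagonal (fun j => ((f j - c : ℝ) : ℂ)) : Matrix (Fin n) (Fin n) ℂ) =
      diagonal (RCLike.ofReal ∘ f) - (c : ℂ) • 1 := by
  ext i j
  rcases eq_or_ne i j with rfl | hij
  · simp [Matrix.one_apply_eq, Matrix.diagonal_apply_eq]
  · simp [Matrix.diagonal_apply_ne _ hij, Matrix.one_apply_ne hij]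

lemma specConj {B : Matrix (Fin n) (Fin n) ℂ} (hB : B.IsHermitian) (c : ℝ) :
    B - (c : ℂ) • 1 = (hB.eigenvectorUnitary : Matrix (Fin n) (Fin n) ℂ) *
      diagonal (fun j => ((hB.eigenvalues j - c : ℝ) : ℂ)) *
      (star (hB.eigenvectorUnitary : Matrix (Fin n) (Fin n) ℂ)) := by
  set U := (hB.eigenvectorUnitary : Matrix (Fin n) (Fin n) ℂ) with hU
  have hUU : U * star U = 1 := (Matrix.mem_unitaryGroup_iff).mp hB.eigenvectorUnitary.2
  have hspec := hB.spectral_theorem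
  rw [Unitary.conjStarAlgAut_apply] at hspec
  rw [diagCast, mul_sub, sub_mul, ← hspec]
  congr 1
  rw [Matrix.mul_smul, Matrix.smul_mul, mul_one, hUU]

lemma herm_sub_smul_psd {B : Matrix (Fin n) (Fin n) ℂ} (hB : B.IsHermitian) (c : ℝ)
    (h : ∀ j, c ≤ hB.eigenvalues j) : (B - (c : ℂ) • 1).PosSemidef := by
  rw [specConj hB c]
  have hd : (diagonal (fun j => ((hB.eigenvalues j - c : ℝ) : ℂ))).PosSemidef := by
    refine Matrix.PosSemidef.diagonal fun j => ?_
    rw [show ((0:Fin n → ℂ) j) = ((0:ℝ):ℂ) by simp]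
    exact Complex.real_le_real.mpr (sub_nonneg.mpr (h j))
  have := hd.mul_mul_conjTranspose_same (hB.eigenvectorUnitary : Matrix (Fin n) (Fin n) ℂ)
  rwa [← Matrix.star_eq_conjTranspose] at this

lemma smul_sub_herm_psd {B : Matrix (Fin n) (Fin n) ℂ} (hB : B.IsHermitian) (c : ℝ)
    (h : ∀ j, hB.eigenvalues j ≤ c) : ((c : ℂ) • 1 - B).PosSemidef := by
  have key : (c : ℂ) • 1 - B = (hB.eigenvectorUnitary : Matrix (Fin n) (Fin n) ℂ) *
      diagonal (fun j => ((c - hB.eigenvalues j : ℝ) : ℂ)) *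
      (star (hB.eigenvectorUnitary : Matrix (Fin n) (Fin n) ℂ)) := by
    have h1 := specConj hB c
    have h2 : (diagonal (fun j => ((c - hB.eigenvalues j : ℝ) : ℂ)) :
        Matrix (Fin n) (Fin n) ℂ) = -(diagonal (fun j => ((hB.eigenvalues j - c : ℝ) : ℂ))) := by
      ext i j
      rcases eq_or_ne i j with rfl | hij
      · simp [Matrix.diagonal_apply_eq]
      · simp [Matrix.diagonal_apply_ne _ hij]
    rw [h2, Matrix.mul_neg, Matrix.neg_mul, ← h1]
    abel
  rw [key]
  have hd : (diagonal (fun j => ((c - hB.eigenvalues j : ℝ) : ℂ))).PosSemidef := by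
    refine Matrix.PosSemidef.diagonal fun j => ?_
    rw [show ((0:Fin n → ℂ) j) = ((0:ℝ):ℂ) by simp]
    exact Complex.real_le_real.mpr (sub_nonneg.mpr (h j))
  have := hd.mul_mul_conjTranspose_same (hB.eigenvectorUnitary : Matrix (Fin n) (Fin n) ℂ)
  rwa [← Matrix.star_eq_conjTranspose] at this

theorem stmt6 {n m : ℕ} (Q : Matrix (Fin n) (Fin n) ℂ) (hQ : Q.PosDef)
    (A : Fin m → Matrix (Fin n) (Fin n) ℂ)
    (F : Matrix (Fin n) (Fin n) ℂ → Matrix (Fin n) (Fin n) ℂ)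
    (hF : ∀ Y, F Y = Q + ∑ i, (A i)ᴴ * Y⁻¹ * A i)
    (t : ℝ) (ht0 : 0 < t) (ht1 : t < 1)
    (X : Matrix (Fin n) (Fin n) ℂ) (hX : X.IsHermitian)
    (hlow : (X - Q).PosSemidef)
    (hup : ((Q + ∑ i, (A i)ᴴ * Q⁻¹ * A i) - X).PosSemidef)
    (η : ℝ)
    (hη : η = ((1 - t) * (⨅ j, hQ.1.eigenvalues j)) /
        (t * ((⨆ j, hQ.1.eigenvalues j) +
          (∑ i, ⨆ j, (Matrix.posSemidef_conjTranspose_mul_self (A i)).1.eigenvalues j) /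
            (⨅ j, hQ.1.eigenvalues j)))) :
    (F (F ((t : ℂ) • X)) - ((t * (1 + η) : ℝ) : ℂ) • F (F X)).PosSemidef := by
  rcases Nat.eq_zero_or_pos n with hn | hn
  · subst hn
    refine ⟨?_, fun x => ?_⟩
    · ext i j; exact i.elim0
    · simp [Finsupp.sum, Finset.eq_empty_of_isEmpty x.support]
  haveI : Nonempty (Fin n) := Fin.pos_iff_nonempty.mp hn
  -- scalar setup
  set σi : Fin m → ℝ :=
    fun i => ⨆ j, (Matrix.posSemidef_conjTranspose_mul_self (A i)).1.eigenvalues j with hσi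
  set lmin := ⨅ j, hQ.1.eigenvalues j with hlmin
  set lmax := ⨆ j, hQ.1.eigenvalues j with hlmax
  set σ := ∑ i, σi i with hσ
  have hlmin_le : ∀ j, lmin ≤ hQ.1.eigenvalues j :=
    fun j => ciInf_le (Set.Finite.bddBelow (Set.finite_range _)) j
  have hle_lmax : ∀ j, hQ.1.eigenvalues j ≤ lmax :=
    fun j => le_ciSup (Set.Finite.bddAbove (Set.finite_range _)) j
  have hlmin_pos : 0 < lmin := by
    obtain ⟨i, hi⟩ := Finite.exists_min hQ.1.eigenvalues
    exact lt_of_lt_of_le (hQ.eigenvalues_pos i) (le_ciInf hi)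
  have hlmax_pos : 0 < lmax :=
    lt_of_lt_of_le (hQ.eigenvalues_pos (Classical.arbitrary _)) (hle_lmax _)
  have hσi_le : ∀ i j, (Matrix.posSemidef_conjTranspose_mul_self (A i)).1.eigenvalues j ≤ σi i :=
    fun i j => le_ciSup (Set.Finite.bddAbove (Set.finite_range _)) j
  have hσi_nonneg : ∀ i, 0 ≤ σi i := fun i =>
    le_trans ((Matrix.posSemidef_conjTranspose_mul_self (A i)).eigenvalues_nonneg
      (Classical.arbitrary _)) (hσi_le i _)
  have hσnn : 0 ≤ σ := Finset.sum_nonneg fun i _ => hσi_nonneg i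
  set c := lmax + σ / lmin with hc
  have hcpos : 0 < c := add_pos_of_pos_of_nonneg hlmax_pos (div_nonneg hσnn hlmin_pos.le)
  have hηval : η * (t * c) = (1 - t) * lmin := by
    rw [hη]; field_simp
  have hηnn : 0 ≤ η := by
    rw [hη]
    exact div_nonneg (mul_nonneg (by linarith) hlmin_pos.le) (mul_nonneg ht0.le hcpos.le)
  -- matrix setup
  have hXPD : X.PosDef := by
    have := hQ.add_posSemidef hlow
    rwa [show Q + (X - Q) = X by abel] at this
  set S := ∑ i, (A i)ᴴ * X⁻¹ * A i with hS
  have hSpsd : S.PosSemidef :=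
    psdSum _ _ fun i _ => hXPD.inv.posSemidef.conjTranspose_mul_mul_same (A i)
  have hFX : F X = Q + S := hF X
  have hFXPD : (F X).PosDef := by rw [hFX]; exact hQ.add_posSemidef hSpsd
  have htXPD : (((t:ℝ):ℂ) • X).PosDef := pdSmul hXPD ht0
  have htInv : ((t : ℂ) • X)⁻¹ = ((t⁻¹ : ℝ) : ℂ) • X⁻¹ := by
    apply Matrix.inv_eq_right_inv
    rw [Matrix.smul_mul, Matrix.mul_smul, smul_smul,
      Matrix.mul_nonsing_inv _ (isUnit_iff_ne_zero.mpr hXPD.det_pos.ne')]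
    have h1 : (t : ℂ) * ((t⁻¹ : ℝ) : ℂ) = 1 := by
      push_cast; field_simp
    rw [h1, one_smul]
  have hFtX : F ((t : ℂ) • X) = Q + ((t⁻¹ : ℝ) : ℂ) • S := by
    rw [hF, htInv, hS, Finset.smul_sum]
    congr 1
    refine Finset.sum_congr rfl fun i _ => ?_
    rw [Matrix.mul_smul, Matrix.smul_mul]
  have hFtXPD : (F ((t : ℂ) • X)).PosDef := by
    rw [hFtX]
    exact hQ.add_posSemidef (psdSmul hSpsd (inv_nonneg.mpr ht0.le))
  have hti1 : (0:ℝ) ≤ t⁻¹ - 1 := by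
    have h1 : t⁻¹ - 1 = (1 - t)/t := by field_simp
    rw [h1]
    exact div_nonneg (by linarith) ht0.le
  have hD1 : (((t⁻¹ : ℝ) : ℂ) • F X - F ((t : ℂ) • X)).PosSemidef := by
    have heq : ((t⁻¹ : ℝ) : ℂ) • F X - F ((t : ℂ) • X) = ((t⁻¹ - 1 : ℝ) : ℂ) • Q := by
      rw [hFX, hFtX]; push_cast; module
    rw [heq]; exact psdSmul hQ.posSemidef hti1
  have h7 := invAntitone hFtXPD hD1
  have hNi : (((t⁻¹ : ℝ) : ℂ) • F X)⁻¹ = ((t : ℝ) : ℂ) • (F X)⁻¹ := by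
    apply Matrix.inv_eq_right_inv
    rw [Matrix.smul_mul, Matrix.mul_smul, smul_smul,
      Matrix.mul_nonsing_inv _ (isUnit_iff_ne_zero.mpr hFXPD.det_pos.ne')]
    have h1 : ((t⁻¹ : ℝ) : ℂ) * ((t : ℝ) : ℂ) = 1 := by push_cast; field_simp
    rw [h1, one_smul]
  rw [hNi] at h7
  have h8 : (∑ i, (A i)ᴴ * (F ((t : ℂ) • X))⁻¹ * A i
      - ((t : ℝ) : ℂ) • ∑ i, (A i)ᴴ * (F X)⁻¹ * A i).PosSemidef := by
    have heq : ∑ i, (A i)ᴴ * (F ((t : ℂ) • X))⁻¹ * A i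
        - ((t : ℝ) : ℂ) • ∑ i, (A i)ᴴ * (F X)⁻¹ * A i
        = ∑ i, (A i)ᴴ * ((F ((t : ℂ) • X))⁻¹ - ((t : ℝ) : ℂ) • (F X)⁻¹) * A i := by
      rw [Finset.smul_sum, ← Finset.sum_sub_distrib]
      refine Finset.sum_congr rfl fun i _ => ?_
      rw [mul_sub, sub_mul, Matrix.mul_smul, Matrix.smul_mul]
    rw [heq]
    exact psdSum _ _ fun i _ => h7.conjTranspose_mul_mul_same (A i)
  -- upper bound on F (F X)
  have hFXQ : (F X - Q).PosSemidef := by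
    rw [hFX, add_sub_cancel_left]; exact hSpsd
  have h9 := invAntitone hQ hFXQ
  have hlminv : ((((lmin : ℝ)) : ℂ) • (1 : Matrix (Fin n) (Fin n) ℂ))⁻¹
      = ((lmin⁻¹ : ℝ) : ℂ) • 1 := by
    apply Matrix.inv_eq_right_inv
    rw [Matrix.smul_mul, Matrix.mul_smul, smul_smul, one_mul]
    have h1 : ((lmin : ℝ) : ℂ) * ((lmin⁻¹ : ℝ) : ℂ) = 1 := by
      push_cast; field_simp
    rw [h1, one_smul]
  have hQl : (Q - ((lmin : ℝ) : ℂ) • 1).PosSemidef := herm_sub_smul_psd hQ.1 lmin hlmin_le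
  have h10 : (((lmin⁻¹ : ℝ) : ℂ) • 1 - Q⁻¹).PosSemidef := by
    have := invAntitone (pdSmul Matrix.PosDef.one hlmin_pos) hQl
    rwa [hlminv] at this
  have h11 : ∀ i, (((σi i / lmin : ℝ) : ℂ) • 1 - (A i)ᴴ * Q⁻¹ * A i).PosSemidef := by
    intro i
    have hAA : (((σi i : ℝ) : ℂ) • 1 - (A i)ᴴ * A i).PosSemidef :=
      smul_sub_herm_psd (Matrix.posSemidef_conjTranspose_mul_self (A i)).1 (σi i) (hσi_le i)
    have hconj := h10.conjTranspose_mul_mul_same (A i)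
    have heq : ((σi i / lmin : ℝ) : ℂ) • 1 - (A i)ᴴ * Q⁻¹ * A i
        = ((lmin⁻¹ : ℝ) : ℂ) • (((σi i : ℝ) : ℂ) • 1 - (A i)ᴴ * A i)
          + (A i)ᴴ * (((lmin⁻¹ : ℝ) : ℂ) • 1 - Q⁻¹) * A i := by
      rw [mul_sub, sub_mul, Matrix.mul_smul, Matrix.smul_mul, mul_one]
      push_cast
      match_scalars
      · field_simp
      · ring
      · ring
    rw [heq]
    exact (psdSmul hAA (inv_nonneg.mpr hlmin_pos.le)).add hconj
  have hFFX : F (F X) = Q + ∑ i, (A i)ᴴ * (F X)⁻¹ * A i := hF (F X)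
  have h12 : (((c : ℝ) : ℂ) • 1 - F (F X)).PosSemidef := by
    have p1 := smul_sub_herm_psd hQ.1 lmax hle_lmax
    have p2 := psdSum Finset.univ _ fun i _ => h11 i
    have p3 : (∑ i, (A i)ᴴ * Q⁻¹ * A i - ∑ i, (A i)ᴴ * (F X)⁻¹ * A i).PosSemidef := by
      have heq : ∑ i, (A i)ᴴ * Q⁻¹ * A i - ∑ i, (A i)ᴴ * (F X)⁻¹ * A i
          = ∑ i, (A i)ᴴ * (Q⁻¹ - (F X)⁻¹) * A i := by
        rw [← Finset.sum_sub_distrib]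
        refine Finset.sum_congr rfl fun i _ => ?_
        rw [mul_sub, sub_mul]
      rw [heq]
      exact psdSum _ _ fun i _ => h9.conjTranspose_mul_mul_same (A i)
    have hcs : ((c : ℝ) : ℂ) • (1 : Matrix (Fin n) (Fin n) ℂ)
        = ((lmax : ℝ) : ℂ) • 1 + ∑ i, ((σi i / lmin : ℝ) : ℂ) • 1 := by
      rw [← Finset.sum_smul, ← add_smul]
      congr 1
      push_cast [hc, hσ, Finset.sum_div]
      ring
    have heq2 : ((c : ℝ) : ℂ) • (1 : Matrix (Fin n) (Fin n) ℂ) - F (F X)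
        = (((lmax : ℝ) : ℂ) • 1 - Q)
          + (∑ i, (((σi i / lmin : ℝ) : ℂ) • 1 - (A i)ᴴ * Q⁻¹ * A i))
          + (∑ i, (A i)ᴴ * Q⁻¹ * A i - ∑ i, (A i)ᴴ * (F X)⁻¹ * A i) := by
      rw [hcs, hFFX, Finset.sum_sub_distrib]
      abel
    rw [heq2]
    exact (p1.add p2).add p3
  have hG2 : (((1 - t : ℝ) : ℂ) • Q - ((t * η : ℝ) : ℂ) • F (F X)).PosSemidef := by
    have hsc : ((1 - t : ℝ) : ℂ) * ((lmin : ℝ) : ℂ) = ((t * η : ℝ) : ℂ) * ((c : ℝ) : ℂ) := by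
      have : (1 - t) * lmin = (t * η) * c := by nlinarith [hηval]
      exact_mod_cast congrArg Complex.ofReal this
    have e : ((1 - t : ℝ) : ℂ) • Q - ((t * η : ℝ) : ℂ) • F (F X)
        = ((1 - t : ℝ) : ℂ) • (Q - ((lmin : ℝ) : ℂ) • 1)
          + ((t * η : ℝ) : ℂ) • (((c : ℝ) : ℂ) • 1 - F (F X)) := by
      rw [smul_sub, smul_sub, smul_smul, smul_smul, hsc]
      abel
    rw [e]
    exact (psdSmul hQl (by linarith)).add (psdSmul h12 (mul_nonneg ht0.le hηnn))
  have final := h8.add hG2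
  have hFFtX : F (F ((t : ℂ) • X)) = Q + ∑ i, (A i)ᴴ * (F ((t : ℂ) • X))⁻¹ * A i := hF _
  have hgoal : F (F ((t : ℂ) • X)) - ((t * (1 + η) : ℝ) : ℂ) • F (F X)
      = (∑ i, (A i)ᴴ * (F ((t : ℂ) • X))⁻¹ * A i
          - ((t : ℝ) : ℂ) • ∑ i, (A i)ᴴ * (F X)⁻¹ * A i)
        + (((1 - t : ℝ) : ℂ) • Q - ((t * η : ℝ) : ℂ) • F (F X)) := by
    rw [hFFtX, hFFX]
    push_cast
    module
  rw [hgoal]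
  exact final
end

section
/- Define sequences by β₀ = λ_min(Q), α_n = λ_max(Q) + (∑_{i=1}^m λ_max(A_i* A_i))/β_n, β_{n+1} = λ_min(Q) + (∑_{i=1}^m λ_min(A_i* A_i))/α_n. Then (α_n) is nonincreasing and bounded below by λ_max(Q), and (β_n) is nondecreasing and bounded above by λ_min(Q) + (∑_{i=1}^m λ_min(A_i* A_i))/λ_max(Q); hence both sequences converge. -/
open scoped ComplexOrder
open Matrix Finset Filter

theorem stmt8 {n m : ℕ} (Q : Matrix (Fin n) (Fin n) ℂ) (hQ : Q.PosDef)
    (A : Fin m → Matrix (Fin n) (Fin n) ℂ)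
    (α β : ℕ → ℝ)
    (hβ0 : β 0 = ⨅ j, hQ.1.eigenvalues j)
    (hα : ∀ k, α k = (⨆ j, hQ.1.eigenvalues j) +
        (∑ i, ⨆ j, (Matrix.posSemidef_conjTranspose_mul_self (A i)).1.eigenvalues j) / β k)
    (hβ : ∀ k, β (k + 1) = (⨅ j, hQ.1.eigenvalues j) +
        (∑ i, ⨅ j, (Matrix.posSemidef_conjTranspose_mul_self (A i)).1.eigenvalues j) / α k) :
    Antitone α ∧ (∀ k, (⨆ j, hQ.1.eigenvalues j) ≤ α k) ∧
      Monotone β ∧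
      (∀ k, β k ≤ (⨅ j, hQ.1.eigenvalues j) +
        (∑ i, ⨅ j, (Matrix.posSemidef_conjTranspose_mul_self (A i)).1.eigenvalues j) /
          (⨆ j, hQ.1.eigenvalues j)) ∧
      (∃ a : ℝ, Tendsto α atTop (nhds a)) ∧ (∃ b : ℝ, Tendsto β atTop (nhds b)) := by
  rcases Nat.eq_zero_or_pos n with rfl | hn
  · -- degenerate case n = 0
    have hL : (⨅ j, hQ.1.eigenvalues j) = 0 := Real.iInf_of_isEmpty _
    have hM : (⨆ j, hQ.1.eigenvalues j) = 0 := Real.iSup_of_isEmpty _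
    have hS : (∑ i, ⨆ j,
        (Matrix.posSemidef_conjTranspose_mul_self (A i)).1.eigenvalues j) = 0 := by
      simp [Real.iSup_of_isEmpty]
    have hs : (∑ i, ⨅ j,
        (Matrix.posSemidef_conjTranspose_mul_self (A i)).1.eigenvalues j) = 0 := by
      simp [Real.iInf_of_isEmpty]
    have hα0 : ∀ k, α k = 0 := fun k => by rw [hα k, hM, hS]; simp
    have hβ0' : ∀ k, β k = 0 := by
      intro k
      cases k with
      | zero => rw [hβ0, hL]
      | succ k => rw [hβ k, hL, hs]; simp
    refine ⟨?_, ?_, ?_, ?_, ⟨0, ?_⟩, ⟨0, ?_⟩⟩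
    · intro a b _; rw [hα0 a, hα0 b]
    · intro k; rw [hα0 k, hM]
    · intro a b _; rw [hβ0' a, hβ0' b]
    · intro k; rw [hβ0' k, hL, hs, hM]; simp
    · have : α = fun _ => (0:ℝ) := funext hα0
      rw [this]; exact tendsto_const_nhds
    · have : β = fun _ => (0:ℝ) := funext hβ0'
      rw [this]; exact tendsto_const_nhds
  · haveI : Nonempty (Fin n) := Fin.pos_iff_nonempty.mp hn
    set L := ⨅ j, hQ.1.eigenvalues j with hLdef
    set M := ⨆ j, hQ.1.eigenvalues j with hMdef
    set S := ∑ i, ⨆ j,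
      (Matrix.posSemidef_conjTranspose_mul_self (A i)).1.eigenvalues j with hSdef
    set s := ∑ i, ⨅ j,
      (Matrix.posSemidef_conjTranspose_mul_self (A i)).1.eigenvalues j with hsdef
    obtain ⟨j0⟩ := (inferInstance : Nonempty (Fin n))
    have hLpos : 0 < L := by
      obtain ⟨i, hi⟩ := Finite.exists_min hQ.1.eigenvalues
      exact lt_of_lt_of_le (hQ.eigenvalues_pos i) (le_ciInf hi)
    have hLM : L ≤ M :=
      le_trans (ciInf_le (Set.finite_range _).bddBelow j0)
        (le_ciSup (Set.finite_range _).bddAbove j0)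
    have hMpos : 0 < M := hLpos.trans_le hLM
    have hSnn : 0 ≤ S :=
      Finset.sum_nonneg fun i _ =>
        le_ciSup_of_le (Set.finite_range _).bddAbove j0
          ((Matrix.posSemidef_conjTranspose_mul_self (A i)).eigenvalues_nonneg j0)
    have hsnn : 0 ≤ s :=
      Finset.sum_nonneg fun i _ =>
        le_ciInf fun j =>
          (Matrix.posSemidef_conjTranspose_mul_self (A i)).eigenvalues_nonneg j
    have hβpos : ∀ k, 0 < β k := by
      intro k
      induction k with
      | zero => rw [hβ0]; exact hLpos
      | succ k ih =>
        have hαk : 0 < α k := by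
          rw [hα k]; exact add_pos_of_pos_of_nonneg hMpos (div_nonneg hSnn ih.le)
        rw [hβ k]; exact add_pos_of_pos_of_nonneg hLpos (div_nonneg hsnn hαk.le)
    have hαpos : ∀ k, 0 < α k := fun k => by
      rw [hα k]; exact add_pos_of_pos_of_nonneg hMpos (div_nonneg hSnn (hβpos k).le)
    have hαgeM : ∀ k, M ≤ α k := fun k => by
      rw [hα k]; exact le_add_of_nonneg_right (div_nonneg hSnn (hβpos k).le)
    have hβstep : ∀ k, β k ≤ β (k + 1) := by
      intro k
      induction k with
      | zero => rw [hβ0, hβ 0]; exact le_add_of_nonneg_right (div_nonneg hsnn (hαpos 0).le)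
      | succ k ih =>
        have hαle : α (k + 1) ≤ α k := by
          rw [hα k, hα (k + 1)]
          exact add_le_add_right (div_le_div_of_nonneg_left hSnn (hβpos k) ih) M
        rw [hβ k, hβ (k + 1)]
        exact add_le_add_right (div_le_div_of_nonneg_left hsnn (hαpos (k + 1)) hαle) L
    have hβmono : Monotone β := monotone_nat_of_le_succ hβstep
    have hαanti : Antitone α := by
      intro a b hab
      rw [hα a, hα b]
      exact add_le_add_right (div_le_div_of_nonneg_left hSnn (hβpos a) (hβmono hab)) M
    have hβbd : ∀ k, β k ≤ L + s / M := by
      intro k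
      cases k with
      | zero => rw [hβ0]; exact le_add_of_nonneg_right (div_nonneg hsnn hMpos.le)
      | succ k =>
        rw [hβ k]
        exact add_le_add_right (div_le_div_of_nonneg_left hsnn hMpos (hαgeM k)) L
    refine ⟨hαanti, hαgeM, hβmono, hβbd, ⟨⨅ k, α k, ?_⟩, ⟨⨆ k, β k, ?_⟩⟩
    · exact tendsto_atTop_ciInf hαanti ⟨M, by rintro x ⟨k, rfl⟩; exact hαgeM k⟩
    · exact tendsto_atTop_ciSup hβmono ⟨L + s / M, by rintro x ⟨k, rfl⟩; exact hβbd k⟩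
end

section
/- Every Hermitian positive definite solution X of X - ∑_{i=1}^m A_i* X⁻¹ A_i = Q satisfies βI ≤ X ≤ αI, where α and β are the limits of the sequences β₀ = λ_min(Q), α_n = λ_max(Q) + (∑ λ_max(A_i* A_i))/β_n, β_{n+1} = λ_min(Q) + (∑ λ_min(A_i* A_i))/α_n; moreover λ_min(Q) ≤ β ≤ α. -/
open scoped ComplexOrder
open Matrix Finset Filter

namespace Stmt9Aux

variable {n : ℕ}

noncomputable def R (M : Matrix (Fin n) (Fin n) ℂ) (v : Fin n → ℂ) : ℝ :=
  (star v ⬝ᵥ M *ᵥ v).re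

noncomputable def N (v : Fin n → ℂ) : ℝ := (star v ⬝ᵥ v).re

lemma N_nonneg (v : Fin n → ℂ) : 0 ≤ N v := (Complex.le_def.mp (dotProduct_star_self_nonneg v)).1

lemma N_pos {v : Fin n → ℂ} (hv : v ≠ 0) : 0 < N v := by
  have h := dotProduct_star_self_pos_iff.mpr hv
  simpa [N, Complex.lt_def] using (Complex.lt_def.mp h).1

lemma R_nonneg {M : Matrix (Fin n) (Fin n) ℂ} (hM : M.PosSemidef) (v : Fin n → ℂ) :
    0 ≤ R M v := (Complex.le_def.mp (hM.dotProduct_mulVec_nonneg v)).1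

lemma R_pos {M : Matrix (Fin n) (Fin n) ℂ} (hM : M.PosDef) {v : Fin n → ℂ} (hv : v ≠ 0) :
    0 < R M v := by
  have := hM.re_dotProduct_pos hv
  simpa [R, RCLike.re_to_complex] using this

lemma conj_form {M : Matrix (Fin n) (Fin n) ℂ} (hM : M.IsHermitian) (v w : Fin n → ℂ) :
    (starRingEnd ℂ) (star v ⬝ᵥ M *ᵥ w) = star w ⬝ᵥ M *ᵥ v := by
  have h1 : star (star v ⬝ᵥ M *ᵥ w) = star (M *ᵥ w) ⬝ᵥ star (star v) := by
    rw [star_dotProduct_star]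
  rw [show (starRingEnd ℂ) (star v ⬝ᵥ M *ᵥ w) = star (star v ⬝ᵥ M *ᵥ w) from rfl, h1,
    star_star, star_mulVec, ← Matrix.dotProduct_mulVec, hM.eq]

lemma form_im {M : Matrix (Fin n) (Fin n) ℂ} (hM : M.IsHermitian) (v : Fin n → ℂ) :
    (star v ⬝ᵥ M *ᵥ v).im = 0 :=
  Complex.conj_eq_iff_im.mp (conj_form hM v v)

lemma R_sub_smul_one (M : Matrix (Fin n) (Fin n) ℂ) (c : ℝ) (v : Fin n → ℂ) :
    R (M - (c : ℂ) • 1) v = R M v - c * N v := by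
  unfold R N
  rw [Matrix.sub_mulVec, dotProduct_sub, Matrix.smul_mulVec, Matrix.one_mulVec,
    dotProduct_smul, smul_eq_mul]
  simp [Complex.re_ofReal_mul]

lemma R_smul_one_sub (M : Matrix (Fin n) (Fin n) ℂ) (c : ℝ) (v : Fin n → ℂ) :
    R ((c : ℂ) • 1 - M) v = c * N v - R M v := by
  unfold R N
  rw [Matrix.sub_mulVec, dotProduct_sub, Matrix.smul_mulVec, Matrix.one_mulVec,
    dotProduct_smul, smul_eq_mul]
  simp [Complex.re_ofReal_mul]

lemma psd_sub_smul_one {M : Matrix (Fin n) (Fin n) ℂ} (hM : M.IsHermitian) {c : ℝ}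
    (h : ∀ j, c ≤ hM.eigenvalues j) : (M - (c : ℂ) • 1).PosSemidef := by
  have hU : (hM.eigenvectorUnitary : Matrix (Fin n) (Fin n) ℂ) *
      star (hM.eigenvectorUnitary : Matrix (Fin n) (Fin n) ℂ) = 1 :=
    Matrix.mem_unitaryGroup_iff.mp hM.eigenvectorUnitary.2
  have key : M - (c : ℂ) • 1 =
      (hM.eigenvectorUnitary : Matrix (Fin n) (Fin n) ℂ) *
        (Matrix.diagonal (fun j => ((hM.eigenvalues j - c : ℝ) : ℂ))) *
        (hM.eigenvectorUnitary : Matrix (Fin n) (Fin n) ℂ)ᴴ := by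
    conv_lhs => rw [hM.spectral_theorem, Unitary.conjStarAlgAut_apply]
    rw [← star_eq_conjTranspose]
    have h1 : (c : ℂ) • (1 : Matrix (Fin n) (Fin n) ℂ) =
        (hM.eigenvectorUnitary : Matrix (Fin n) (Fin n) ℂ) * ((c : ℂ) • 1) *
          star (hM.eigenvectorUnitary : Matrix (Fin n) (Fin n) ℂ) := by
      rw [mul_smul_comm, smul_mul_assoc, mul_one, hU]
    rw [h1, ← Matrix.sub_mul, ← Matrix.mul_sub]
    congr 1
    rw [Matrix.smul_one_eq_diagonal, Matrix.diagonal_sub]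
    congr 1
    ext j
    simp
  rw [key]
  exact (Matrix.PosSemidef.diagonal (fun j => by
    simpa using Complex.zero_le_real.mpr (sub_nonneg.mpr (h j)))).mul_mul_conjTranspose_same _

lemma psd_smul_one_sub {M : Matrix (Fin n) (Fin n) ℂ} (hM : M.IsHermitian) {c : ℝ}
    (h : ∀ j, hM.eigenvalues j ≤ c) : ((c : ℂ) • 1 - M).PosSemidef := by
  have hU : (hM.eigenvectorUnitary : Matrix (Fin n) (Fin n) ℂ) *
      star (hM.eigenvectorUnitary : Matrix (Fin n) (Fin n) ℂ) = 1 :=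
    Matrix.mem_unitaryGroup_iff.mp hM.eigenvectorUnitary.2
  have key : (c : ℂ) • 1 - M =
      (hM.eigenvectorUnitary : Matrix (Fin n) (Fin n) ℂ) *
        (Matrix.diagonal (fun j => ((c - hM.eigenvalues j : ℝ) : ℂ))) *
        (hM.eigenvectorUnitary : Matrix (Fin n) (Fin n) ℂ)ᴴ := by
    conv_lhs => rw [hM.spectral_theorem, Unitary.conjStarAlgAut_apply]
    rw [← star_eq_conjTranspose]
    have h1 : (c : ℂ) • (1 : Matrix (Fin n) (Fin n) ℂ) =
        (hM.eigenvectorUnitary : Matrix (Fin n) (Fin n) ℂ) * ((c : ℂ) • 1) *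
          star (hM.eigenvectorUnitary : Matrix (Fin n) (Fin n) ℂ) := by
      rw [mul_smul_comm, smul_mul_assoc, mul_one, hU]
    rw [h1, ← Matrix.sub_mul, ← Matrix.mul_sub]
    congr 1
    rw [Matrix.smul_one_eq_diagonal, Matrix.diagonal_sub]
    congr 1
    ext j
    simp
  rw [key]
  exact (Matrix.PosSemidef.diagonal (fun j => by
    simpa using Complex.zero_le_real.mpr (sub_nonneg.mpr (h j)))).mul_mul_conjTranspose_same _

lemma le_R_of_psd {M : Matrix (Fin n) (Fin n) ℂ} {c : ℝ}
    (h : (M - (c : ℂ) • 1).PosSemidef) (v : Fin n → ℂ) : c * N v ≤ R M v := by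
  have h2 := R_nonneg h v
  rw [R_sub_smul_one] at h2
  linarith

lemma R_le_of_psd {M : Matrix (Fin n) (Fin n) ℂ} {c : ℝ}
    (h : ((c : ℂ) • 1 - M).PosSemidef) (v : Fin n → ℂ) : R M v ≤ c * N v := by
  have h2 := R_nonneg h v
  rw [R_smul_one_sub] at h2
  linarith

lemma R_conj (M A : Matrix (Fin n) (Fin n) ℂ) (v : Fin n → ℂ) :
    R (Aᴴ * M * A) v = R M (A *ᵥ v) := by
  unfold R
  rw [← Matrix.mulVec_mulVec, ← Matrix.mulVec_mulVec, Matrix.dotProduct_mulVec _ Aᴴ,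
    ← Matrix.star_mulVec]

lemma N_mulVec (A : Matrix (Fin n) (Fin n) ℂ) (v : Fin n → ℂ) :
    N (A *ᵥ v) = R (Aᴴ * A) v := by
  have := R_conj 1 A v
  simpa [N, R, Matrix.mul_one, Matrix.one_mulVec] using this.symm

lemma R_add_smul {M : Matrix (Fin n) (Fin n) ℂ} (hM : M.IsHermitian) (w v : Fin n → ℂ)
    (t : ℝ) :
    R M (w + (t : ℂ) • v) = R M w + 2 * t * (star w ⬝ᵥ M *ᵥ v).re + t ^ 2 * R M v := by
  have hc : star v ⬝ᵥ M *ᵥ w = (starRingEnd ℂ) (star w ⬝ᵥ M *ᵥ v) := (conj_form hM w v).symm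
  unfold R
  rw [Matrix.mulVec_add, Matrix.mulVec_smul, star_add, star_smul]
  simp only [add_dotProduct, dotProduct_add, smul_dotProduct, dotProduct_smul, smul_eq_mul,
    Complex.star_def, Complex.conj_ofReal, hc]
  simp [Complex.add_re, Complex.re_ofReal_mul, Complex.conj_re]
  ring

lemma sum_mulVec {k : ℕ} (f : Fin k → Matrix (Fin n) (Fin n) ℂ) (v : Fin n → ℂ) :
    (∑ i, f i) *ᵥ v = ∑ i, f i *ᵥ v := by
  ext j
  simp [Matrix.mulVec, dotProduct, Matrix.sum_apply, Finset.sum_apply, Finset.sum_mul]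
  rw [Finset.sum_comm]

lemma dotProduct_sum' {k : ℕ} (f : Fin k → Fin n → ℂ) (v : Fin n → ℂ) :
    v ⬝ᵥ (∑ i, f i) = ∑ i, v ⬝ᵥ f i := by
  simp [dotProduct, Finset.mul_sum, Finset.sum_apply]
  rw [Finset.sum_comm]

lemma R_sum {k : ℕ} (f : Fin k → Matrix (Fin n) (Fin n) ℂ) (v : Fin n → ℂ) :
    R (∑ i, f i) v = ∑ i, R (f i) v := by
  unfold R
  rw [sum_mulVec, dotProduct_sum', Complex.re_sum]

lemma R_sub (M M' : Matrix (Fin n) (Fin n) ℂ) (v : Fin n → ℂ) :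
    R (M - M') v = R M v - R M' v := by
  unfold R
  rw [Matrix.sub_mulVec, dotProduct_sub, Complex.sub_re]

section Inv

variable {X : Matrix (Fin n) (Fin n) ℂ}

lemma mulVec_inv_cancel (hX : X.PosDef) (v : Fin n → ℂ) : X *ᵥ (X⁻¹ *ᵥ v) = v := by
  rw [Matrix.mulVec_mulVec, Matrix.mul_nonsing_inv _ (isUnit_iff_ne_zero.mpr hX.det_pos.ne'),
    Matrix.one_mulVec]

lemma R_inv_eq (hX : X.PosDef) (v : Fin n → ℂ) : R X⁻¹ v = R X (X⁻¹ *ᵥ v) := by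
  unfold R
  rw [mulVec_inv_cancel hX v]
  rw [show star (X⁻¹ *ᵥ v) ⬝ᵥ v = star (star v ⬝ᵥ (X⁻¹ *ᵥ v)) from star_dotProduct _ _]
  simp

/-- upper bound on inverse form from lower bound on form -/
lemma R_inv_le (hX : X.PosDef) {c : ℝ} (hc : 0 < c) (h : ∀ v, c * N v ≤ R X v)
    (v : Fin n → ℂ) : R X⁻¹ v ≤ c⁻¹ * N v := by
  set w := X⁻¹ *ᵥ v with hwdef
  have hR : R X⁻¹ v = R X w := R_inv_eq hX v
  by_cases hw : w = 0
  · rw [hR, hw]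
    have h0 : R X (0 : Fin n → ℂ) = 0 := by simp [R]
    rw [h0]
    exact mul_nonneg (inv_nonneg.mpr hc.le) (N_nonneg v)
  · have hNw : 0 < N w := N_pos hw
    have hrw : (star v ⬝ᵥ w).re = R X w := by rw [← hR]; rfl
    set r := R X w with hrdef
    have hr_pos : 0 < r := lt_of_lt_of_le (mul_pos hc hNw) (h w)
    have key : ∀ t : ℝ, 0 ≤ N v + 2 * t * r + t ^ 2 * N w := by
      intro t
      have hq := R_add_smul (M := (1 : Matrix (Fin n) (Fin n) ℂ)) Matrix.isHermitian_one v w t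
      have hRN : ∀ u : Fin n → ℂ, R (1 : Matrix (Fin n) (Fin n) ℂ) u = N u := fun u => by
        unfold R N; rw [Matrix.one_mulVec]
      have hcross' : (star v ⬝ᵥ (1 : Matrix (Fin n) (Fin n) ℂ) *ᵥ w).re = r := by
        rw [Matrix.one_mulVec]; exact hrw
      have h0 : 0 ≤ R (1 : Matrix (Fin n) (Fin n) ℂ) (v + (t : ℂ) • w) :=
        R_nonneg Matrix.PosSemidef.one _
      rw [hq, hRN, hRN, hcross'] at h0
      exact h0
    have hCS : r ^ 2 ≤ N v * N w := by
      have h2 := key (-(r / N w))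
      have e : N v + 2 * (-(r / N w)) * r + (-(r / N w)) ^ 2 * N w = N v - r ^ 2 / N w := by
        field_simp
        ring
      rw [e, sub_nonneg] at h2
      exact (div_le_iff₀ hNw).mp h2
    have hcNw : c * N w ≤ r := h w
    have hNwle : N w ≤ N v / c ^ 2 := by
      have hsq : (c * N w) ^ 2 ≤ r ^ 2 :=
        pow_le_pow_left₀ (mul_nonneg hc.le hNw.le) hcNw 2
      rw [le_div_iff₀ (pow_pos hc 2)]
      have h5 : (N w * c ^ 2) * N w ≤ N v * N w := by nlinarith
      exact le_of_mul_le_mul_right h5 hNw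
    have hr2 : r ^ 2 ≤ (N v / c) ^ 2 := by
      have h6 : N v * N w ≤ N v * (N v / c ^ 2) :=
        mul_le_mul_of_nonneg_left hNwle (N_nonneg v)
      calc r ^ 2 ≤ N v * N w := hCS
        _ ≤ N v * (N v / c ^ 2) := h6
        _ = (N v / c) ^ 2 := by field_simp
    have hfin : r ≤ N v / c := by
      have h2 : Real.sqrt (r ^ 2) ≤ Real.sqrt ((N v / c) ^ 2) := Real.sqrt_le_sqrt hr2
      rwa [Real.sqrt_sq hr_pos.le, Real.sqrt_sq (div_nonneg (N_nonneg v) hc.le)] at h2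
    rw [hR]
    calc R X w = r := rfl
      _ ≤ N v / c := hfin
      _ = c⁻¹ * N v := by field_simp

/-- lower bound on inverse form from upper bound on form -/
lemma le_R_inv (hX : X.PosDef) {c : ℝ} (hc : 0 < c) (h : ∀ v, R X v ≤ c * N v)
    (v : Fin n → ℂ) : c⁻¹ * N v ≤ R X⁻¹ v := by
  by_cases hv : v = 0
  · simp [hv, R, N]
  · set w := X⁻¹ *ᵥ v with hwdef
    have hR : R X⁻¹ v = R X w := R_inv_eq hX v
    have hNv : 0 < N v := N_pos hv
    have hRXv : 0 < R X v := R_pos hX hv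
    have hXw : X *ᵥ w = v := mulVec_inv_cancel hX v
    have hcross : (star w ⬝ᵥ X *ᵥ v).re = N v := by
      rw [← conj_form hX.1 v w, Complex.conj_re, hXw]
      rfl
    have key : ∀ t : ℝ, 0 ≤ R X w + 2 * t * N v + t ^ 2 * R X v := by
      intro t
      have hq := R_add_smul hX.1 w v t
      rw [hcross] at hq
      rw [← hq]
      exact R_nonneg hX.posSemidef _
    have hq : N v ^ 2 / R X v ≤ R X w := by
      have h2 := key (-(N v / R X v))
      have e : R X w + 2 * (-(N v / R X v)) * N v + (-(N v / R X v)) ^ 2 * R X v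
          = R X w - N v ^ 2 / R X v := by
        field_simp
        ring
      rw [e, sub_nonneg] at h2
      exact h2
    have hfin : c⁻¹ * N v ≤ N v ^ 2 / R X v := by
      rw [le_div_iff₀ hRXv]
      have h1 : R X v ≤ c * N v := h v
      have h2 : c⁻¹ * N v * R X v ≤ c⁻¹ * N v * (c * N v) := by
        apply mul_le_mul_of_nonneg_left h1
        positivity
      calc c⁻¹ * N v * R X v ≤ c⁻¹ * N v * (c * N v) := h2
        _ = N v ^ 2 * (c⁻¹ * c) := by ring
        _ = N v ^ 2 := by rw [inv_mul_cancel₀ hc.ne']; ring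
    rw [hR]
    linarith

end Inv

end Stmt9Aux

open Stmt9Aux

theorem stmt9 {n m : ℕ} (Q : Matrix (Fin n) (Fin n) ℂ) (hQ : Q.PosDef)
    (A : Fin m → Matrix (Fin n) (Fin n) ℂ)
    (α β : ℕ → ℝ)
    (hβ0 : β 0 = ⨅ j, hQ.1.eigenvalues j)
    (hα : ∀ k, α k = (⨆ j, hQ.1.eigenvalues j) +
        (∑ i, ⨆ j, (Matrix.posSemidef_conjTranspose_mul_self (A i)).1.eigenvalues j) / β k)
    (hβ : ∀ k, β (k + 1) = (⨅ j, hQ.1.eigenvalues j) +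
        (∑ i, ⨅ j, (Matrix.posSemidef_conjTranspose_mul_self (A i)).1.eigenvalues j) / α k)
    (a b : ℝ)
    (ha : Tendsto α atTop (nhds a)) (hb : Tendsto β atTop (nhds b))
    (X : Matrix (Fin n) (Fin n) ℂ) (hX : X.PosDef)
    (heq : X - ∑ i, (A i)ᴴ * X⁻¹ * A i = Q) :
    (X - (b : ℂ) • (1 : Matrix (Fin n) (Fin n) ℂ)).PosSemidef ∧
      ((a : ℂ) • (1 : Matrix (Fin n) (Fin n) ℂ) - X).PosSemidef ∧
      (⨅ j, hQ.1.eigenvalues j) ≤ b ∧ b ≤ a := by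
  classical
  -- abbreviations
  set q : ℝ := ⨅ j, hQ.1.eigenvalues j with hq_def
  set Qmx : ℝ := ⨆ j, hQ.1.eigenvalues j with hQmx_def
  set smin : Fin m → ℝ :=
    fun i => ⨅ j, (Matrix.posSemidef_conjTranspose_mul_self (A i)).1.eigenvalues j with hsmin_def
  set smax : Fin m → ℝ :=
    fun i => ⨆ j, (Matrix.posSemidef_conjTranspose_mul_self (A i)).1.eigenvalues j with hsmax_def
  -- Hermitian facts
  have hermb : ∀ c : ℝ, ((c : ℂ) • (1 : Matrix (Fin n) (Fin n) ℂ)).IsHermitian := by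
    intro c
    unfold Matrix.IsHermitian
    rw [Matrix.conjTranspose_smul, Matrix.conjTranspose_one]
    congr 1
    simp [Complex.star_def, Complex.conj_ofReal]
  rcases Nat.eq_zero_or_pos n with hn | hn
  · -- degenerate case n = 0
    subst hn
    have hE : IsEmpty (Fin 0) := inferInstance
    have hq0 : q = 0 := by rw [hq_def]; exact Real.iInf_of_isEmpty _
    have hQmx0 : Qmx = 0 := by rw [hQmx_def]; exact Real.iSup_of_isEmpty _
    have hsmin0 : ∀ i, smin i = 0 := by
      intro i
      have := congrFun hsmin_def i
      rw [this]
      exact Real.iInf_of_isEmpty _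
    have hsmax0 : ∀ i, smax i = 0 := by
      intro i
      have := congrFun hsmax_def i
      rw [this]
      exact Real.iSup_of_isEmpty _
    have hβz : ∀ k, β k = 0 := by
      intro k
      cases k with
      | zero => rw [hβ0]; exact hq0
      | succ k =>
        rw [hβ k, hq0]
        simp [hsmin0]
    have hαz : ∀ k, α k = 0 := by
      intro k
      rw [hα k, hQmx0]
      simp [hsmax0]
    have hbz : b = 0 := by
      have : β = fun _ => 0 := funext hβz
      rw [this] at hb
      exact tendsto_nhds_unique hb tendsto_const_nhds
    have haz : a = 0 := by
      have : α = fun _ => 0 := funext hαz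
      rw [this] at ha
      exact tendsto_nhds_unique ha tendsto_const_nhds
    have psd0 : ∀ M : Matrix (Fin 0) (Fin 0) ℂ, M.PosSemidef := by
      intro M
      refine Matrix.PosSemidef.of_dotProduct_mulVec_nonneg ?_ ?_
      · unfold Matrix.IsHermitian
        ext i j
        exact isEmptyElim i
      · intro x
        have : star x ⬝ᵥ M *ᵥ x = 0 := by simp [dotProduct]
        rw [this]
    refine ⟨psd0 _, psd0 _, ?_, ?_⟩
    · rw [hbz, hq0]
    · rw [hbz, haz]
  · -- main case n > 0
    haveI : Nonempty (Fin n) := Fin.pos_iff_nonempty.mp hn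
    -- eigenvalue facts
    have hqpos : 0 < q := by
      obtain ⟨j, hj⟩ := exists_eq_ciInf_of_finite (f := hQ.1.eigenvalues)
      rw [hq_def, ← hj]
      exact hQ.eigenvalues_pos j
    have hqQ : q ≤ Qmx := by
      obtain ⟨j, hj⟩ := exists_eq_ciInf_of_finite (f := hQ.1.eigenvalues)
      rw [hq_def, hQmx_def, ← hj]
      exact le_ciSup (Finite.bddAbove_range _) j
    have hsmin_nonneg : ∀ i, 0 ≤ smin i := by
      intro i
      exact le_ciInf fun j =>
        (Matrix.posSemidef_conjTranspose_mul_self (A i)).eigenvalues_nonneg j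
    have hsmm : ∀ i, smin i ≤ smax i := by
      intro i
      have h1 : (⨅ j, (Matrix.posSemidef_conjTranspose_mul_self (A i)).1.eigenvalues j) ≤
          ⨆ j, (Matrix.posSemidef_conjTranspose_mul_self (A i)).1.eigenvalues j :=
        le_trans (ciInf_le (Finite.bddBelow_range _) (Classical.arbitrary (Fin n)))
          (le_ciSup (Finite.bddAbove_range _) (Classical.arbitrary (Fin n)))
      simpa only [hsmin_def, hsmax_def] using h1
    set Smin : ℝ := ∑ i, smin i with hSmin_def
    set Smax : ℝ := ∑ i, smax i with hSmax_def
    have hSmin_nonneg : 0 ≤ Smin := Finset.sum_nonneg fun i _ => hsmin_nonneg i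
    have hSmax_nonneg : 0 ≤ Smax :=
      le_trans hSmin_nonneg (Finset.sum_le_sum fun i _ => hsmm i)
    -- spectral bounds at quadratic-form level
    have hQlb : ∀ v, q * N v ≤ R Q v := fun v =>
      le_R_of_psd (psd_sub_smul_one hQ.1 fun j => ciInf_le (Finite.bddBelow_range _) j) v
    have hQub : ∀ v, R Q v ≤ Qmx * N v := fun v =>
      R_le_of_psd (psd_smul_one_sub hQ.1 fun j => le_ciSup (Finite.bddAbove_range _) j) v
    have hGlb : ∀ i v, smin i * N v ≤ R ((A i)ᴴ * A i) v := fun i v =>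
      le_R_of_psd (psd_sub_smul_one (Matrix.posSemidef_conjTranspose_mul_self (A i)).1
        fun j => ciInf_le (Finite.bddBelow_range _) j) v
    have hGub : ∀ i v, R ((A i)ᴴ * A i) v ≤ smax i * N v := fun i v =>
      R_le_of_psd (psd_smul_one_sub (Matrix.posSemidef_conjTranspose_mul_self (A i)).1
        fun j => le_ciSup (Finite.bddAbove_range _) j) v
    -- the form identity from the matrix equation
    have hform : ∀ v, R X v = R Q v + ∑ i, R X⁻¹ (A i *ᵥ v) := by
      intro v
      have h1 : R Q v = R X v - ∑ i, R ((A i)ᴴ * X⁻¹ * A i) v := by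
        rw [← heq, R_sub, R_sum]
      have h2 : ∀ i, R ((A i)ᴴ * X⁻¹ * A i) v = R X⁻¹ (A i *ᵥ v) := fun i => R_conj _ _ _
      rw [h1]
      rw [Finset.sum_congr rfl fun i _ => h2 i]
      ring
    -- step: lower bound implies upper bound with α-formula
    have hub_of_lb : ∀ k, 0 < β k → (∀ v, β k * N v ≤ R X v) →
        0 < α k ∧ ∀ v, R X v ≤ α k * N v := by
      intro k hβk hlb
      have hαk : 0 < α k := by
        rw [hα k]
        exact add_pos_of_pos_of_nonneg (lt_of_lt_of_le hqpos hqQ)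
          (div_nonneg hSmax_nonneg hβk.le)
      refine ⟨hαk, fun v => ?_⟩
      have hsum : ∑ i, R X⁻¹ (A i *ᵥ v) ≤ Smax / β k * N v := by
        have step : ∀ i, R X⁻¹ (A i *ᵥ v) ≤ (β k)⁻¹ * (smax i * N v) := by
          intro i
          refine le_trans (R_inv_le hX hβk hlb _) ?_
          apply mul_le_mul_of_nonneg_left _ (inv_nonneg.mpr hβk.le)
          rw [N_mulVec]
          exact hGub i v
        calc ∑ i, R X⁻¹ (A i *ᵥ v) ≤ ∑ i, (β k)⁻¹ * (smax i * N v) :=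
              Finset.sum_le_sum fun i _ => step i
          _ = ∑ i, smax i * ((β k)⁻¹ * N v) := Finset.sum_congr rfl fun i _ => by ring
          _ = Smax * ((β k)⁻¹ * N v) := by rw [← Finset.sum_mul]
          _ = Smax / β k * N v := by ring
      have := hform v
      have hQv := hQub v
      rw [hα k]
      rw [this]
      have : (Qmx + Smax / β k) * N v = Qmx * N v + Smax / β k * N v := by ring
      rw [this]
      exact add_le_add hQv hsum
    -- step: upper bound implies next lower bound with β-formula
    have hlb_of_ub : ∀ k, 0 < α k → (∀ v, R X v ≤ α k * N v) →
        0 < β (k + 1) ∧ ∀ v, β (k + 1) * N v ≤ R X v := by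
      intro k hαk hub
      have hβk1 : 0 < β (k + 1) := by
        rw [hβ k]
        exact add_pos_of_pos_of_nonneg hqpos (div_nonneg hSmin_nonneg hαk.le)
      refine ⟨hβk1, fun v => ?_⟩
      have hsum : Smin / α k * N v ≤ ∑ i, R X⁻¹ (A i *ᵥ v) := by
        have step : ∀ i, (α k)⁻¹ * (smin i * N v) ≤ R X⁻¹ (A i *ᵥ v) := by
          intro i
          refine le_trans ?_ (le_R_inv hX hαk hub _)
          apply mul_le_mul_of_nonneg_left _ (inv_nonneg.mpr hαk.le)
          rw [N_mulVec]
          exact hGlb i v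
        calc Smin / α k * N v = ∑ i, smin i * ((α k)⁻¹ * N v) := by
              rw [← Finset.sum_mul]; ring
          _ = ∑ i, (α k)⁻¹ * (smin i * N v) := Finset.sum_congr rfl fun i _ => by ring
          _ ≤ ∑ i, R X⁻¹ (A i *ᵥ v) := Finset.sum_le_sum fun i _ => step i
      have hQv := hQlb v
      rw [hβ k, hform v]
      have : (q + Smin / α k) * N v = q * N v + Smin / α k * N v := by ring
      rw [this]
      exact add_le_add hQv hsum
    -- the main induction
    have main : ∀ k, 0 < β k ∧ ∀ v, β k * N v ≤ R X v := by
      intro k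
      induction k with
      | zero =>
        refine ⟨by rw [hβ0]; exact hqpos, fun v => ?_⟩
        rw [hβ0, hform v]
        have hnn : 0 ≤ ∑ i, R X⁻¹ (A i *ᵥ v) :=
          Finset.sum_nonneg fun i _ => R_nonneg hX.posSemidef.inv _
        have := hQlb v
        linarith
      | succ k ih =>
        obtain ⟨hαk, hub⟩ := hub_of_lb k ih.1 ih.2
        exact hlb_of_ub k hαk hub
    have hupper : ∀ k, 0 < α k ∧ ∀ v, R X v ≤ α k * N v := fun k =>
      hub_of_lb k (main k).1 (main k).2
    -- conclusions
    have hb_lb : ∀ v, b * N v ≤ R X v := by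
      intro v
      have ht : Tendsto (fun k => β k * N v) atTop (nhds (b * N v)) := hb.mul_const _
      exact le_of_tendsto' ht fun k => (main k).2 v
    have ha_ub : ∀ v, R X v ≤ a * N v := by
      intro v
      have ht : Tendsto (fun k => α k * N v) atTop (nhds (a * N v)) := ha.mul_const _
      exact ge_of_tendsto' ht fun k => (hupper k).2 v
    refine ⟨?_, ?_, ?_, ?_⟩
    · -- X - b•1 PSD
      refine Matrix.PosSemidef.of_dotProduct_mulVec_nonneg (hX.1.sub (hermb b)) fun x => ?_
      rw [Complex.le_def]
      constructor
      · have : 0 ≤ R (X - (b : ℂ) • 1) x := by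
          rw [R_sub_smul_one]
          linarith [hb_lb x]
        simpa [R] using this
      · exact (form_im (hX.1.sub (hermb b)) x).symm
    · -- a•1 - X PSD
      refine Matrix.PosSemidef.of_dotProduct_mulVec_nonneg ((hermb a).sub hX.1) fun x => ?_
      rw [Complex.le_def]
      constructor
      · have : 0 ≤ R ((a : ℂ) • 1 - X) x := by
          rw [R_smul_one_sub]
          linarith [ha_ub x]
        simpa [R] using this
      · exact (form_im ((hermb a).sub hX.1) x).symm
    · -- q ≤ b
      have hqβ : ∀ k, q ≤ β k := by
        intro k
        cases k with
        | zero => rw [hβ0]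
        | succ k =>
          rw [hβ k]
          exact le_add_of_nonneg_right (div_nonneg hSmin_nonneg (hupper k).1.le)
      exact ge_of_tendsto' hb hqβ
    · -- b ≤ a
      have hv0 : (fun _ : Fin n => (1 : ℂ)) ≠ 0 := by
        intro hcontra
        have := congrFun hcontra ⟨0, hn⟩
        simp at this
      have hN0 : 0 < N (fun _ : Fin n => (1 : ℂ)) := N_pos hv0
      have hβα : ∀ k, β k ≤ α k := by
        intro k
        have h1 := (main k).2 (fun _ => 1)
        have h2 := (hupper k).2 (fun _ => 1)
        have h3 : β k * N (fun _ : Fin n => (1 : ℂ)) ≤ α k * N (fun _ : Fin n => (1 : ℂ)) :=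
          le_trans h1 h2
        exact le_of_mul_le_mul_right h3 hN0
      exact le_of_tendsto_of_tendsto' hb ha hβα
end

section
/- Let X be Hermitian positive definite and ΔX Hermitian with X + ΔX ≥ (1/ν)X > 0 for some ν > 0. Then for any n×n complex matrix A, ‖X^{-1/2} A* ((X+ΔX)⁻¹ - X⁻¹) A X^{-1/2}‖ ≤ (‖X^{-1/2} ΔX X^{-1/2}‖ + ν‖X^{-1/2} ΔX X^{-1/2}‖²) · ‖X^{-1/2} A X^{-1/2}‖², where ‖·‖ is the spectral norm. -/
open scoped ComplexOrder
open Matrix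
open scoped Matrix.Norms.L2Operator

/-- The positive semidefinite square root of a positive semidefinite matrix
(the definition `Matrix.PosSemidef.sqrt` of the older Mathlib, since removed). -/
noncomputable def Matrix.PosSemidef.sqrt {n : Type*} {𝕜 : Type*} [Fintype n] [DecidableEq n]
    [RCLike 𝕜] {A : Matrix n n 𝕜} (hA : A.PosSemidef) : Matrix n n 𝕜 :=
  hA.1.eigenvectorUnitary.1 * diagonal ((↑) ∘ (√·) ∘ hA.1.eigenvalues) *
  (star hA.1.eigenvectorUnitary : Matrix n n 𝕜)

lemma aux_norm_inv_le {n : ℕ} {P : Matrix (Fin n) (Fin n) ℂ} {ν : ℝ} (hν : 0 < ν)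
    (hPdet : IsUnit P.det)
    (hQ : (P - ((ν⁻¹ : ℝ) : ℂ) • 1).PosSemidef) :
    ‖P⁻¹‖ ≤ ν := by
  rw [Matrix.l2_opNorm_def]
  refine ContinuousLinearMap.opNorm_le_bound _ hν.le fun y => ?_
  have hck : ((LinearEquiv.trans Matrix.toEuclideanLin
      LinearMap.toContinuousLinearMap) P⁻¹) y = Matrix.toEuclideanLin P⁻¹ y := rfl
  rw [hck]
  set v : EuclideanSpace ℂ (Fin n) := Matrix.toEuclideanLin P⁻¹ y with hv
  have hPv : Matrix.toEuclideanLin P v = y := by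
    rw [hv]
    simp [Matrix.toEuclideanLin_apply, Matrix.mulVec_mulVec, Matrix.mul_nonsing_inv _ hPdet]
  -- quadratic bound
  have key : ν⁻¹ * ‖v‖ ^ 2 ≤ ‖v‖ * ‖y‖ := by
    set x : Fin n → ℂ := WithLp.equiv 2 _ v with hx
    have h0 := (Matrix.posSemidef_iff_dotProduct_mulVec.mp hQ).2 x
    have h1 : ((ν⁻¹ : ℝ) : ℂ) * (star x ⬝ᵥ x) ≤ star x ⬝ᵥ (P *ᵥ x) := by
      rw [Matrix.sub_mulVec, dotProduct_sub, Matrix.smul_mulVec,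
        Matrix.one_mulVec, dotProduct_smul, smul_eq_mul, sub_nonneg] at h0
      exact h0
    have hw : star x ⬝ᵥ x = ((‖v‖ ^ 2 : ℝ) : ℂ) := by
      have hxi : star x ⬝ᵥ x = (inner ℂ v v : ℂ) := by
        rw [hx, EuclideanSpace.inner_eq_star_dotProduct, dotProduct_comm]; rfl
      rw [hxi, inner_self_eq_norm_sq_to_K]
      norm_cast
    have h2 : ν⁻¹ * ‖v‖ ^ 2 ≤ (star x ⬝ᵥ (P *ᵥ x)).re := by
      rw [hw, ← Complex.ofReal_mul] at h1
      rw [Complex.le_def] at h1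
      simpa [← Complex.ofReal_pow] using h1.1
    have h3 : (star x ⬝ᵥ (P *ᵥ x)).re ≤ ‖v‖ * ‖y‖ := by
      have hinner : star x ⬝ᵥ (P *ᵥ x) = inner ℂ v (Matrix.toEuclideanLin P v) := by
        rw [hx, EuclideanSpace.inner_eq_star_dotProduct, dotProduct_comm]; rfl
      rw [hinner, hPv]
      calc (inner ℂ v y : ℂ).re ≤ ‖(inner ℂ v y : ℂ)‖ := Complex.re_le_norm _
        _ ≤ ‖v‖ * ‖y‖ := norm_inner_le_norm v y
    linarith
  rcases (norm_nonneg v).eq_or_lt with h0 | h0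
  · rw [← h0]; positivity
  · have h4 := mul_le_mul_of_nonneg_left key hν.le
    rw [← mul_assoc, mul_inv_cancel₀ hν.ne', one_mul] at h4
    nlinarith [norm_nonneg y]

theorem stmt12 {n : ℕ} (X ΔX : Matrix (Fin n) (Fin n) ℂ)
    (hX : X.PosDef) (hΔX : ΔX.IsHermitian)
    (ν : ℝ) (hν : 0 < ν)
    (h : (X + ΔX - ((ν⁻¹ : ℝ) : ℂ) • X).PosSemidef)
    (A : Matrix (Fin n) (Fin n) ℂ) :
    ‖(hX.posSemidef.sqrt)⁻¹ * Aᴴ * ((X + ΔX)⁻¹ - X⁻¹) * A * (hX.posSemidef.sqrt)⁻¹‖ ≤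
      (‖(hX.posSemidef.sqrt)⁻¹ * ΔX * (hX.posSemidef.sqrt)⁻¹‖ +
        ν * ‖(hX.posSemidef.sqrt)⁻¹ * ΔX * (hX.posSemidef.sqrt)⁻¹‖ ^ 2) *
      ‖(hX.posSemidef.sqrt)⁻¹ * A * (hX.posSemidef.sqrt)⁻¹‖ ^ 2 := by
  set S := hX.posSemidef.sqrt with hSdef
  have hS : S.PosSemidef := by
    rw [hSdef]
    unfold Matrix.PosSemidef.sqrt
    rw [Matrix.star_eq_conjTranspose]
    refine Matrix.PosSemidef.mul_mul_conjTranspose_same ?_ _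
    rw [posSemidef_diagonal_iff]
    intro i
    simp [Real.sqrt_nonneg]
  have hSS : S * S = X := by
    rw [hSdef]
    unfold Matrix.PosSemidef.sqrt
    conv_rhs => rw [hX.posSemidef.1.spectral_theorem, Unitary.conjStarAlgAut_apply]
    have hU := Unitary.star_mul_self_of_mem hX.posSemidef.1.eigenvectorUnitary.2
    simp only [Matrix.mul_assoc]
    rw [← Matrix.mul_assoc (star _ : Matrix (Fin n) (Fin n) ℂ), hU, Matrix.one_mul,
      ← Matrix.mul_assoc (diagonal _), diagonal_mul_diagonal]
    congr 3
    funext i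
    simp only [Function.comp_apply]
    exact_mod_cast Real.mul_self_sqrt (hX.posSemidef.eigenvalues_nonneg i)
  have hSdet : IsUnit S.det := by
    have hd : S.det * S.det = X.det := by rw [← Matrix.det_mul, hSS]
    have hXdet : IsUnit X.det := (Matrix.isUnit_iff_isUnit_det X).mp hX.isUnit
    rw [← hd] at hXdet
    exact isUnit_of_mul_isUnit_left hXdet
  have hSH : Sᴴ = S := hS.isHermitian
  have hSiH : (S⁻¹)ᴴ = S⁻¹ := by rw [Matrix.conjTranspose_nonsing_inv, hSH]
  have hS1 : S⁻¹ * S = 1 := Matrix.nonsing_inv_mul S hSdet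
  have hS2 : S * S⁻¹ = 1 := Matrix.mul_nonsing_inv S hSdet
  set E := S⁻¹ * ΔX * S⁻¹ with hEdef
  set B := S⁻¹ * A * S⁻¹ with hBdef
  set P : Matrix (Fin n) (Fin n) ℂ := 1 + E with hPdef
  -- S⁻¹ X S⁻¹ = 1
  have hXS : S⁻¹ * X * S⁻¹ = 1 := by
    rw [← hSS, ← Matrix.mul_assoc, hS1, one_mul, hS2]
  -- conjugated hypothesis
  have hQ : (P - ((ν⁻¹ : ℝ) : ℂ) • 1).PosSemidef := by
    have := h.conjTranspose_mul_mul_same S⁻¹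
    rw [hSiH] at this
    convert this using 1
    rw [hPdef, hEdef]
    rw [Matrix.mul_sub, Matrix.sub_mul, Matrix.mul_add, Matrix.add_mul, hXS,
      Matrix.mul_smul, Matrix.smul_mul, hXS]
  -- P is invertible
  have hPdet : IsUnit P.det := by
    have hc : (((ν⁻¹ : ℝ) : ℂ) • (1 : Matrix (Fin n) (Fin n) ℂ)).PosDef := by
      rw [Matrix.smul_one_eq_diagonal]
      exact Matrix.PosDef.diagonal fun i => by
        simpa using Complex.zero_lt_real.mpr (inv_pos.mpr hν)
    have hP : P.PosDef := by
      have := Matrix.PosDef.posSemidef_add hQ hc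
      simpa using this
    exact (Matrix.isUnit_iff_isUnit_det P).mp hP.isUnit
  have hP1 : P⁻¹ * P = 1 := Matrix.nonsing_inv_mul P hPdet
  -- main identity: LHS matrix equals Bᴴ * (P⁻¹ - 1) * B
  have hXinv : X⁻¹ = S⁻¹ * S⁻¹ := by rw [← hSS, Matrix.mul_inv_rev]
  have hXDX : X + ΔX = S * P * S := by
    rw [hPdef, hEdef, Matrix.mul_add, Matrix.add_mul, mul_one, hSS,
      ← Matrix.mul_assoc, ← Matrix.mul_assoc, hS2, one_mul, Matrix.mul_assoc, hS1, mul_one]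
  have hXDXinv : (X + ΔX)⁻¹ = S⁻¹ * P⁻¹ * S⁻¹ := by
    rw [hXDX, Matrix.mul_inv_rev, Matrix.mul_inv_rev, ← Matrix.mul_assoc]
  have hmain : S⁻¹ * Aᴴ * ((X + ΔX)⁻¹ - X⁻¹) * A * S⁻¹ = Bᴴ * (P⁻¹ - 1) * B := by
    rw [hBdef, Matrix.conjTranspose_mul, Matrix.conjTranspose_mul, hSiH,
      hXDXinv, hXinv]
    simp only [Matrix.mul_sub, Matrix.sub_mul, Matrix.mul_one, Matrix.one_mul,
      Matrix.mul_assoc]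
  -- norm bound on middle factor
  have hPinv : ‖P⁻¹‖ ≤ ν := aux_norm_inv_le hν hPdet hQ
  have hmid : ‖P⁻¹ - 1‖ ≤ ‖E‖ + ν * ‖E‖ ^ 2 := by
    have hiden : P⁻¹ - 1 = P⁻¹ * E * E - E := by
      have hPE : P⁻¹ * E = 1 - P⁻¹ := by
        have h' : P⁻¹ * (1 + E) = 1 := by rw [← hPdef]; exact hP1
        rw [mul_add, mul_one] at h'
        exact eq_sub_of_add_eq' h'
      rw [hPE, Matrix.sub_mul, one_mul, hPE]
      abel
    rw [hiden]
    calc ‖P⁻¹ * E * E - E‖ ≤ ‖P⁻¹ * E * E‖ + ‖E‖ := norm_sub_le _ _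
      _ ≤ ‖P⁻¹‖ * ‖E‖ * ‖E‖ + ‖E‖ := by
          gcongr
          calc ‖P⁻¹ * E * E‖ ≤ ‖P⁻¹ * E‖ * ‖E‖ := norm_mul_le _ _
            _ ≤ ‖P⁻¹‖ * ‖E‖ * ‖E‖ := by gcongr; exact norm_mul_le _ _
      _ ≤ ν * ‖E‖ * ‖E‖ + ‖E‖ := by gcongr
      _ = ‖E‖ + ν * ‖E‖ ^ 2 := by ring
  -- final computation
  rw [hmain]
  have hBH : ‖Bᴴ‖ = ‖B‖ := Matrix.l2_opNorm_conjTranspose B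
  calc ‖Bᴴ * (P⁻¹ - 1) * B‖ ≤ ‖Bᴴ * (P⁻¹ - 1)‖ * ‖B‖ := norm_mul_le _ _
    _ ≤ ‖Bᴴ‖ * ‖P⁻¹ - 1‖ * ‖B‖ := by gcongr; exact norm_mul_le _ _
    _ = ‖P⁻¹ - 1‖ * ‖B‖ ^ 2 := by rw [hBH]; ring
    _ ≤ (‖E‖ + ν * ‖E‖ ^ 2) * ‖B‖ ^ 2 := by gcongr
end

section
/- Let X be Hermitian positive definite and ΔX Hermitian such that X + ΔX ≥ (1/ν)I > 0 for some ν > 0. Then for n×n complex matrices A_1,...,A_m, ‖∑_{i=1}^m A_i*((X+ΔX)⁻¹ - X⁻¹)A_i‖ ≤ (‖ΔX‖ + ν‖ΔX‖²) ∑_{i=1}^m ‖X⁻¹A_i‖², where ‖·‖ is the spectral norm. -/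
set_option maxHeartbeats 1000000


open scoped ComplexOrder
open Matrix Finset
open scoped Matrix.Norms.L2Operator

theorem stmt13 {n m : ℕ} (X ΔX : Matrix (Fin n) (Fin n) ℂ)
    (hX : X.PosDef) (hΔX : ΔX.IsHermitian)
    (ν : ℝ) (hν : 0 < ν)
    (h : (X + ΔX - ((ν⁻¹ : ℝ) : ℂ) • (1 : Matrix (Fin n) (Fin n) ℂ)).PosSemidef)
    (A : Fin m → Matrix (Fin n) (Fin n) ℂ) :
    ‖∑ i, (A i)ᴴ * ((X + ΔX)⁻¹ - X⁻¹) * A i‖ ≤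
      (‖ΔX‖ + ν * ‖ΔX‖ ^ 2) * ∑ i, ‖X⁻¹ * A i‖ ^ 2 := by
  classical
  set Y := X + ΔX with hYdef
  have hc : (0:ℝ) < ν⁻¹ := inv_pos.mpr hν
  -- the scalar matrix is positive definite
  have hcI : (((ν⁻¹ : ℝ) : ℂ) • (1 : Matrix (Fin n) (Fin n) ℂ)).PosDef := by
    refine Matrix.PosDef.of_dotProduct_mulVec_pos ?_ fun x hx => ?_
    · unfold Matrix.IsHermitian
      rw [conjTranspose_smul, conjTranspose_one]
      congr 1
      simp [Complex.conj_ofReal]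
    · rw [smul_mulVec, one_mulVec, dotProduct_smul]
      have h1 : (0:ℂ) < ((ν⁻¹ : ℝ) : ℂ) := by
        rw [Complex.zero_lt_real]; exact hc
      have h2 : (0:ℂ) < star x ⬝ᵥ x := dotProduct_star_self_pos_iff.mpr hx
      exact mul_pos h1 h2
  have hY : Y.PosDef := by
    have := Matrix.PosDef.posSemidef_add h hcI
    simpa using this
  have hYunit : IsUnit Y := hY.isUnit
  have hXunit : IsUnit X := hX.isUnit
  -- the resolvent identities
  have h1 : Y⁻¹ - X⁻¹ = -(Y⁻¹ * ΔX * X⁻¹) := by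
    rw [Matrix.inv_sub_inv (iff_of_true hYunit hXunit)]
    have : X - Y = -ΔX := by rw [hYdef]; abel
    rw [this, Matrix.mul_neg, Matrix.neg_mul]
  have h2 : Y⁻¹ = X⁻¹ - X⁻¹ * ΔX * Y⁻¹ := by
    have h3 : X⁻¹ - Y⁻¹ = X⁻¹ * ΔX * Y⁻¹ := by
      rw [Matrix.inv_sub_inv (iff_of_true hXunit hYunit)]
      have : Y - X = ΔX := by rw [hYdef]; abel
      rw [this]
    rw [← h3]; abel
  have key : Y⁻¹ - X⁻¹ = -(X⁻¹ * ΔX * X⁻¹) + X⁻¹ * ΔX * Y⁻¹ * ΔX * X⁻¹ := by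
    rw [h1]
    conv_lhs => rw [h2]
    noncomm_ring
  -- norm bound on Y⁻¹
  have hYinv : ‖Y⁻¹‖ ≤ ν := by
    rw [Matrix.cstar_norm_def]
    refine ContinuousLinearMap.opNorm_le_bound _ hν.le fun x => ?_
    set y : EuclideanSpace ℂ (Fin n) := toEuclideanCLM (𝕜 := ℂ) Y⁻¹ x with hy
    set u : Fin n → ℂ := WithLp.equiv _ _ x with hu
    set v : Fin n → ℂ := WithLp.equiv _ _ y with hv
    have hvu : v = Y⁻¹ *ᵥ u := by
      rw [hv, hy]; rfl
    have hYv : Y *ᵥ v = u := by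
      rw [hvu, mulVec_mulVec, Matrix.mul_nonsing_inv _ (Matrix.isUnit_iff_isUnit_det _ |>.mp hYunit), one_mulVec]
    -- positivity gives the quadratic inequality
    have hq := h.dotProduct_mulVec_nonneg v
    rw [sub_mulVec, dotProduct_sub, hYv, smul_mulVec, one_mulVec, dotProduct_smul] at hq
    have hre : ν⁻¹ * (star v ⬝ᵥ v).re ≤ (star v ⬝ᵥ u).re := by
      have := (Complex.le_def.mp hq).1
      simpa [Complex.sub_re, Complex.mul_re, Complex.ofReal_re, Complex.ofReal_im] using this
    have hinner1 : (star v ⬝ᵥ v).re = ‖y‖ ^ 2 := by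
      have : (inner ℂ y y : ℂ) = star v ⬝ᵥ v := (EuclideanSpace.inner_eq_star_dotProduct y y).trans (dotProduct_comm _ _)
      have h4 := inner_self_eq_norm_sq (𝕜 := ℂ) y
      rw [this] at h4
      simpa using h4
    have hinner2 : (star v ⬝ᵥ u).re ≤ ‖y‖ * ‖x‖ := by
      have : (inner ℂ y x : ℂ) = star v ⬝ᵥ u := (EuclideanSpace.inner_eq_star_dotProduct y x).trans (dotProduct_comm _ _)
      have h4 := re_inner_le_norm (𝕜 := ℂ) y x
      rw [this] at h4
      simpa using h4
    have hfin : ν⁻¹ * ‖y‖ ^ 2 ≤ ‖y‖ * ‖x‖ := by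
      rw [← hinner1]; exact le_trans hre hinner2
    rcases eq_or_lt_of_le (norm_nonneg y) with h0 | h0
    · rw [← h0]; positivity
    · rw [← mul_le_mul_iff_right₀ h0]
      calc ‖y‖ * ‖y‖ = ν * (ν⁻¹ * ‖y‖ ^ 2) := by field_simp
        _ ≤ ν * (‖y‖ * ‖x‖) := by
            exact mul_le_mul_of_nonneg_left hfin hν.le
        _ = ‖y‖ * (ν * ‖x‖) := by ring
  -- per-term estimate
  have hterm : ∀ i, ‖(A i)ᴴ * (Y⁻¹ - X⁻¹) * A i‖ ≤
      (‖ΔX‖ + ν * ‖ΔX‖ ^ 2) * ‖X⁻¹ * A i‖ ^ 2 := by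
    intro i
    obtain ⟨B, hB⟩ : ∃ B, B = X⁻¹ * A i := ⟨_, rfl⟩
    rw [← hB]
    have hBH : Bᴴ = (A i)ᴴ * X⁻¹ := by
      rw [hB, conjTranspose_mul, hX.isHermitian.inv.eq]
    have expand : (A i)ᴴ * (Y⁻¹ - X⁻¹) * A i =
        -(Bᴴ * ΔX * B) + Bᴴ * ΔX * Y⁻¹ * ΔX * B := by
      rw [key, hBH, hB]
      noncomm_ring
    rw [expand]
    have nB : ‖Bᴴ‖ = ‖B‖ := Matrix.l2_opNorm_conjTranspose B
    have e1 : ‖Bᴴ * ΔX * B‖ ≤ ‖B‖ * ‖ΔX‖ * ‖B‖ := by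
      calc ‖Bᴴ * ΔX * B‖ ≤ ‖Bᴴ * ΔX‖ * ‖B‖ := Matrix.l2_opNorm_mul _ _
        _ ≤ ‖Bᴴ‖ * ‖ΔX‖ * ‖B‖ :=
          mul_le_mul_of_nonneg_right (Matrix.l2_opNorm_mul _ _) (norm_nonneg _)
        _ = ‖B‖ * ‖ΔX‖ * ‖B‖ := by rw [nB]
    have e2 : ‖Bᴴ * ΔX * Y⁻¹ * ΔX * B‖ ≤ ‖B‖ * ‖ΔX‖ * ν * ‖ΔX‖ * ‖B‖ := by
      have s1 : ‖Bᴴ * ΔX * Y⁻¹‖ ≤ ‖B‖ * ‖ΔX‖ * ν := by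
        calc ‖Bᴴ * ΔX * Y⁻¹‖ ≤ ‖Bᴴ * ΔX‖ * ‖Y⁻¹‖ := Matrix.l2_opNorm_mul _ _
          _ ≤ (‖Bᴴ‖ * ‖ΔX‖) * ‖Y⁻¹‖ :=
            mul_le_mul_of_nonneg_right (Matrix.l2_opNorm_mul _ _) (norm_nonneg _)
          _ ≤ (‖Bᴴ‖ * ‖ΔX‖) * ν :=
            mul_le_mul_of_nonneg_left hYinv (by positivity)
          _ = ‖B‖ * ‖ΔX‖ * ν := by rw [nB]
      calc ‖Bᴴ * ΔX * Y⁻¹ * ΔX * B‖ ≤ ‖Bᴴ * ΔX * Y⁻¹ * ΔX‖ * ‖B‖ := Matrix.l2_opNorm_mul _ _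
        _ ≤ (‖Bᴴ * ΔX * Y⁻¹‖ * ‖ΔX‖) * ‖B‖ :=
          mul_le_mul_of_nonneg_right (Matrix.l2_opNorm_mul _ _) (norm_nonneg _)
        _ ≤ (‖B‖ * ‖ΔX‖ * ν * ‖ΔX‖) * ‖B‖ :=
          mul_le_mul_of_nonneg_right (mul_le_mul_of_nonneg_right s1 (norm_nonneg _))
            (norm_nonneg _)
        _ = ‖B‖ * ‖ΔX‖ * ν * ‖ΔX‖ * ‖B‖ := by ring
    calc ‖-(Bᴴ * ΔX * B) + Bᴴ * ΔX * Y⁻¹ * ΔX * B‖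
        ≤ ‖-(Bᴴ * ΔX * B)‖ + ‖Bᴴ * ΔX * Y⁻¹ * ΔX * B‖ := norm_add_le _ _
      _ = ‖Bᴴ * ΔX * B‖ + ‖Bᴴ * ΔX * Y⁻¹ * ΔX * B‖ := by rw [norm_neg]
      _ ≤ (‖B‖ * ‖ΔX‖ * ‖B‖) + (‖B‖ * ‖ΔX‖ * ν * ‖ΔX‖ * ‖B‖) := add_le_add e1 e2
      _ = (‖ΔX‖ + ν * ‖ΔX‖ ^ 2) * ‖B‖ ^ 2 := by ring
  calc ‖∑ i, (A i)ᴴ * (Y⁻¹ - X⁻¹) * A i‖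
      ≤ ∑ i, ‖(A i)ᴴ * (Y⁻¹ - X⁻¹) * A i‖ := norm_sum_le _ _
    _ ≤ ∑ i, (‖ΔX‖ + ν * ‖ΔX‖ ^ 2) * ‖X⁻¹ * A i‖ ^ 2 := Finset.sum_le_sum fun i _ => hterm i
    _ = (‖ΔX‖ + ν * ‖ΔX‖ ^ 2) * ∑ i, ‖X⁻¹ * A i‖ ^ 2 := by rw [Finset.mul_sum]
end

section
/- Let X be the unique Hermitian positive definite solution of X - ∑_{i=1}^m A_i* X⁻¹ A_i = Q and suppose ‖X⁻¹‖ ≤ 1/β with ∑_{i=1}^m ‖A_i‖² < β². If ΔX is a Hermitian matrix satisfying ΔX + ∑_{i=1}^m (A_i* X⁻¹) ΔX (X⁻¹ A_i) = ∑_{i=1}^m [dA_i* (X⁻¹ A_i) + (A_i* X⁻¹) dA_i] for given matrices dA_i, then ‖ΔX‖ ≤ 2β ∑_{i=1}^m ‖A_i‖ ‖dA_i‖ / (β² - ∑_{i=1}^m ‖A_i‖²). -/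
open scoped ComplexOrder
open Matrix Finset
open scoped Matrix.Norms.L2Operator

set_option maxHeartbeats 1000000 in
theorem stmt15 {n m : ℕ} (Q : Matrix (Fin n) (Fin n) ℂ) (hQ : Q.PosDef)
    (A dA : Fin m → Matrix (Fin n) (Fin n) ℂ)
    (X : Matrix (Fin n) (Fin n) ℂ) (hX : X.PosDef)
    (heq : X - ∑ i, (A i)ᴴ * X⁻¹ * A i = Q)
    (β : ℝ) (hβ : 0 < β)
    (hXinv : ‖X⁻¹‖ ≤ 1 / β)
    (hA : ∑ i, ‖A i‖ ^ 2 < β ^ 2)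
    (ΔX : Matrix (Fin n) (Fin n) ℂ) (hΔX : ΔX.IsHermitian)
    (hΔeq : ΔX + ∑ i, ((A i)ᴴ * X⁻¹) * ΔX * (X⁻¹ * A i) =
      ∑ i, ((dA i)ᴴ * (X⁻¹ * A i) + ((A i)ᴴ * X⁻¹) * dA i)) :
    ‖ΔX‖ ≤ 2 * β * (∑ i, ‖A i‖ * ‖dA i‖) / (β ^ 2 - ∑ i, ‖A i‖ ^ 2) := by
  set c := ‖X⁻¹‖ with hc
  have hc0 : 0 ≤ c := norm_nonneg _
  have hcβ : c * β ≤ 1 := by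
    exact (le_div_iff₀ hβ).mp hXinv
  have hΔ : ΔX = (∑ i, ((dA i)ᴴ * (X⁻¹ * A i) + ((A i)ᴴ * X⁻¹) * dA i))
      - ∑ i, ((A i)ᴴ * X⁻¹) * ΔX * (X⁻¹ * A i) := by
    rw [← hΔeq]; abel
  have hT0 : 0 ≤ ∑ i, ‖A i‖ * ‖dA i‖ :=
    Finset.sum_nonneg fun i _ => mul_nonneg (norm_nonneg _) (norm_nonneg _)
  have hS0 : 0 ≤ ∑ i, ‖A i‖ ^ 2 :=
    Finset.sum_nonneg fun i _ => sq_nonneg _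
  have key : ‖ΔX‖ ≤ 2 * c * (∑ i, ‖A i‖ * ‖dA i‖) +
      c ^ 2 * (∑ i, ‖A i‖ ^ 2) * ‖ΔX‖ := by
    have h1 : ‖∑ i, ((dA i)ᴴ * (X⁻¹ * A i) + ((A i)ᴴ * X⁻¹) * dA i)‖ ≤
        ∑ i, 2 * c * (‖A i‖ * ‖dA i‖) := by
      refine (norm_sum_le _ _).trans (Finset.sum_le_sum fun i _ => ?_)
      have b1 : ‖(dA i)ᴴ * (X⁻¹ * A i)‖ ≤ ‖dA i‖ * (c * ‖A i‖) := by
        refine (norm_mul_le _ _).trans ?_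
        rw [Matrix.l2_opNorm_conjTranspose]
        exact mul_le_mul_of_nonneg_left (norm_mul_le _ _) (norm_nonneg _)
      have b2 : ‖((A i)ᴴ * X⁻¹) * dA i‖ ≤ ‖A i‖ * c * ‖dA i‖ := by
        refine (norm_mul_le _ _).trans ?_
        refine mul_le_mul_of_nonneg_right ((norm_mul_le _ _).trans ?_) (norm_nonneg _)
        rw [Matrix.l2_opNorm_conjTranspose]
      calc ‖(dA i)ᴴ * (X⁻¹ * A i) + ((A i)ᴴ * X⁻¹) * dA i‖
          ≤ ‖(dA i)ᴴ * (X⁻¹ * A i)‖ + ‖((A i)ᴴ * X⁻¹) * dA i‖ := norm_add_le _ _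
        _ ≤ ‖dA i‖ * (c * ‖A i‖) + ‖A i‖ * c * ‖dA i‖ := add_le_add b1 b2
        _ = 2 * c * (‖A i‖ * ‖dA i‖) := by ring
    have h2 : ‖∑ i, ((A i)ᴴ * X⁻¹) * ΔX * (X⁻¹ * A i)‖ ≤
        ∑ i, c ^ 2 * ‖A i‖ ^ 2 * ‖ΔX‖ := by
      refine (norm_sum_le _ _).trans (Finset.sum_le_sum fun i _ => ?_)
      have b1 : ‖(A i)ᴴ * X⁻¹‖ ≤ ‖A i‖ * c := by
        refine (norm_mul_le _ _).trans ?_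
        rw [Matrix.l2_opNorm_conjTranspose]
      have b2 : ‖X⁻¹ * A i‖ ≤ c * ‖A i‖ := norm_mul_le _ _
      calc ‖((A i)ᴴ * X⁻¹) * ΔX * (X⁻¹ * A i)‖
          ≤ ‖((A i)ᴴ * X⁻¹) * ΔX‖ * ‖X⁻¹ * A i‖ := norm_mul_le _ _
        _ ≤ (‖(A i)ᴴ * X⁻¹‖ * ‖ΔX‖) * ‖X⁻¹ * A i‖ :=
            mul_le_mul_of_nonneg_right (norm_mul_le _ _) (norm_nonneg _)
        _ ≤ (‖A i‖ * c * ‖ΔX‖) * (c * ‖A i‖) := by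
            apply mul_le_mul (mul_le_mul_of_nonneg_right b1 (norm_nonneg _)) b2
              (norm_nonneg _)
            positivity
        _ = c ^ 2 * ‖A i‖ ^ 2 * ‖ΔX‖ := by ring
    calc ‖ΔX‖ ≤ ‖∑ i, ((dA i)ᴴ * (X⁻¹ * A i) + ((A i)ᴴ * X⁻¹) * dA i)‖ +
          ‖∑ i, ((A i)ᴴ * X⁻¹) * ΔX * (X⁻¹ * A i)‖ := by
          nth_rewrite 1 [hΔ]
          exact norm_sub_le _ _
      _ ≤ (∑ i, 2 * c * (‖A i‖ * ‖dA i‖)) + ∑ i, c ^ 2 * ‖A i‖ ^ 2 * ‖ΔX‖ :=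
          add_le_add h1 h2
      _ = 2 * c * (∑ i, ‖A i‖ * ‖dA i‖) + c ^ 2 * (∑ i, ‖A i‖ ^ 2) * ‖ΔX‖ := by
          rw [Finset.mul_sum, Finset.mul_sum, Finset.sum_mul]
  rw [le_div_iff₀ (by linarith)]
  have hΔ0 : 0 ≤ ‖ΔX‖ := norm_nonneg _
  nlinarith [mul_le_mul_of_nonneg_left key (mul_pos hβ hβ).le,
    mul_nonneg (mul_nonneg (mul_nonneg (by norm_num : (0:ℝ) ≤ 2) hβ.le) hT0)
      (sub_nonneg.mpr hcβ),
    mul_nonneg (mul_nonneg (mul_nonneg hS0 hΔ0) (sub_nonneg.mpr hcβ))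
      (by positivity : (0:ℝ) ≤ 1 + c * β)]
end

section
/- Let X be Hermitian positive definite satisfying X - ∑_{i=1}^m B_i* X B_i = Q > 0 where B_i = X⁻¹ A_i. Then the linear operator L on Hermitian matrices defined by L(W) = W + ∑_{i=1}^m B_i* W B_i is invertible. -/
open scoped ComplexOrder
open Matrix Finset

private lemma psd_smul_one_sub {n : ℕ} {H : Matrix (Fin n) (Fin n) ℂ} (hH : H.IsHermitian)
    {c : ℝ} (h : ∀ j, hH.eigenvalues j ≤ c) :
    (((c : ℂ) • (1 : Matrix (Fin n) (Fin n) ℂ)) - H).PosSemidef := by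
  have hU : (hH.eigenvectorUnitary : Matrix (Fin n) (Fin n) ℂ) *
      star (hH.eigenvectorUnitary : Matrix (Fin n) (Fin n) ℂ) = 1 :=
    Matrix.mem_unitaryGroup_iff.mp hH.eigenvectorUnitary.2
  have hd : Matrix.diagonal (fun j => ((c - hH.eigenvalues j : ℝ) : ℂ)) =
      (c : ℂ) • (1 : Matrix (Fin n) (Fin n) ℂ)
        - Matrix.diagonal (RCLike.ofReal ∘ hH.eigenvalues) := by
    rw [smul_one_eq_diagonal, diagonal_sub]
    funext j
    push_cast
    rfl
  have key : ((c : ℂ) • (1 : Matrix (Fin n) (Fin n) ℂ)) - H =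
      (hH.eigenvectorUnitary : Matrix (Fin n) (Fin n) ℂ) *
        Matrix.diagonal (fun j => ((c - hH.eigenvalues j : ℝ) : ℂ)) *
        star (hH.eigenvectorUnitary : Matrix (Fin n) (Fin n) ℂ) := by
    rw [hd, Matrix.mul_sub, Matrix.sub_mul, ← Unitary.conjStarAlgAut_apply (S := ℂ) (x := Matrix.diagonal (RCLike.ofReal ∘ hH.eigenvalues)), ← hH.spectral_theorem]
    congr 1
    rw [Matrix.mul_smul, Matrix.mul_one, Matrix.smul_mul, hU]
  rw [key, Matrix.star_eq_conjTranspose]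
  exact (Matrix.PosSemidef.diagonal fun j => by
    simpa using Complex.zero_le_real.mpr (sub_nonneg.mpr (h j))).mul_mul_conjTranspose_same _

private lemma psd_smul_one_add {n : ℕ} {H : Matrix (Fin n) (Fin n) ℂ} (hH : H.IsHermitian)
    {c : ℝ} (h : ∀ j, -c ≤ hH.eigenvalues j) :
    (((c : ℂ) • (1 : Matrix (Fin n) (Fin n) ℂ)) + H).PosSemidef := by
  have hU : (hH.eigenvectorUnitary : Matrix (Fin n) (Fin n) ℂ) *
      star (hH.eigenvectorUnitary : Matrix (Fin n) (Fin n) ℂ) = 1 :=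
    Matrix.mem_unitaryGroup_iff.mp hH.eigenvectorUnitary.2
  have hd : Matrix.diagonal (fun j => ((c + hH.eigenvalues j : ℝ) : ℂ)) =
      (c : ℂ) • (1 : Matrix (Fin n) (Fin n) ℂ)
        + Matrix.diagonal (RCLike.ofReal ∘ hH.eigenvalues) := by
    rw [smul_one_eq_diagonal, diagonal_add]
    funext j
    push_cast
    rfl
  have key : ((c : ℂ) • (1 : Matrix (Fin n) (Fin n) ℂ)) + H =
      (hH.eigenvectorUnitary : Matrix (Fin n) (Fin n) ℂ) *
        Matrix.diagonal (fun j => ((c + hH.eigenvalues j : ℝ) : ℂ)) *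
        star (hH.eigenvectorUnitary : Matrix (Fin n) (Fin n) ℂ) := by
    rw [hd, Matrix.mul_add, Matrix.add_mul, ← Unitary.conjStarAlgAut_apply (S := ℂ) (x := Matrix.diagonal (RCLike.ofReal ∘ hH.eigenvalues)), ← hH.spectral_theorem]
    congr 1
    rw [Matrix.mul_smul, Matrix.mul_one, Matrix.smul_mul, hU]
  rw [key, Matrix.star_eq_conjTranspose]
  exact (Matrix.PosSemidef.diagonal fun j => by
    simpa using Complex.zero_le_real.mpr (show (0:ℝ) ≤ c + hH.eigenvalues j by linarith [h j])).mul_mul_conjTranspose_same _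

open scoped MatrixOrder in
private lemma inj_core {n m : ℕ} {X Q : Matrix (Fin n) (Fin n) ℂ} (hX : X.PosDef) (hQ : Q.PosDef)
    (B : Fin m → Matrix (Fin n) (Fin n) ℂ)
    (hXQ : ∑ i, (B i)ᴴ * X * (B i) = X - Q)
    {W : Matrix (Fin n) (Fin n) ℂ} (hW : W.IsHermitian)
    (h0 : W + ∑ i, (B i)ᴴ * W * (B i) = 0) : W = 0 := by
  by_contra hW0
  have hn : n ≠ 0 := by
    rintro rfl
    exact hW0 (by ext i j; exact i.elim0)
  haveI : Nonempty (Fin n) := ⟨⟨0, Nat.pos_of_ne_zero hn⟩⟩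
  have hXdet : IsUnit X.det := (Matrix.isUnit_iff_isUnit_det X).mp hX.isUnit
  set S := CFC.sqrt X with hSdef
  have hSS : S * S = X := CFC.sqrt_mul_sqrt_self X hX.posSemidef.nonneg
  have hSH : S.IsHermitian := (CFC.sqrt_nonneg X).posSemidef.1
  have hSdet : IsUnit S.det := by
    have hdet : S.det * S.det = X.det := by rw [← det_mul, hSS]
    refine isUnit_iff_ne_zero.mpr fun h => ?_
    rw [h, mul_zero] at hdet
    exact (isUnit_iff_ne_zero.mp hXdet) hdet.symm
  set H := S⁻¹ * W * S⁻¹ with hHdef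
  have hSinvH : S⁻¹.IsHermitian := hSH.inv
  have hHH : H.IsHermitian := by
    have : Hᴴ = H := by
      rw [hHdef, conjTranspose_mul, conjTranspose_mul, hSinvH.eq, hW.eq, mul_assoc]
    exact this
  have hWH : S * H * S = W := by
    rw [hHdef, show S * (S⁻¹ * W * S⁻¹) * S = (S * S⁻¹) * W * (S⁻¹ * S) by noncomm_ring,
      Matrix.mul_nonsing_inv _ hSdet, Matrix.nonsing_inv_mul _ hSdet, one_mul, mul_one]
  have hH0 : H ≠ 0 := by
    intro h
    rw [h, mul_zero, zero_mul] at hWH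
    exact hW0 hWH.symm
  set ev := hHH.eigenvalues with hevdef
  obtain ⟨i₀, -, hmax⟩ := Finset.exists_max_image (univ : Finset (Fin n)) (fun j => |ev j|)
    ⟨Classical.arbitrary (Fin n), mem_univ _⟩
  set c := |ev i₀| with hcdef
  have hc : 0 < c := by
    rcases (abs_nonneg (ev i₀)).lt_or_eq with h | h
    · exact h
    · exfalso
      apply hH0
      have hev : ∀ j, ev j = 0 := fun j =>
        abs_eq_zero.mp (le_antisymm (h ▸ hmax j (mem_univ j)) (abs_nonneg _))
      rw [hHH.spectral_theorem]
      have : (RCLike.ofReal ∘ hHH.eigenvalues : Fin n → ℂ) = 0 := funext fun j => by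
        simp [show hHH.eigenvalues j = 0 from hev j]
      rw [this, show Matrix.diagonal (0 : Fin n → ℂ) = 0 from by
          rw [← Matrix.diagonal_zero]; rfl, Unitary.conjStarAlgAut_apply, mul_zero, zero_mul]
  set v : Fin n → ℂ := ⇑(hHH.eigenvectorBasis i₀) with hvdef
  have hrs : ∀ (r : ℝ) (w : Fin n → ℂ), r • w = (r : ℂ) • w := fun r w => funext fun j => by
    simp [Pi.smul_apply, Complex.real_smul, smul_eq_mul]
  have hv : H *ᵥ v = (ev i₀ : ℂ) • v := by
    rw [hHH.mulVec_eigenvectorBasis i₀, hrs]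
  have hvne : v ≠ 0 := by
    intro h
    apply hHH.eigenvectorBasis.orthonormal.ne_zero i₀
    ext j
    exact congrFun h j
  set u : Fin n → ℂ := S⁻¹ *ᵥ v with hudef
  have hSu : S *ᵥ u = v := by
    rw [hudef, mulVec_mulVec, Matrix.mul_nonsing_inv _ hSdet, one_mulVec]
  have hune : u ≠ 0 := by
    intro h
    apply hvne
    rw [← hSu, h, mulVec_zero]
  have hWu : W *ᵥ u = (ev i₀ : ℂ) • (X *ᵥ u) := by
    have hm : W * S⁻¹ = S * H := by
      rw [← hWH, show S * H * S * S⁻¹ = S * H * (S * S⁻¹) by noncomm_ring,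
        Matrix.mul_nonsing_inv _ hSdet, mul_one]
    calc W *ᵥ u = (W * S⁻¹) *ᵥ v := by rw [hudef, mulVec_mulVec]
      _ = (S * H) *ᵥ v := by rw [hm]
      _ = S *ᵥ (H *ᵥ v) := by rw [mulVec_mulVec]
      _ = S *ᵥ ((ev i₀ : ℂ) • v) := by rw [hv]
      _ = (ev i₀ : ℂ) • (S *ᵥ v) := by rw [mulVec_smul]
      _ = (ev i₀ : ℂ) • (X *ᵥ u) := by
          rw [hudef, mulVec_mulVec, show X * S⁻¹ = S by
            rw [← hSS, mul_assoc, Matrix.mul_nonsing_inv _ hSdet, mul_one]]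
  have hbd := fun j => abs_le.mp (hmax j (mem_univ j))
  have P1 : ((c : ℂ) • X - W).PosSemidef := by
    have hP := (psd_smul_one_sub hHH fun j => (hbd j).2).conjTranspose_mul_mul_same S
    have : Sᴴ * (((c : ℂ) • 1) - H) * S = (c : ℂ) • X - W := by
      rw [hSH.eq, Matrix.mul_sub, Matrix.sub_mul, Matrix.mul_smul, Matrix.mul_one,
        Matrix.smul_mul, hSS, hWH]
    rwa [this] at hP
  have P2 : ((c : ℂ) • X + W).PosSemidef := by
    have hP := (psd_smul_one_add hHH fun j => (hbd j).1).conjTranspose_mul_mul_same S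
    have : Sᴴ * (((c : ℂ) • 1) + H) * S = (c : ℂ) • X + W := by
      rw [hSH.eq, Matrix.mul_add, Matrix.add_mul, Matrix.mul_smul, Matrix.mul_one,
        Matrix.smul_mul, hSS, hWH]
    rwa [this] at hP
  have phiPSD : ∀ {M : Matrix (Fin n) (Fin n) ℂ}, M.PosSemidef →
      (∑ i, (B i)ᴴ * M * (B i)).PosSemidef := by
    intro M hM
    refine Finset.sum_induction _ _ (fun a b ha hb => ha.add hb) ?_ fun i _ =>
      hM.conjTranspose_mul_mul_same (B i)
    constructor
    · simp [Matrix.IsHermitian]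
    · intro x; simp
  have hphiW : ∑ i, (B i)ᴴ * W * (B i) = -W := eq_neg_of_add_eq_zero_right h0
  have hsum : ∀ (t : ℂ) (V : Matrix (Fin n) (Fin n) ℂ),
      ∑ i, (B i)ᴴ * (t • X + V) * (B i)
        = t • (∑ i, (B i)ᴴ * X * (B i)) + ∑ i, (B i)ᴴ * V * (B i) := by
    intro t V
    rw [Finset.smul_sum, ← Finset.sum_add_distrib]
    refine Finset.sum_congr rfl fun i _ => ?_
    rw [Matrix.mul_add, Matrix.add_mul, Matrix.mul_smul, Matrix.smul_mul]
  have key1 : ((c : ℂ) • (X - Q) - W).PosSemidef := by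
    have := phiPSD P2
    rwa [hsum, hXQ, hphiW, ← sub_eq_add_neg] at this
  have key2 : ((c : ℂ) • (X - Q) + W).PosSemidef := by
    have := phiPSD (show ((c : ℂ) • X + -W).PosSemidef by rwa [← sub_eq_add_neg])
    rw [hsum, hXQ] at this
    have h3 : ∑ i, (B i)ᴴ * (-W) * (B i) = W := by
      have hneg : ∑ i, (B i)ᴴ * (-W) * (B i) = -∑ i, (B i)ᴴ * W * (B i) := by
        rw [← Finset.sum_neg_distrib]
        exact Finset.sum_congr rfl fun i _ => by rw [Matrix.mul_neg, Matrix.neg_mul]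
      rw [hneg, hphiW, neg_neg]
    rwa [h3] at this
  set dX : ℂ := star u ⬝ᵥ (X *ᵥ u) with hdX
  set dQ : ℂ := star u ⬝ᵥ (Q *ᵥ u) with hdQ
  have hdQpos : 0 < dQ := hQ.dotProduct_mulVec_pos hune
  have hcC : (0 : ℂ) < (c : ℂ) := by
    rw [Complex.zero_lt_real]; exact hc
  have hdW : star u ⬝ᵥ (W *ᵥ u) = (ev i₀ : ℂ) * dX := by
    rw [hWu, dotProduct_smul, smul_eq_mul]
  have habs : ev i₀ = c ∨ ev i₀ = -c := abs_choice (ev i₀) |>.imp Eq.symm (fun h => by rw [hcdef, h, neg_neg])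
  have hcontr : (c : ℂ) * dQ ≤ 0 := by
    rcases habs with h | h
    · have h1 := key1.dotProduct_mulVec_nonneg u
      rw [Matrix.sub_mulVec, Matrix.smul_mulVec, Matrix.sub_mulVec, dotProduct_sub,
        dotProduct_smul, dotProduct_sub, hdW, smul_eq_mul, h] at h1
      have he : (c : ℂ) * (dX - dQ) - (c : ℝ) * dX = -((c : ℂ) * dQ) := by ring
      rw [he] at h1
      exact neg_nonneg.mp h1
    · have h1 := key2.dotProduct_mulVec_nonneg u
      rw [Matrix.add_mulVec, Matrix.smul_mulVec, Matrix.sub_mulVec, dotProduct_add,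
        dotProduct_smul, dotProduct_sub, hdW, smul_eq_mul, h] at h1
      have he : (c : ℂ) * (dX - dQ) + (-c : ℝ) * dX = -((c : ℂ) * dQ) := by push_cast; ring
      rw [he] at h1
      exact neg_nonneg.mp h1
  exact lt_irrefl (0 : ℂ) (lt_of_lt_of_le (mul_pos hcC hdQpos) hcontr)

private noncomputable def Lmap {n m : ℕ} (B : Fin m → Matrix (Fin n) (Fin n) ℂ) :
    Matrix (Fin n) (Fin n) ℂ →ₗ[ℂ] Matrix (Fin n) (Fin n) ℂ where
  toFun W := W + ∑ i, (B i)ᴴ * W * (B i)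
  map_add' V W := by
    simp only [Matrix.mul_add, Matrix.add_mul, Finset.sum_add_distrib]
    abel
  map_smul' t W := by
    simp only [Matrix.mul_smul, Matrix.smul_mul, ← Finset.smul_sum, RingHom.id_apply, smul_add]

private lemma Lmap_conj {n m : ℕ} (B : Fin m → Matrix (Fin n) (Fin n) ℂ)
    (V : Matrix (Fin n) (Fin n) ℂ) : Lmap B Vᴴ = (Lmap B V)ᴴ := by
  simp only [Lmap, LinearMap.coe_mk, AddHom.coe_mk, conjTranspose_add, conjTranspose_sum,
    conjTranspose_mul, conjTranspose_conjTranspose, Matrix.mul_assoc]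

theorem stmt16 {n m : ℕ} (Q : Matrix (Fin n) (Fin n) ℂ) (hQ : Q.PosDef)
    (A : Fin m → Matrix (Fin n) (Fin n) ℂ)
    (X : Matrix (Fin n) (Fin n) ℂ) (hX : X.PosDef)
    (heq : X - ∑ i, (A i)ᴴ * X⁻¹ * A i = Q) :
    ∀ Y : Matrix (Fin n) (Fin n) ℂ, Y.IsHermitian →
      ∃! W : Matrix (Fin n) (Fin n) ℂ,
        W.IsHermitian ∧ W + ∑ i, (X⁻¹ * A i)ᴴ * W * (X⁻¹ * A i) = Y := by
  intro Y hY
  set B : Fin m → Matrix (Fin n) (Fin n) ℂ := fun i => X⁻¹ * A i with hBdef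
  have hXdet : IsUnit X.det := (Matrix.isUnit_iff_isUnit_det X).mp hX.isUnit
  have hXinv : X⁻¹.IsHermitian := hX.1.inv
  have hXQ : ∑ i, (B i)ᴴ * X * (B i) = X - Q := by
    have hterm : ∀ i, (B i)ᴴ * X * (B i) = (A i)ᴴ * X⁻¹ * A i := by
      intro i
      rw [hBdef, conjTranspose_mul, hXinv.eq,
        show (A i)ᴴ * X⁻¹ * X * (X⁻¹ * A i) = (A i)ᴴ * (X⁻¹ * X * X⁻¹) * A i by noncomm_ring,
        Matrix.nonsing_inv_mul _ hXdet, one_mul, Matrix.mul_assoc]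
    rw [Finset.sum_congr rfl fun i _ => hterm i, ← heq, sub_sub_cancel]
  have hker : ∀ V, Lmap B V = 0 → V = 0 := by
    intro V hV
    have h1 : Lmap B (V + Vᴴ) = 0 := by
      rw [map_add, Lmap_conj, hV]; simp
    have e1 : V + Vᴴ = 0 :=
      inj_core hX hQ B hXQ (by rw [IsHermitian, conjTranspose_add, conjTranspose_conjTranspose,
        add_comm]) (by simpa only [Lmap, LinearMap.coe_mk, AddHom.coe_mk] using h1)
    have h2 : Lmap B (Complex.I • (Vᴴ - V)) = 0 := by
      rw [_root_.map_smul, map_sub, Lmap_conj, hV]; simp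
    have e2 : Vᴴ - V = 0 := by
      have := inj_core hX hQ B hXQ (show (Complex.I • (Vᴴ - V)).IsHermitian by
        rw [IsHermitian, conjTranspose_smul, conjTranspose_sub, conjTranspose_conjTranspose,
          Complex.star_def, Complex.conj_I, neg_smul, smul_sub, smul_sub, neg_sub]) 
        (by simpa only [Lmap, LinearMap.coe_mk, AddHom.coe_mk] using h2)
      have h3 := congrArg (fun M => Complex.I⁻¹ • M) this
      simpa only [smul_smul, inv_mul_cancel₀ Complex.I_ne_zero, one_smul, smul_zero] using h3
    have hVH : Vᴴ = V := by rwa [sub_eq_zero] at e2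
    rw [hVH] at e1
    have e3 : (2 : ℂ) • V = 0 := by rw [two_smul]; exact e1
    have h4 := congrArg (fun M => (2 : ℂ)⁻¹ • M) e3
    simpa only [smul_smul, inv_mul_cancel₀ (two_ne_zero (α := ℂ)), one_smul, smul_zero] using h4
  have hinj : Function.Injective (Lmap B) := fun a b h =>
    sub_eq_zero.mp (hker (a - b) (by rw [map_sub, h, sub_self]))
  have hsurj : Function.Surjective (Lmap B) :=
    (LinearMap.injective_iff_surjective).mp hinj
  obtain ⟨W, hWY⟩ := hsurj Y
  have herm : W.IsHermitian := by
    have : Lmap B Wᴴ = Lmap B W := by rw [Lmap_conj, hWY, hY.eq]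
    exact hinj this
  refine ⟨W, ⟨herm, by simpa only [Lmap, LinearMap.coe_mk, AddHom.coe_mk] using hWY⟩, ?_⟩
  intro y hy
  apply hinj
  have : Lmap B y = Y := by simpa only [Lmap, LinearMap.coe_mk, AddHom.coe_mk] using hy.2
  rw [this, hWY]
end
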